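/- arXiv:1411.2964 — 7 statements merged into one kernel-verified Lean document; each statement's English description precedes it below -/
import Mathlib

section
/- Let $m,\lambda>0$ satisfy $2\lambda m^{2}\geq 1$, and let $D_\lambda(t)=\int_0^\lambda (4\pi s)^{-1/2} e^{-t^2/(4s)-s m^2}\,ds$. Then there exists $t>0$ such that $D_\lambda(0) - 2e^{mt}D_\lambda(t) + e^{2mt}D_\lambda(2t) < 0$. (This is the failure of reflection positivity in space-time dimension $d=1$ of the Gaussian measure $d\mu_\lambda$ obtained from stochastic quantization of the free scalar field at finite stochastic time $\lambda$: the displayed quantity is the reflection-positivity form $\langle f, \vartheta D_\lambda f\rangle$ evaluated on the positive-time test function $f = \delta_0 - e^{mt}\delta_t$.) -/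
open MeasureTheory Real

open Set Filter

noncomputable def kk (m t s : ℝ) : ℝ :=
  (4 * π * s) ^ (-(1:ℝ)/2) * Real.exp (-t ^ 2 / (4 * s) - s * m ^ 2)

lemma kk_pos {m t s : ℝ} (hs : 0 < s) : 0 < kk m t s := by
  unfold kk
  positivity

lemma rpow_fact {s : ℝ} (hs : 0 < s) :
    (4 * π * s) ^ (-(1:ℝ)/2) = (4 * π) ^ (-(1:ℝ)/2) * (Real.sqrt s)⁻¹ := by
  rw [Real.mul_rpow (by positivity) hs.le]
  congr 1
  rw [neg_div, Real.rpow_neg hs.le, Real.sqrt_eq_rpow]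

lemma C_fact : (4 * π) ^ (-(1:ℝ)/2) * Real.sqrt π = 1 / 2 := by
  have h4 : (4:ℝ) * π = 2^2 * π := by norm_num
  rw [neg_div, Real.rpow_neg (by positivity), Real.sqrt_eq_rpow, h4,
    Real.mul_rpow (by positivity) pi_pos.le]
  rw [← Real.rpow_natCast (2:ℝ) 2, ← Real.rpow_mul (by norm_num)]
  norm_num
  have hπ : (π:ℝ) ^ ((1:ℝ)/2) ≠ 0 := by positivity
  field_simp

noncomputable def EE (y : ℝ) : ℝ := ∫ x in Iic y, Real.exp (-x ^ 2)
noncomputable def EO (y : ℝ) : ℝ := ∫ x in Ioi y, Real.exp (-x ^ 2)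

lemma gauss_integrable : Integrable (fun x : ℝ => Real.exp (-x ^ 2)) := by
  have := integrable_exp_neg_mul_sq (one_pos)
  simpa using this

lemma gauss_total : (∫ x : ℝ, Real.exp (-x ^ 2)) = Real.sqrt π := by
  have := integral_gaussian (1:ℝ)
  simpa using this

lemma EE_add_EO (y : ℝ) : EE y + EO y = Real.sqrt π := by
  rw [EE, EO, intervalIntegral.integral_Iic_add_Ioi gauss_integrable.integrableOn
    gauss_integrable.integrableOn, gauss_total]

lemma EE_nonneg (y : ℝ) : 0 ≤ EE y :=
  setIntegral_nonneg measurableSet_Iic (fun x _ => (Real.exp_pos _).le)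

lemma EO_nonneg (y : ℝ) : 0 ≤ EO y :=
  setIntegral_nonneg measurableSet_Ioi (fun x _ => (Real.exp_pos _).le)

lemma hasDerivAt_EE (y : ℝ) : HasDerivAt EE (Real.exp (-y ^ 2)) y := by
  have heq : ∀ z : ℝ, EE z = EE 0 + ∫ x in (0:ℝ)..z, Real.exp (-x ^ 2) := by
    intro z
    rw [← intervalIntegral.integral_Iic_sub_Iic gauss_integrable.integrableOn
      gauss_integrable.integrableOn]
    change EE z = EE 0 + (EE z - EE 0)
    ring
  have h1 : HasDerivAt (fun z => EE 0 + ∫ x in (0:ℝ)..z, Real.exp (-x ^ 2))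
      (Real.exp (-y ^ 2)) y := by
    refine HasDerivAt.const_add _ ?_
    refine intervalIntegral.integral_hasDerivAt_right
      gauss_integrable.intervalIntegrable ?_ ?_
    · exact gauss_integrable.aestronglyMeasurable.stronglyMeasurableAtFilter
    · exact (Real.continuous_exp.comp (by continuity)).continuousAt
  exact h1.congr_of_eventuallyEq (Eventually.of_forall heq)

lemma hasDerivAt_EO (y : ℝ) : HasDerivAt EO (-Real.exp (-y ^ 2)) y := by
  have heq : ∀ z : ℝ, EO z = Real.sqrt π - EE z := by
    intro z; have := EE_add_EO z; linarith
  have h1 : HasDerivAt (fun z => Real.sqrt π - EE z) (-Real.exp (-y ^ 2)) y :=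
    (hasDerivAt_EE y).const_sub _
  exact h1.congr_of_eventuallyEq (Eventually.of_forall heq)

lemma EO_le (y : ℝ) (hy : 1 ≤ y) : EO y ≤ Real.exp (-y) := by
  have h1 : EO y ≤ ∫ x in Ioi y, Real.exp (-x) := by
    refine setIntegral_mono_on gauss_integrable.integrableOn
      ((exp_neg_integrableOn_Ioi y one_pos).congr_fun (fun x _ => by norm_num)
        measurableSet_Ioi) measurableSet_Ioi ?_
    intro x hx
    have hx1 : 1 ≤ x := hy.trans (le_of_lt hx)
    have : x ≤ x ^ 2 := by nlinarith
    exact Real.exp_le_exp.2 (by linarith)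
  rw [integral_exp_neg_Ioi] at h1
  exact h1

lemma EE_le (y : ℝ) (hy : y ≤ -1) : EE y ≤ Real.exp y := by
  have h1 : EE y ≤ ∫ x in Iic y, Real.exp x := by
    refine setIntegral_mono_on gauss_integrable.integrableOn
      ((integrableOn_exp_Iic y)) measurableSet_Iic ?_
    intro x hx
    have hx1 : x ≤ -1 := le_trans hx hy
    have : -x ^ 2 ≤ x := by nlinarith
    exact Real.exp_le_exp.2 this
  rw [integral_exp_Iic] at h1
  exact h1

lemma EO_tendsto_atTop : Tendsto EO atTop (nhds 0) := by
  refine tendsto_of_tendsto_of_tendsto_of_le_of_le' tendsto_const_nhds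
    (tendsto_exp_neg_atTop_nhds_zero) ?_ ?_
  · exact Eventually.of_forall (fun y => EO_nonneg y)
  · filter_upwards [eventually_ge_atTop (1:ℝ)] with y hy using EO_le y hy

lemma EE_tendsto_atBot : Tendsto EE atBot (nhds 0) := by
  have h2 : Tendsto (fun y : ℝ => Real.exp y) atBot (nhds 0) := Real.tendsto_exp_atBot
  refine tendsto_of_tendsto_of_tendsto_of_le_of_le' tendsto_const_nhds h2 ?_ ?_
  · exact Eventually.of_forall (fun y => EE_nonneg y)
  · filter_upwards [eventually_le_atBot (-1:ℝ)] with y hy using EE_le y hy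

lemma EE_tendsto_atTop : Tendsto EE atTop (nhds (Real.sqrt π)) := by
  have : EE = fun y => Real.sqrt π - EO y := by
    funext y; have := EE_add_EO y; linarith
  rw [this]
  simpa using (EO_tendsto_atTop.const_sub (Real.sqrt π))

lemma EE_zero_eq : EE 0 = EO 0 := by
  rw [EE, EO]
  have := integral_comp_neg_Ioi (0:ℝ) (fun x => Real.exp (-x ^ 2))
  simp only [neg_zero, neg_sq] at this
  rw [← this]

lemma kk_continuousOn (m t : ℝ) : ContinuousOn (kk m t) (Ioi 0) := by
  unfold kk
  apply ContinuousOn.mul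
  · apply ContinuousOn.rpow_const
    · exact (continuous_const.mul continuous_id).continuousOn
    · intro x hx
      left
      have : (0:ℝ) < x := hx
      positivity
  · apply Real.continuous_exp.comp_continuousOn
    apply ContinuousOn.sub
    · apply ContinuousOn.div continuousOn_const
        (continuous_const.mul continuous_id).continuousOn
      intro x hx
      have : (0:ℝ) < x := hx
      show (4:ℝ) * x ≠ 0
      positivity
    · exact (continuous_id.mul continuous_const).continuousOn

lemma kk_integrableOn (m : ℝ) (hm : 0 < m) (t : ℝ) :
    IntegrableOn (kk m t) (Ioi (0:ℝ)) := by
  rw [← Ioc_union_Ioi_eq_Ioi (zero_le_one), integrableOn_union]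
  constructor
  · -- on Ioc 0 1, dominate by (4π)^(-1/2) * s^(-1/2)
    have hg : IntegrableOn (fun s : ℝ => (4 * π) ^ (-(1:ℝ)/2) * s ^ (-(1:ℝ)/2))
        (Ioc (0:ℝ) 1) := by
      apply Integrable.const_mul
      rw [← IntegrableOn, ← intervalIntegrable_iff_integrableOn_Ioc_of_le zero_le_one]
      apply intervalIntegral.intervalIntegrable_rpow'
      norm_num
    refine Integrable.mono hg ?_ ?_
    · exact ((kk_continuousOn m t).mono (Ioc_subset_Ioi_self)).aestronglyMeasurable
        measurableSet_Ioc
    · filter_upwards [ae_restrict_mem measurableSet_Ioc] with s hs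
      have hs0 : 0 < s := hs.1
      rw [Real.norm_eq_abs, Real.norm_eq_abs, abs_of_nonneg (kk_pos hs0).le,
        abs_of_nonneg (by positivity)]
      unfold kk
      rw [rpow_fact hs0]
      have h1 : Real.exp (-t ^ 2 / (4 * s) - s * m ^ 2) ≤ 1 := by
        rw [Real.exp_le_one_iff]
        have h0 : 0 ≤ t ^ 2 / (4 * s) := by positivity
        have hneg : -t ^ 2 / (4 * s) = -(t ^ 2 / (4 * s)) := by ring
        rw [hneg]
        nlinarith [mul_nonneg hs0.le (sq_nonneg m)]
      have h2 : s ^ (-(1:ℝ)/2) = (Real.sqrt s)⁻¹ := by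
        rw [neg_div, Real.rpow_neg hs0.le, Real.sqrt_eq_rpow]
      rw [h2]
      have hpos : 0 < (4 * π) ^ (-(1:ℝ)/2) * (Real.sqrt s)⁻¹ := by positivity
      nlinarith [hpos, Real.exp_pos (-t ^ 2 / (4 * s) - s * m ^ 2)]
  · -- on Ioi 1, dominate by exp(-m^2 * s)
    have hg : IntegrableOn (fun s : ℝ => Real.exp (-(m^2) * s)) (Ioi (1:ℝ)) :=
      exp_neg_integrableOn_Ioi 1 (by positivity)
    refine Integrable.mono hg ?_ ?_
    · exact ((kk_continuousOn m t).mono (Ioi_subset_Ioi zero_le_one)).aestronglyMeasurable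
        measurableSet_Ioi
    · filter_upwards [ae_restrict_mem measurableSet_Ioi] with s hs
      have hs1 : (1:ℝ) < s := hs
      have hs0 : 0 < s := lt_trans zero_lt_one hs1
      rw [Real.norm_eq_abs, Real.norm_eq_abs, abs_of_nonneg (kk_pos hs0).le,
        abs_of_nonneg (Real.exp_pos _).le]
      unfold kk
      have h1 : (4 * π * s) ^ (-(1:ℝ)/2) ≤ 1 := by
        apply Real.rpow_le_one_of_one_le_of_nonpos
        · nlinarith [pi_gt_three]
        · norm_num
      have h2 : Real.exp (-t ^ 2 / (4 * s) - s * m ^ 2) ≤ Real.exp (-(m^2) * s) := by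
        apply Real.exp_le_exp.2
        have h0 : 0 ≤ t ^ 2 / (4 * s) := by positivity
        have hneg : -t ^ 2 / (4 * s) = -(t ^ 2 / (4 * s)) := by ring
        rw [hneg]
        nlinarith
      calc (4 * π * s) ^ (-(1:ℝ)/2) * Real.exp (-t ^ 2 / (4 * s) - s * m ^ 2)
          ≤ 1 * Real.exp (-t ^ 2 / (4 * s) - s * m ^ 2) := by
            apply mul_le_mul_of_nonneg_right h1 (Real.exp_pos _).le
        _ = Real.exp (-t ^ 2 / (4 * s) - s * m ^ 2) := one_mul _
        _ ≤ Real.exp (-(m^2) * s) := h2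

noncomputable def phi (m t s : ℝ) : ℝ :=
  (4 * π) ^ (-(1:ℝ)/2) / m *
    (Real.exp (-(m * t)) * EE (m * Real.sqrt s - t / 2 * (Real.sqrt s)⁻¹)
     - Real.exp (m * t) * EO (m * Real.sqrt s + t / 2 * (Real.sqrt s)⁻¹))

lemma hasDerivAt_phi {m : ℝ} (hm : 0 < m) (t : ℝ) {s : ℝ} (hs : 0 < s) :
    HasDerivAt (phi m t) (kk m t s) s := by
  set σ := Real.sqrt s with hσ
  have hσpos : 0 < σ := Real.sqrt_pos.2 hs
  have hσsq : σ ^ 2 = s := Real.sq_sqrt hs.le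
  have hsqrt : HasDerivAt Real.sqrt (1 / (2 * σ)) s := Real.hasDerivAt_sqrt hs.ne'
  have hinv : HasDerivAt (fun x => (Real.sqrt x)⁻¹) (-(1 / (2 * σ)) / σ ^ 2) s :=
    hsqrt.inv hσpos.ne'
  have hu : HasDerivAt (fun x => m * Real.sqrt x - t / 2 * (Real.sqrt x)⁻¹)
      (m * (1 / (2 * σ)) - t / 2 * (-(1 / (2 * σ)) / σ ^ 2)) s :=
    (hsqrt.const_mul m).sub (hinv.const_mul (t / 2))
  have hv : HasDerivAt (fun x => m * Real.sqrt x + t / 2 * (Real.sqrt x)⁻¹)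
      (m * (1 / (2 * σ)) + t / 2 * (-(1 / (2 * σ)) / σ ^ 2)) s :=
    (hsqrt.const_mul m).add (hinv.const_mul (t / 2))
  set uval := m * σ - t / 2 * σ⁻¹ with huval
  set vval := m * σ + t / 2 * σ⁻¹ with hvval
  set u' := m * (1 / (2 * σ)) - t / 2 * (-(1 / (2 * σ)) / σ ^ 2) with hu'
  set v' := m * (1 / (2 * σ)) + t / 2 * (-(1 / (2 * σ)) / σ ^ 2) with hv'
  have hEu : HasDerivAt (fun x => EE (m * Real.sqrt x - t / 2 * (Real.sqrt x)⁻¹))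
      (Real.exp (-uval ^ 2) * u') s := by
    have := HasDerivAt.comp (h := fun x => m * Real.sqrt x - t / 2 * (Real.sqrt x)⁻¹) s (hasDerivAt_EE uval) hu
    exact this
  have hEv : HasDerivAt (fun x => EO (m * Real.sqrt x + t / 2 * (Real.sqrt x)⁻¹))
      (-Real.exp (-vval ^ 2) * v') s := by
    have := HasDerivAt.comp (h := fun x => m * Real.sqrt x + t / 2 * (Real.sqrt x)⁻¹) s (hasDerivAt_EO vval) hv
    exact this
  have h : HasDerivAt (phi m t)
      ((4 * π) ^ (-(1:ℝ)/2) / m *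
        (Real.exp (-(m * t)) * (Real.exp (-uval ^ 2) * u')
          - Real.exp (m * t) * (-Real.exp (-vval ^ 2) * v'))) s :=
    ((hEu.const_mul (Real.exp (-(m * t)))).sub
      (hEv.const_mul (Real.exp (m * t)))).const_mul _
  convert h using 1
  have e1 : Real.exp (-(m * t)) * Real.exp (-uval ^ 2)
      = Real.exp (-t ^ 2 / (4 * s) - s * m ^ 2) := by
    rw [← Real.exp_add]
    congr 1
    rw [huval, ← hσsq]
    field_simp
    ring
  have e2 : Real.exp (m * t) * Real.exp (-vval ^ 2)
      = Real.exp (-t ^ 2 / (4 * s) - s * m ^ 2) := by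
    rw [← Real.exp_add]
    congr 1
    rw [hvval, ← hσsq]
    field_simp
    ring
  have huv : u' + v' = m * σ⁻¹ := by
    rw [hu', hv']
    field_simp
    ring
  calc kk m t s = (4 * π) ^ (-(1:ℝ)/2) * σ⁻¹ * Real.exp (-t ^ 2 / (4 * s) - s * m ^ 2) := by
        unfold kk; rw [rpow_fact hs]
    _ = (4 * π) ^ (-(1:ℝ)/2) / m * (Real.exp (-t ^ 2 / (4 * s) - s * m ^ 2) * (m * σ⁻¹)) := by
        field_simp
    _ = (4 * π) ^ (-(1:ℝ)/2) / m * (Real.exp (-t ^ 2 / (4 * s) - s * m ^ 2) * (u' + v')) := by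
        rw [huv]
    _ = (4 * π) ^ (-(1:ℝ)/2) / m *
        (Real.exp (-(m * t)) * (Real.exp (-uval ^ 2) * u')
          - Real.exp (m * t) * (-Real.exp (-vval ^ 2) * v')) := by
        have : Real.exp (-(m * t)) * (Real.exp (-uval ^ 2) * u')
            - Real.exp (m * t) * (-Real.exp (-vval ^ 2) * v')
            = (Real.exp (-(m * t)) * Real.exp (-uval ^ 2)) * u'
              + (Real.exp (m * t) * Real.exp (-vval ^ 2)) * v' := by ring
        rw [this, e1, e2]
        ring

lemma sqrt_tendsto_atTop : Tendsto Real.sqrt atTop atTop := by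
  apply (tendsto_rpow_atTop (by norm_num : (0:ℝ) < 1/2)).congr'
  filter_upwards [eventually_ge_atTop (0:ℝ)] with x hx
  rw [← Real.sqrt_eq_rpow]

lemma phi_top {m : ℝ} (hm : 0 < m) (t : ℝ) :
    Tendsto (phi m t) atTop (nhds (Real.exp (-(m * t)) / (2 * m))) := by
  have h1 : Tendsto (fun s : ℝ => m * Real.sqrt s) atTop atTop :=
    sqrt_tendsto_atTop.const_mul_atTop hm
  have h2 : Tendsto (fun s : ℝ => t / 2 * (Real.sqrt s)⁻¹) atTop (nhds 0) := by
    have := sqrt_tendsto_atTop.inv_tendsto_atTop.const_mul (t / 2)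
    simpa using this
  have hu : Tendsto (fun s : ℝ => m * Real.sqrt s - t / 2 * (Real.sqrt s)⁻¹) atTop atTop := by
    have := h1.atTop_add (h2.neg)
    refine this.congr (fun s => by ring)
  have hv : Tendsto (fun s : ℝ => m * Real.sqrt s + t / 2 * (Real.sqrt s)⁻¹) atTop atTop :=
    h1.atTop_add h2
  have hEEc : Tendsto (fun s : ℝ => EE (m * Real.sqrt s - t / 2 * (Real.sqrt s)⁻¹)) atTop
      (nhds (Real.sqrt π)) := EE_tendsto_atTop.comp hu
  have hEOc : Tendsto (fun s : ℝ => EO (m * Real.sqrt s + t / 2 * (Real.sqrt s)⁻¹)) atTop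
      (nhds 0) := EO_tendsto_atTop.comp hv
  have : Tendsto (phi m t) atTop (nhds ((4 * π) ^ (-(1:ℝ)/2) / m *
      (Real.exp (-(m * t)) * Real.sqrt π - Real.exp (m * t) * 0))) := by
    exact (((hEEc.const_mul (Real.exp (-(m * t)))).sub
      (hEOc.const_mul (Real.exp (m * t)))).const_mul _)
  convert this using 2
  rw [mul_zero, sub_zero]
  have h4 : (4 * π) ^ (-(1:ℝ)/2) / m * (Real.exp (-(m * t)) * Real.sqrt π)
      = Real.exp (-(m * t)) * ((4 * π) ^ (-(1:ℝ)/2) * Real.sqrt π) / m := by ring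
  rw [h4, C_fact]
  ring

lemma sqrt_tendsto_zero : Tendsto Real.sqrt (nhdsWithin 0 (Ioi (0:ℝ)))
    (nhdsWithin 0 (Ioi (0:ℝ))) := by
  apply tendsto_nhdsWithin_of_tendsto_nhds_of_eventually_within
  · have := (Real.continuous_sqrt.tendsto 0)
    rw [Real.sqrt_zero] at this
    exact this.mono_left nhdsWithin_le_nhds
  · filter_upwards [self_mem_nhdsWithin] with s hs
    exact mem_Ioi.2 (Real.sqrt_pos.2 (mem_Ioi.1 hs))

lemma phi_zero {m : ℝ} (hm : 0 < m) {t : ℝ} (ht : 0 ≤ t) :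
    Tendsto (phi m t) (nhdsWithin 0 (Ioi (0:ℝ))) (nhds 0) := by
  have hsq0 : Tendsto (fun s : ℝ => m * Real.sqrt s) (nhdsWithin 0 (Ioi (0:ℝ))) (nhds 0) := by
    have := ((Real.continuous_sqrt.tendsto 0).const_mul m).mono_left
      (nhdsWithin_le_nhds (s := Ioi (0:ℝ)))
    simpa using this
  rcases eq_or_lt_of_le ht with rfl | htpos
  · have heq : ∀ s : ℝ, phi m 0 s = (4 * π) ^ (-(1:ℝ)/2) / m *
        (EE (m * Real.sqrt s) - EO (m * Real.sqrt s)) := by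
      intro s; simp [phi]
    have hEc : Tendsto (fun s : ℝ => EE (m * Real.sqrt s)) (nhdsWithin 0 (Ioi (0:ℝ)))
        (nhds (EE 0)) := (hasDerivAt_EE 0).continuousAt.tendsto.comp hsq0
    have hOc : Tendsto (fun s : ℝ => EO (m * Real.sqrt s)) (nhdsWithin 0 (Ioi (0:ℝ)))
        (nhds (EO 0)) := (hasDerivAt_EO 0).continuousAt.tendsto.comp hsq0
    have := (hEc.sub hOc).const_mul ((4 * π) ^ (-(1:ℝ)/2) / m)
    rw [EE_zero_eq] at this
    simp only [sub_self, mul_zero] at this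
    exact Tendsto.congr (fun s => (heq s).symm) this
  · have hinv : Tendsto (fun s : ℝ => (Real.sqrt s)⁻¹) (nhdsWithin 0 (Ioi (0:ℝ))) atTop :=
      tendsto_inv_nhdsGT_zero.comp sqrt_tendsto_zero
    have hinv2 : Tendsto (fun s : ℝ => t / 2 * (Real.sqrt s)⁻¹)
        (nhdsWithin 0 (Ioi (0:ℝ))) atTop := hinv.const_mul_atTop (by positivity)
    have hu : Tendsto (fun s : ℝ => m * Real.sqrt s - t / 2 * (Real.sqrt s)⁻¹)
        (nhdsWithin 0 (Ioi (0:ℝ))) atBot := by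
      have h3 : Tendsto (fun s : ℝ => -(t / 2 * (Real.sqrt s)⁻¹))
          (nhdsWithin 0 (Ioi (0:ℝ))) atBot := tendsto_neg_atTop_atBot.comp hinv2
      have := h3.atBot_add hsq0
      exact this.congr (fun s => by ring)
    have hv : Tendsto (fun s : ℝ => m * Real.sqrt s + t / 2 * (Real.sqrt s)⁻¹)
        (nhdsWithin 0 (Ioi (0:ℝ))) atTop := by
      have := hinv2.atTop_add hsq0
      exact this.congr (fun s => by ring)
    have hEc := EE_tendsto_atBot.comp hu
    have hOc := EO_tendsto_atTop.comp hv
    have := ((hEc.const_mul (Real.exp (-(m * t)))).sub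
      (hOc.const_mul (Real.exp (m * t)))).const_mul ((4 * π) ^ (-(1:ℝ)/2) / m)
    simp at this
    exact this

lemma integral_kk {m : ℝ} (hm : 0 < m) {t : ℝ} (ht : 0 ≤ t) :
    ∫ s in Ioi (0:ℝ), kk m t s = Real.exp (-(m * t)) / (2 * m) := by
  set f : ℝ → ℝ := fun s => if s ≤ 0 then 0 else phi m t s with hf
  have hcont : ContinuousWithinAt f (Ici 0) 0 := by
    rw [← continuousWithinAt_Ioi_iff_Ici]
    unfold ContinuousWithinAt
    have hf0 : f 0 = 0 := by simp [hf]
    rw [hf0]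
    apply Tendsto.congr' _ (phi_zero hm ht)
    filter_upwards [self_mem_nhdsWithin] with s hs
    simp [hf, not_le.2 (mem_Ioi.1 hs)]
  have hderiv : ∀ x ∈ Ioi (0:ℝ), HasDerivAt f (kk m t x) x := by
    intro x hx
    have hx0 : 0 < x := hx
    apply (hasDerivAt_phi hm t hx0).congr_of_eventuallyEq
    filter_upwards [Ioi_mem_nhds hx0] with y hy
    simp [hf, not_le.2 (mem_Ioi.1 hy)]
  have htop : Tendsto f atTop (nhds (Real.exp (-(m * t)) / (2 * m))) := by
    apply Tendsto.congr' _ (phi_top hm t)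
    filter_upwards [eventually_gt_atTop (0:ℝ)] with s hs
    simp [hf, not_le.2 hs]
  have := integral_Ioi_of_hasDerivAt_of_tendsto hcont hderiv (kk_integrableOn m hm t) htop
  rw [this]
  simp [hf]

lemma kk_split {m t s : ℝ} (hs : 0 < s) :
    kk m t s = kk m 0 s * Real.exp (-t ^ 2 / (4 * s)) := by
  unfold kk
  rw [mul_assoc ((4 * π * s) ^ (-(1:ℝ)/2)), ← Real.exp_add]
  congr 1
  ring

lemma kk_split4 {m t s : ℝ} (hs : 0 < s) :
    kk m (2 * t) s = kk m 0 s * Real.exp (-t ^ 2 / (4 * s)) ^ 4 := by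
  unfold kk
  rw [← Real.exp_nat_mul, mul_assoc ((4 * π * s) ^ (-(1:ℝ)/2)), ← Real.exp_add]
  congr 1
  push_cast
  ring

lemma F_lb {a b : ℝ} (ha : 0 < a) (haq : a ≤ 1/4) (hb0 : 0 < b) (hba : b ≤ a) :
    (a - b) ^ 2 - 2 * b * (1 + 4 * a)
      ≤ 1 - 2 * Real.exp (a - b) + Real.exp (a - b) ^ 2 * Real.exp (-(2 * b)) := by
  set E := Real.exp (a - b) with hE
  set G := Real.exp (-(2 * b)) with hGdef
  have h1 : (a - b) + 1 ≤ E := Real.add_one_le_exp _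
  have hE0 : 0 < E := Real.exp_pos _
  have hG : 1 - 2 * b ≤ G := by
    have := Real.add_one_le_exp (-(2 * b)); linarith
  have hEsq : E ^ 2 ≤ 1 + 4 * a := by
    have h2a := Real.add_one_le_exp (-(2 * a))
    have hprod : Real.exp (2 * a) * Real.exp (-(2 * a)) = 1 := by
      rw [← Real.exp_add]; simp
    have hE2 : E ^ 2 = Real.exp (2 * (a - b)) := by
      rw [sq, hE, ← Real.exp_add]; congr 1; ring
    have hle : Real.exp (2 * (a - b)) ≤ Real.exp (2 * a) :=
      Real.exp_le_exp.2 (by linarith)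
    have hXa : Real.exp (2 * a) ≤ 1 + 4 * a := by
      nlinarith [Real.exp_pos (2 * a),
        mul_le_mul_of_nonneg_left h2a (Real.exp_pos (2 * a)).le, hprod]
    linarith [hE2 ▸ hle]
  have t1 : E ^ 2 * (1 - 2 * b) ≤ E ^ 2 * G := mul_le_mul_of_nonneg_left hG (sq_nonneg E)
  have t2 : (a - b) ^ 2 ≤ (1 - E) ^ 2 := by nlinarith
  have t3 : 2 * b * E ^ 2 ≤ 2 * b * (1 + 4 * a) :=
    mul_le_mul_of_nonneg_left hEsq (by linarith)
  nlinarith [t1, t2, t3]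

lemma combo_lb1 {m lam t s : ℝ} (hm : 0 < m) (hlam : 0 < lam) (hcond : 1 ≤ 2 * lam * m ^ 2)
    (ht : 0 < t) (hmt : m * t ≤ 1/4) (hs : lam ≤ s) :
    -(5 * (m * t) ^ 3) * kk m 0 s
      ≤ kk m 0 s - 2 * Real.exp (m * t) * kk m t s + Real.exp (2 * m * t) * kk m (2 * t) s := by
  have hs0 : 0 < s := lt_of_lt_of_le hlam hs
  set a := m * t with hadef
  set b := t ^ 2 / (4 * s) with hbdef
  have ha : 0 < a := by positivity
  have hb0 : 0 < b := by positivity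
  have hsm : 1 ≤ 2 * s * m ^ 2 := le_trans hcond (by nlinarith)
  have hb2 : 2 * b ≤ a ^ 2 := by
    have h2b : 2 * b = t ^ 2 / (2 * s) := by rw [hbdef]; ring
    rw [h2b, hadef, div_le_iff₀ (by positivity : (0:ℝ) < 2 * s)]
    nlinarith [mul_nonneg (by linarith : (0:ℝ) ≤ 2 * s * m ^ 2 - 1) (sq_nonneg t)]
  have hba : b ≤ a := by
    nlinarith [mul_le_mul_of_nonneg_left hmt ha.le]
  -- rewrite the combination
  rw [kk_split hs0 (t := t), kk_split4 hs0]
  set g := Real.exp (-t ^ 2 / (4 * s)) with hgdef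
  have hg : g = Real.exp (-b) := by rw [hgdef, hbdef]; congr 1; ring
  have hgoal : kk m 0 s - 2 * Real.exp (m * t) * (kk m 0 s * g)
      + Real.exp (2 * m * t) * (kk m 0 s * g ^ 4)
      = (1 - 2 * (Real.exp a * g) + Real.exp (2 * m * t) * g ^ 4) * kk m 0 s := by ring
  rw [hgoal]
  have hEg : Real.exp a * g = Real.exp (a - b) := by
    rw [hg, ← Real.exp_add, ← sub_eq_add_neg]
  have hEg2 : Real.exp (2 * m * t) * g ^ 4 = Real.exp (a - b) ^ 2 * Real.exp (-(2 * b)) := by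
    rw [hg, ← Real.exp_nat_mul, ← Real.exp_nat_mul, ← Real.exp_add, ← Real.exp_add, hadef]
    congr 1
    push_cast
    ring
  rw [hEg, hEg2]
  have hkey : -(5 * a ^ 3) ≤ 1 - 2 * Real.exp (a - b)
      + Real.exp (a - b) ^ 2 * Real.exp (-(2 * b)) := by
    have hF := F_lb ha hmt hb0 hba
    nlinarith [mul_le_mul_of_nonneg_left hb2 ha.le, sq_nonneg b]
  exact mul_le_mul_of_nonneg_right hkey (kk_pos hs0).le

lemma combo_lb2 {m lam t s : ℝ} (hm : 0 < m) (hlam : 0 < lam) (hcond : 1 ≤ 2 * lam * m ^ 2)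
    (ht : 0 < t) (hmt : m * t ≤ 1/4) (hs : lam + 8 / m ^ 2 ≤ s) :
    (m * t) ^ 2 / 2 * kk m 0 s
      ≤ kk m 0 s - 2 * Real.exp (m * t) * kk m t s + Real.exp (2 * m * t) * kk m (2 * t) s := by
  have hs8 : 8 / m ^ 2 ≤ s := le_trans (by linarith) hs
  have hs0 : 0 < s := lt_of_lt_of_le (by positivity) hs8
  set a := m * t with hadef
  set b := t ^ 2 / (4 * s) with hbdef
  have ha : 0 < a := by positivity
  have hb0 : 0 < b := by positivity
  have hsm : 16 ≤ 2 * s * m ^ 2 := by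
    rw [div_le_iff₀ (by positivity : (0:ℝ) < m ^ 2)] at hs8
    nlinarith
  have hb2 : 2 * b ≤ a ^ 2 / 16 := by
    have h2b : 2 * b = t ^ 2 / (2 * s) := by rw [hbdef]; ring
    rw [h2b, hadef, div_le_div_iff₀ (by positivity : (0:ℝ) < 2 * s) (by norm_num : (0:ℝ) < 16)]
    nlinarith [mul_nonneg (by linarith : (0:ℝ) ≤ 2 * s * m ^ 2 - 16) (sq_nonneg t)]
  have hba : b ≤ a := by
    nlinarith [mul_le_mul_of_nonneg_left hmt ha.le]
  rw [kk_split hs0 (t := t), kk_split4 hs0]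
  set g := Real.exp (-t ^ 2 / (4 * s)) with hgdef
  have hg : g = Real.exp (-b) := by rw [hgdef, hbdef]; congr 1; ring
  have hgoal : kk m 0 s - 2 * Real.exp (m * t) * (kk m 0 s * g)
      + Real.exp (2 * m * t) * (kk m 0 s * g ^ 4)
      = (1 - 2 * (Real.exp a * g) + Real.exp (2 * m * t) * g ^ 4) * kk m 0 s := by ring
  rw [hgoal]
  have hEg : Real.exp a * g = Real.exp (a - b) := by
    rw [hg, ← Real.exp_add, ← sub_eq_add_neg]
  have hEg2 : Real.exp (2 * m * t) * g ^ 4 = Real.exp (a - b) ^ 2 * Real.exp (-(2 * b)) := by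
    rw [hg, ← Real.exp_nat_mul, ← Real.exp_nat_mul, ← Real.exp_add, ← Real.exp_add, hadef]
    congr 1
    push_cast
    ring
  rw [hEg, hEg2]
  have hkey : a ^ 2 / 2 ≤ 1 - 2 * Real.exp (a - b)
      + Real.exp (a - b) ^ 2 * Real.exp (-(2 * b)) := by
    have hF := F_lb ha hmt hb0 hba
    nlinarith [mul_le_mul_of_nonneg_left hb2 ha.le, sq_nonneg b]
  exact mul_le_mul_of_nonneg_right hkey (kk_pos hs0).le


set_option maxHeartbeats 2000000 in
/-- Failure of reflection positivity in space-time dimension `d = 1` for the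
Gaussian measure obtained by stochastic quantization of the free scalar field
at finite stochastic time `λ`, for `2 λ m² ≥ 1`. -/
theorem stmt_0 (m lam : ℝ) (hm : 0 < m) (hlam : 0 < lam)
    (hcond : 1 ≤ 2 * lam * m ^ 2)
    (D : ℝ → ℝ)
    (hD : ∀ t : ℝ, D t =
      ∫ s in (0:ℝ)..lam, (4 * π * s) ^ (-(1:ℝ)/2) * Real.exp (-t ^ 2 / (4 * s) - s * m ^ 2)) :
    ∃ t : ℝ, 0 < t ∧
      D 0 - 2 * Real.exp (m * t) * D t + Real.exp (2 * m * t) * D (2 * t) < 0 := by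
  have hm2 : (0:ℝ) < m ^ 2 := by positivity
  set A := lam + 8 / m ^ 2 with hA
  have hlamA : lam ≤ A := by
    rw [hA]
    have : (0:ℝ) < 8 / m ^ 2 := by positivity
    linarith
  have hA0 : 0 < A := lt_of_lt_of_le hlam hlamA
  have hint : ∀ τ : ℝ, IntegrableOn (kk m τ) (Ioi (0:ℝ)) := kk_integrableOn m hm
  have hIoiLam : ∀ τ : ℝ, IntegrableOn (kk m τ) (Ioi lam) :=
    fun τ => (hint τ).mono_set (Ioi_subset_Ioi hlam.le)
  have hIocA : ∀ τ : ℝ, IntegrableOn (kk m τ) (Ioc lam A) :=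
    fun τ => (hIoiLam τ).mono_set Ioc_subset_Ioi_self
  have hIoiA : ∀ τ : ℝ, IntegrableOn (kk m τ) (Ioi A) :=
    fun τ => (hint τ).mono_set (Ioi_subset_Ioi hA0.le)
  set I1 := ∫ s in Ioc lam A, kk m 0 s with hI1
  set I2 := ∫ s in Ioi A, kk m 0 s with hI2
  have hI1nn : 0 ≤ I1 :=
    setIntegral_nonneg measurableSet_Ioc (fun s hs => (kk_pos (lt_trans hlam hs.1)).le)
  have hI2pos : 0 < I2 := by
    rw [hI2, setIntegral_pos_iff_support_of_nonneg_ae ?ae (hIoiA 0)]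
    case ae =>
      filter_upwards [ae_restrict_mem measurableSet_Ioi] with s hs
      exact (kk_pos (lt_trans hA0 hs)).le
    have hsub : Ioi A ⊆ Function.support (kk m 0) ∩ Ioi A :=
      fun s hs => ⟨(kk_pos (lt_trans hA0 hs)).ne', hs⟩
    have hvol : volume (Ioi A) = ⊤ := Real.volume_Ioi
    calc (0:ENNReal) < ⊤ := by simp
      _ = volume (Ioi A) := hvol.symm
      _ ≤ volume (Function.support (kk m 0) ∩ Ioi A) := measure_mono hsub
  set t := min (1 / (8 * m)) (I2 / (20 * m * (I1 + 1))) with htdef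
  have ht : 0 < t := lt_min (by positivity) (by positivity)
  have hmt : m * t ≤ 1 / 4 := by
    have h1 : t ≤ 1 / (8 * m) := min_le_left _ _
    have := mul_le_mul_of_nonneg_left h1 hm.le
    rw [mul_one_div] at this
    have h2 : m / (8 * m) = 1 / 8 := by field_simp
    rw [h2] at this
    linarith
  refine ⟨t, ht, ?_⟩
  have hD' : ∀ τ : ℝ, D τ = ∫ s in Ioc (0:ℝ) lam, kk m τ s := by
    intro τ
    rw [hD τ, intervalIntegral.integral_of_le hlam.le]
    rfl
  have hsplit : ∀ τ : ℝ, (∫ s in Ioi (0:ℝ), kk m τ s)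
      = (∫ s in Ioc (0:ℝ) lam, kk m τ s) + ∫ s in Ioi lam, kk m τ s := by
    intro τ
    rw [← setIntegral_union (Ioc_disjoint_Ioi le_rfl) measurableSet_Ioi
      ((hint τ).mono_set Ioc_subset_Ioi_self) (hIoiLam τ), Ioc_union_Ioi_eq_Ioi hlam.le]
  have hQ : D 0 - 2 * Real.exp (m * t) * D t + Real.exp (2 * m * t) * D (2 * t)
      = -((∫ s in Ioi lam, kk m 0 s) - 2 * Real.exp (m * t) * (∫ s in Ioi lam, kk m t s)
          + Real.exp (2 * m * t) * ∫ s in Ioi lam, kk m (2 * t) s) := by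
    have e0 := hsplit 0
    have e1 := hsplit t
    have e2 := hsplit (2 * t)
    have v0 := integral_kk hm (le_refl (0:ℝ)) (m := m)
    have v1 := integral_kk hm ht.le (t := t)
    have v2 := integral_kk hm (by linarith : (0:ℝ) ≤ 2 * t)
    have d0 : (∫ s in Ioc (0:ℝ) lam, kk m 0 s)
        = Real.exp (-(m * 0)) / (2 * m) - ∫ s in Ioi lam, kk m 0 s := by
      rw [← v0]; linarith [e0]
    have d1 : (∫ s in Ioc (0:ℝ) lam, kk m t s)
        = Real.exp (-(m * t)) / (2 * m) - ∫ s in Ioi lam, kk m t s := by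
      rw [← v1]; linarith [e1]
    have d2 : (∫ s in Ioc (0:ℝ) lam, kk m (2 * t) s)
        = Real.exp (-(m * (2 * t))) / (2 * m) - ∫ s in Ioi lam, kk m (2 * t) s := by
      rw [← v2]; linarith [e2]
    have h0 : Real.exp (-(m * 0)) = 1 := by simp
    have h1 : Real.exp (m * t) * Real.exp (-(m * t)) = 1 := by
      rw [← Real.exp_add]; simp
    have h2 : Real.exp (2 * m * t) * Real.exp (-(m * (2 * t))) = 1 := by
      rw [← Real.exp_add]
      have : 2 * m * t + -(m * (2 * t)) = 0 := by ring
      rw [this, Real.exp_zero]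
    rw [hD' 0, hD' t, hD' (2 * t), d0, d1, d2]
    have hexpand : Real.exp (-(m * 0)) / (2 * m)
        - 2 * Real.exp (m * t) * (Real.exp (-(m * t)) / (2 * m))
        + Real.exp (2 * m * t) * (Real.exp (-(m * (2 * t))) / (2 * m))
        = (Real.exp (-(m * 0)) - 2 * (Real.exp (m * t) * Real.exp (-(m * t)))
            + Real.exp (2 * m * t) * Real.exp (-(m * (2 * t)))) / (2 * m) := by ring
    have hz : Real.exp (-(m * 0)) / (2 * m)
        - 2 * Real.exp (m * t) * (Real.exp (-(m * t)) / (2 * m))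
        + Real.exp (2 * m * t) * (Real.exp (-(m * (2 * t))) / (2 * m)) = 0 := by
      rw [hexpand, h0, h1, h2]
      norm_num
    linear_combination hz
  rw [hQ]
  have ha1 : Integrable (fun s => kk m 0 s - 2 * Real.exp (m * t) * kk m t s)
      (volume.restrict (Ioi lam)) := (hIoiLam 0).sub ((hIoiLam t).const_mul _)
  have hb1 : Integrable (fun s => 2 * Real.exp (m * t) * kk m t s)
      (volume.restrict (Ioi lam)) := (hIoiLam t).const_mul _
  have ha2 : Integrable (fun s => Real.exp (2 * m * t) * kk m (2 * t) s)
      (volume.restrict (Ioi lam)) := (hIoiLam (2 * t)).const_mul _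
  have hcombo : (∫ s in Ioi lam, (kk m 0 s - 2 * Real.exp (m * t) * kk m t s
        + Real.exp (2 * m * t) * kk m (2 * t) s))
      = (∫ s in Ioi lam, kk m 0 s) - 2 * Real.exp (m * t) * (∫ s in Ioi lam, kk m t s)
        + Real.exp (2 * m * t) * (∫ s in Ioi lam, kk m (2 * t) s) := by
    rw [integral_add ha1 ha2, integral_sub (hIoiLam 0) hb1,
      MeasureTheory.integral_const_mul, MeasureTheory.integral_const_mul]
  rw [← hcombo]
  have hcInt1 : IntegrableOn (fun s => kk m 0 s - 2 * Real.exp (m * t) * kk m t s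
      + Real.exp (2 * m * t) * kk m (2 * t) s) (Ioc lam A) :=
    ((hIocA 0).sub ((hIocA t).const_mul _)).add ((hIocA (2 * t)).const_mul _)
  have hcInt2 : IntegrableOn (fun s => kk m 0 s - 2 * Real.exp (m * t) * kk m t s
      + Real.exp (2 * m * t) * kk m (2 * t) s) (Ioi A) :=
    ((hIoiA 0).sub ((hIoiA t).const_mul _)).add ((hIoiA (2 * t)).const_mul _)
  have hsplit2 : (∫ s in Ioi lam, (kk m 0 s - 2 * Real.exp (m * t) * kk m t s
        + Real.exp (2 * m * t) * kk m (2 * t) s))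
      = (∫ s in Ioc lam A, (kk m 0 s - 2 * Real.exp (m * t) * kk m t s
          + Real.exp (2 * m * t) * kk m (2 * t) s))
        + ∫ s in Ioi A, (kk m 0 s - 2 * Real.exp (m * t) * kk m t s
          + Real.exp (2 * m * t) * kk m (2 * t) s) := by
    rw [← setIntegral_union (Ioc_disjoint_Ioi le_rfl) measurableSet_Ioi hcInt1 hcInt2,
      Ioc_union_Ioi_eq_Ioi hlamA]
  have hmul1 : IntegrableOn (fun s => -(5 * (m * t) ^ 3) * kk m 0 s) (Ioc lam A) :=
    (hIocA 0).const_mul _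
  have hmul2 : IntegrableOn (fun s => (m * t) ^ 2 / 2 * kk m 0 s) (Ioi A) :=
    (hIoiA 0).const_mul _
  have hlow1 : -(5 * (m * t) ^ 3) * I1 ≤ ∫ s in Ioc lam A, (kk m 0 s
      - 2 * Real.exp (m * t) * kk m t s + Real.exp (2 * m * t) * kk m (2 * t) s) := by
    rw [hI1, ← MeasureTheory.integral_const_mul]
    refine setIntegral_mono_on hmul1 hcInt1 measurableSet_Ioc ?_
    intro s hs
    exact combo_lb1 hm hlam hcond ht hmt hs.1.le
  have hlow2 : (m * t) ^ 2 / 2 * I2 ≤ ∫ s in Ioi A, (kk m 0 s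
      - 2 * Real.exp (m * t) * kk m t s + Real.exp (2 * m * t) * kk m (2 * t) s) := by
    rw [hI2, ← MeasureTheory.integral_const_mul]
    refine setIntegral_mono_on hmul2 hcInt2 measurableSet_Ioi ?_
    intro s hs
    exact combo_lb2 hm hlam hcond ht hmt (le_of_lt hs)
  have htle : t ≤ I2 / (20 * m * (I1 + 1)) := min_le_right _ _
  have h20 : t * (20 * m * (I1 + 1)) ≤ I2 :=
    (le_div_iff₀ (by positivity)).1 htle
  have hkey : 5 * (m * t) ^ 3 * I1 ≤ (m * t) ^ 2 / 4 * I2 := by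
    have step1 : 20 * m * t * I1 ≤ I2 := by nlinarith [mul_pos hm ht]
    have step2 : (m * t) ^ 2 / 4 * (20 * m * t * I1) ≤ (m * t) ^ 2 / 4 * I2 :=
      mul_le_mul_of_nonneg_left step1 (by positivity)
    nlinarith [step2]
  have hmtpos : 0 < m * t := mul_pos hm ht
  have hpos : 0 < (m * t) ^ 2 / 4 * I2 :=
    mul_pos (div_pos (pow_pos hmtpos 2) (by norm_num)) hI2pos
  have hG : 0 < ∫ s in Ioi lam, (kk m 0 s - 2 * Real.exp (m * t) * kk m t s
      + Real.exp (2 * m * t) * kk m (2 * t) s) := by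
    rw [hsplit2]
    nlinarith [hlow1, hlow2, hkey, hpos]
  linarith [hG]
end

section
/- For every $\lambda>0$, $m>0$, and $t\in\mathbb{R}$, $\int_\lambda^\infty (4\pi s)^{-1/2} e^{-t^2/(4s)-s m^2}\,ds = e^{-\lambda m^2}(4\pi\lambda)^{-1/2}(2m)^{-1} W_{\lambda,m}(t)$, where $W_{\lambda,m}(t)=\int_{\mathbb{R}} e^{-(t-u)^2/(4\lambda)-m|u|}\,du$. (Equivalently, the kernel of $e^{-\lambda(-\Delta+m^2)}C$ in one dimension equals the heat-smoothed exponential kernel.) -/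
open MeasureTheory Real Set

lemma rpow_neg_half (a : ℝ) (ha : 0 ≤ a) : a ^ (-(1:ℝ)/2) = (Real.sqrt a)⁻¹ := by
  rw [show (-(1:ℝ)/2) = -(1/2) by norm_num, Real.rpow_neg ha, Real.sqrt_eq_rpow]

lemma image_pq (p q : ℝ) (hp : 0 < p) (hq : 0 < q) :
    (fun y : ℝ => p * y - q / y) '' Ioi 0 = univ := by
  apply eq_univ_of_forall
  intro v
  have hs0 : 0 ≤ v^2 + 4*p*q := by nlinarith
  set s := Real.sqrt (v^2 + 4*p*q) with hsdef
  have hs2 : s^2 = v^2 + 4*p*q := Real.sq_sqrt hs0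
  have habs : |v| < s := by
    have : Real.sqrt (v^2) < s := Real.sqrt_lt_sqrt (sq_nonneg v) (by nlinarith)
    simpa [Real.sqrt_sq_eq_abs] using this
  have hvs : 0 < v + s := by
    have h1 : -v ≤ |v| := neg_le_abs v
    linarith
  have hy0 : 0 < (v + s)/(2*p) := by positivity
  refine ⟨(v + s)/(2*p), hy0, ?_⟩
  show p * ((v + s)/(2*p)) - q / ((v + s)/(2*p)) = v
  rw [div_div_eq_mul_div]
  field_simp [hvs.ne', hp.ne']
  nlinarith

lemma mono_pq (p q : ℝ) (hp : 0 < p) (hq : 0 < q) :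
    StrictMonoOn (fun y : ℝ => p * y - q / y) (Ioi 0) := by
  intro x hx y hy hxy
  have hx0 : (0:ℝ) < x := hx
  have hy0 : (0:ℝ) < y := hy
  have h1 : q / y < q / x := div_lt_div_of_pos_left hq hx0 hxy
  have h2 : p * x < p * y := by nlinarith
  simp only
  linarith

lemma deriv_pq (p q : ℝ) (x : ℝ) (hx : x ≠ 0) :
    HasDerivAt (fun y : ℝ => p * y - q / y) (p + q / x^2) x := by
  have h1 : HasDerivAt (fun y : ℝ => p * y) p x := by
    simpa using (hasDerivAt_id x).const_mul p
  have h2 : HasDerivAt (fun y : ℝ => q / y) (q * (-(x^2)⁻¹)) x := by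
    simpa [div_eq_mul_inv, mul_comm] using (hasDerivAt_inv hx).const_mul q
  have := h1.sub h2
  exact this.congr_deriv (by ring)

lemma glasser_core (p q : ℝ) (hp : 0 < p) (hq : 0 < q) :
    ∫ y in Ioi (0:ℝ), Real.exp (-(p*y - q/y)^2) = Real.sqrt π / (2*p) := by
  set g : ℝ → ℝ := fun y => Real.exp (-(p*y - q/y)^2) with hg
  have h0 : Measurable fun y : ℝ => p*y - q/y := by
    have := (measurable_id.const_mul p).sub ((measurable_inv).const_mul q)
    convert this using 1; funext y; simp [div_eq_mul_inv]
  have hmeas : Measurable g := ((h0.pow_const 2).neg).exp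
  have hderiv : ∀ x ∈ Ioi (0:ℝ), HasDerivWithinAt (fun y : ℝ => p * y - q / y)
      (p + q / x^2) (Ioi 0) x :=
    fun x hx => (deriv_pq p q x (ne_of_gt hx)).hasDerivWithinAt
  have hinj : InjOn (fun y : ℝ => p * y - q / y) (Ioi 0) := (mono_pq p q hp hq).injOn
  have habs : ∀ x ∈ Ioi (0:ℝ), |p + q / x^2| = p + q / x^2 := by
    intro x hx
    have : (0:ℝ) < x := hx
    rw [abs_of_pos]; positivity
  have key : ∫ v : ℝ, Real.exp (-1*v^2)
      = ∫ y in Ioi (0:ℝ), (p + q / y^2) * g y := by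
    rw [← setIntegral_univ, ← image_pq p q hp hq,
      integral_image_eq_integral_abs_deriv_smul measurableSet_Ioi hderiv hinj]
    refine setIntegral_congr_fun measurableSet_Ioi fun x hx => ?_
    simp only [smul_eq_mul, neg_one_mul, habs x hx, hg]
  have hsqrtpi : ∫ v : ℝ, Real.exp (-1*v^2) = Real.sqrt π := by
    rw [integral_gaussian 1, div_one]
  -- integrability of the combined integrand
  have hK : IntegrableOn (fun y => (p + q / y^2) * g y) (Ioi 0) := by
    have h1 := (integrable_exp_neg_mul_sq (one_pos)).integrableOn
      (s := (fun y : ℝ => p * y - q / y) '' Ioi 0)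
    rw [integrableOn_image_iff_integrableOn_abs_deriv_smul measurableSet_Ioi hderiv hinj] at h1
    refine h1.congr_fun (fun x hx => ?_) measurableSet_Ioi
    simp only [smul_eq_mul, neg_one_mul, habs x hx, hg]
  have hgpos : ∀ y : ℝ, 0 < g y := fun y => Real.exp_pos _
  have hgint : IntegrableOn g (Ioi 0) := by
    refine Integrable.mono' (hK.const_mul p⁻¹) (hmeas.aestronglyMeasurable.restrict) ?_
    filter_upwards [ae_restrict_mem measurableSet_Ioi] with y hy
    have hy0 : (0:ℝ) < y := hy
    rw [Real.norm_eq_abs, abs_of_pos (hgpos y)]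
    have h2 : p⁻¹ * ((p + q/y^2) * g y) = g y + p⁻¹ * (q/y^2 * g y) := by
      field_simp
    have h3 : 0 ≤ p⁻¹ * (q/y^2 * g y) := by positivity
    linarith
  have hhint : IntegrableOn (fun y => q/y^2 * g y) (Ioi 0) := by
    refine Integrable.mono' hK (((((measurable_id.pow_const 2).const_div q)).mul hmeas).aestronglyMeasurable.restrict) ?_
    filter_upwards [ae_restrict_mem measurableSet_Ioi] with y hy
    have hy0 : (0:ℝ) < y := hy
    have h4 : (0:ℝ) ≤ q/y^2 * g y := by positivity
    rw [Real.norm_eq_abs, abs_of_nonneg h4]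
    nlinarith [hgpos y]
  -- substitution 2
  have hderiv2 : ∀ x ∈ Ioi (0:ℝ), HasDerivWithinAt (fun y : ℝ => q/(p*y))
      (-(q/(p*x^2))) (Ioi 0) x := by
    intro x hx
    have hx0 : (0:ℝ) < x := hx
    have h5 : HasDerivAt (fun y : ℝ => (q/p) * y⁻¹) ((q/p) * (-(x^2)⁻¹)) x :=
      (hasDerivAt_inv hx0.ne').const_mul (q/p)
    have h6 : (fun y : ℝ => (q/p) * y⁻¹) = fun y : ℝ => q/(p*y) := by
      funext y; rw [← div_div, div_eq_mul_inv (q/p)]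
    rw [h6] at h5
    have h7 : (q/p) * (-(x^2)⁻¹) = -(q/(p*x^2)) := by
      rw [← div_div, div_eq_mul_inv (q/p) (x^2)]; ring
    rw [h7] at h5
    exact h5.hasDerivWithinAt
  have hinj2 : InjOn (fun y : ℝ => q/(p*y)) (Ioi 0) := by
    have : StrictAntiOn (fun y : ℝ => q/(p*y)) (Ioi 0) := by
      intro x hx y hy hxy
      have hx0 : (0:ℝ) < x := hx
      exact div_lt_div_of_pos_left hq (by positivity) (by nlinarith)
    exact this.injOn
  have himg2 : (fun y : ℝ => q/(p*y)) '' Ioi 0 = Ioi 0 := by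
    ext x
    constructor
    · rintro ⟨y, hy, rfl⟩
      have hy0 : (0:ℝ) < y := hy
      have : (0:ℝ) < q/(p*y) := by positivity
      exact this
    · intro hx
      have hx0 : (0:ℝ) < x := hx
      refine ⟨q/(p*x), mem_Ioi.mpr (by positivity), ?_⟩
      field_simp
  have sub2 : ∫ y in Ioi (0:ℝ), g y = ∫ y in Ioi (0:ℝ), p⁻¹ * (q/y^2 * g y) := by
    conv_lhs => rw [← himg2]
    rw [integral_image_eq_integral_abs_deriv_smul measurableSet_Ioi hderiv2 hinj2]
    refine setIntegral_congr_fun measurableSet_Ioi fun y hy => ?_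
    have hy0 : (0:ℝ) < y := hy
    have h8 : |(-(q/(p*y^2)))| = q/(p*y^2) := by
      rw [abs_neg, abs_of_pos]; positivity
    have h9 : g (q/(p*y)) = g y := by
      have : (p*(q/(p*y)) - q/(q/(p*y)))^2 = (p*y - q/y)^2 := by
        have hpy : p*(q/(p*y)) = q/y := by field_simp
        have hqy : q/(q/(p*y)) = p*y := by
          rw [div_div_eq_mul_div]
          field_simp
        rw [hpy, hqy]; ring
      simp only [hg, this]
    rw [smul_eq_mul, h8, h9]
    field_simp
  have hJ : ∫ y in Ioi (0:ℝ), q/y^2 * g y = p * ∫ y in Ioi (0:ℝ), g y := by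
    rw [sub2, integral_const_mul, ← mul_assoc, mul_inv_cancel₀ hp.ne', one_mul]
  have split : ∫ y in Ioi (0:ℝ), (p + q / y^2) * g y
      = p * (∫ y in Ioi (0:ℝ), g y) + ∫ y in Ioi (0:ℝ), q/y^2 * g y := by
    rw [← integral_const_mul, ← integral_add (hgint.const_mul p) hhint]
    exact setIntegral_congr_fun measurableSet_Ioi fun y hy => by ring
  have final : Real.sqrt π = 2 * p * ∫ y in Ioi (0:ℝ), g y := by
    rw [← hsqrtpi, key, split, hJ]; ring
  rw [eq_div_iff (by positivity)]
  linarith [final]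

lemma glasser (b c : ℝ) (hb : 0 < b) (hc : 0 ≤ c) :
    ∫ y in Ioi (0:ℝ), Real.exp (-(b*y^2 + c/y^2))
      = Real.sqrt (π/b) / 2 * Real.exp (-(2*Real.sqrt (b*c))) := by
  rcases eq_or_lt_of_le hc with hc0 | hc0
  · rw [← hc0]
    simp only [zero_div, add_zero, mul_zero, Real.sqrt_zero, neg_zero, Real.exp_zero, mul_one]
    have := integral_gaussian_Ioi b
    simp only [neg_mul] at this
    exact this
  · have hp : 0 < Real.sqrt b := Real.sqrt_pos.mpr hb
    have hq : 0 < Real.sqrt c := Real.sqrt_pos.mpr hc0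
    set p := Real.sqrt b with hpdef
    set q := Real.sqrt c with hqdef
    have hp2 : p^2 = b := Real.sq_sqrt hb.le
    have hq2 : q^2 = c := Real.sq_sqrt hc
    have congr1 : ∀ y ∈ Ioi (0:ℝ), Real.exp (-(b*y^2 + c/y^2))
        = Real.exp (-(2*(p*q))) * Real.exp (-(p*y - q/y)^2) := by
      intro y hy
      have hy0 : (0:ℝ) < y := hy
      rw [← Real.exp_add]
      congr 1
      have expand : (p*y - q/y)^2 = p^2*y^2 - 2*(p*q) + q^2/y^2 := by
        field_simp; ring
      rw [expand, hp2, hq2]; ring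
    rw [setIntegral_congr_fun measurableSet_Ioi congr1, integral_const_mul,
      glasser_core p q hp hq, Real.sqrt_div pi_pos.le, Real.sqrt_mul hb.le]
    rw [← hpdef, ← hqdef]
    field_simp

lemma subord (m : ℝ) (hm : 0 < m) (u : ℝ) :
    ∫ s in Ioi (0:ℝ), (4*π*s) ^ (-(1:ℝ)/2) * Real.exp (-u^2/(4*s) - s*m^2)
      = Real.exp (-(m*|u|)) / (2*m) := by
  have himg : (fun y : ℝ => y^2) '' Ioi 0 = Ioi 0 := by
    ext x
    constructor
    · rintro ⟨y, hy, rfl⟩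
      exact mem_Ioi.mpr (pow_pos (mem_Ioi.mp hy) 2)
    · intro hx
      exact ⟨Real.sqrt x, mem_Ioi.mpr (Real.sqrt_pos.mpr (mem_Ioi.mp hx)),
        Real.sq_sqrt (le_of_lt (mem_Ioi.mp hx))⟩
  have hderiv : ∀ x ∈ Ioi (0:ℝ), HasDerivWithinAt (fun y : ℝ => y^2) (2*x) (Ioi 0) x := by
    intro x hx
    simpa using (hasDerivAt_pow 2 x).hasDerivWithinAt
  have hinj : InjOn (fun y : ℝ => y^2) (Ioi 0) := by
    intro x hx y hy h
    simp only at h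
    nlinarith [mem_Ioi.mp hx, mem_Ioi.mp hy]
  rw [← himg, integral_image_eq_integral_abs_deriv_smul measurableSet_Ioi hderiv hinj]
  have congr2 : ∀ y ∈ Ioi (0:ℝ),
      |2*y| • ((4*π*y^2) ^ (-(1:ℝ)/2) * Real.exp (-u^2/(4*y^2) - y^2*m^2))
      = (2/Real.sqrt (4*π)) * Real.exp (-(m^2*y^2 + (u^2/4)/y^2)) := by
    intro y hy
    have hy0 : (0:ℝ) < y := hy
    have h4pi : (0:ℝ) < 4*π := by positivity
    rw [smul_eq_mul, abs_of_pos (by positivity), rpow_neg_half _ (by positivity),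
      Real.sqrt_mul h4pi.le (y^2), Real.sqrt_sq hy0.le]
    have hE : -u^2/(4*y^2) - y^2*m^2 = -(m^2*y^2 + (u^2/4)/y^2) := by
      field_simp; ring
    rw [hE, mul_inv, div_eq_mul_inv]
    have hs : Real.sqrt (4*π) ≠ 0 := by positivity
    field_simp
  rw [setIntegral_congr_fun measurableSet_Ioi congr2, integral_const_mul,
    glasser (m^2) (u^2/4) (by positivity) (by positivity)]
  have e1 : Real.sqrt (π/m^2) = Real.sqrt π / m := by
    rw [Real.sqrt_div pi_pos.le, Real.sqrt_sq hm.le]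
  have e2 : Real.sqrt (m^2*(u^2/4)) = m*|u|/2 := by
    rw [show m^2*(u^2/4) = (m*u/2)^2 by ring, Real.sqrt_sq_eq_abs, abs_div, abs_mul,
      abs_of_pos hm, abs_of_pos (by norm_num : (0:ℝ) < 2)]
  have e3 : Real.sqrt (4*π) = 2*Real.sqrt π := by
    rw [show (4:ℝ)*π = 2^2*π by norm_num, Real.sqrt_mul (by positivity),
      Real.sqrt_sq (by norm_num : (0:ℝ) ≤ 2)]
  rw [e1, e2, e3, show -(2*(m*|u|/2)) = -(m*|u|) by ring]
  have hπ : 0 < Real.sqrt π := Real.sqrt_pos.mpr pi_pos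
  field_simp

lemma conv_gauss (lam r t : ℝ) (hlam : 0 < lam) (hr : 0 < r) :
    ∫ u : ℝ, Real.exp (-(t-u)^2/(4*lam)) * Real.exp (-u^2/(4*r))
      = Real.sqrt (4*π*lam*r/(lam+r)) * Real.exp (-t^2/(4*(lam+r))) := by
  have hlr : (0:ℝ) < lam + r := by linarith
  have hA : (0:ℝ) < (lam+r)/(4*lam*r) := by positivity
  have hpt : ∀ u : ℝ, Real.exp (-(t-u)^2/(4*lam)) * Real.exp (-u^2/(4*r))
      = Real.exp (-t^2/(4*(lam+r)))
        * Real.exp (-((lam+r)/(4*lam*r))*(u - r*t/(lam+r))^2) := by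
    intro u
    rw [← Real.exp_add, ← Real.exp_add]
    congr 1
    field_simp
    ring
  simp_rw [hpt]
  rw [integral_const_mul]
  have hshift : ∫ u : ℝ, Real.exp (-((lam+r)/(4*lam*r))*(u - r*t/(lam+r))^2)
      = Real.sqrt (π/((lam+r)/(4*lam*r))) := by
    rw [show (fun u : ℝ => Real.exp (-((lam+r)/(4*lam*r))*(u - r*t/(lam+r))^2))
      = fun u : ℝ => (fun v : ℝ => Real.exp (-((lam+r)/(4*lam*r))*v^2)) (u - r*t/(lam+r))
      from rfl]
    rw [integral_sub_right_eq_self (fun v : ℝ => Real.exp (-((lam+r)/(4*lam*r))*v^2))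
      (r*t/(lam+r))]
    exact integral_gaussian _
  rw [hshift]
  have : π/((lam+r)/(4*lam*r)) = 4*π*lam*r/(lam+r) := by
    field_simp
  rw [this]; ring

/-- The kernel of `e^{-λ(-Δ+m²)} C` in one dimension equals the
heat-smoothed exponential kernel `W_{λ,m}`. -/
theorem stmt_2 (lam m : ℝ) (hlam : 0 < lam) (hm : 0 < m) (t : ℝ)
    (W : ℝ → ℝ)
    (hW : ∀ t : ℝ, W t = ∫ u : ℝ, Real.exp (-(t - u) ^ 2 / (4 * lam) - m * |u|)) :
    ∫ s in Set.Ioi lam,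
        (4 * π * s) ^ (-(1:ℝ)/2) * Real.exp (-t ^ 2 / (4 * s) - s * m ^ 2)
      = Real.exp (-lam * m ^ 2) * (4 * π * lam) ^ (-(1:ℝ)/2) * (2 * m)⁻¹ * W t := by
  have hlr : ∀ r : ℝ, r ∈ Ioi (0:ℝ) → (0:ℝ) < lam + r := fun r hr => by
    have : (0:ℝ) < r := hr; linarith
  set F : ℝ → ℝ → ℝ := fun r u =>
    Real.exp (-(t-u)^2/(4*lam)) * ((4*π*r) ^ (-(1:ℝ)/2) * Real.exp (-u^2/(4*r) - r*m^2))
    with hF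
  -- Step 1 : shift the integration variable
  have shift : (∫ s in Set.Ioi lam,
        (4*π*s) ^ (-(1:ℝ)/2) * Real.exp (-t^2/(4*s) - s*m^2))
      = ∫ r in Ioi (0:ℝ),
        (4*π*(r+lam)) ^ (-(1:ℝ)/2) * Real.exp (-t^2/(4*(r+lam)) - (r+lam)*m^2) := by
    rw [show Ioi lam = (fun r : ℝ => r + lam) '' Ioi 0 by
      rw [image_add_const_Ioi, zero_add]]
    rw [integral_image_eq_integral_abs_deriv_smul (f' := fun _ => (1:ℝ)) measurableSet_Ioi
      (fun x _ => ((by simpa using (hasDerivAt_id x).add_const lam :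
        HasDerivAt (fun r : ℝ => r + lam) 1 x)).hasDerivWithinAt)
      (add_left_injective lam).injOn]
    simp
  -- Step 2 : value of the inner integral
  have hFint : ∀ r ∈ Ioi (0:ℝ), ∫ u : ℝ, F r u
      = ((4*π*r) ^ (-(1:ℝ)/2) * Real.exp (-(r*m^2)))
        * (Real.sqrt (4*π*lam*r/(lam+r)) * Real.exp (-t^2/(4*(lam+r)))) := by
    intro r hr
    have hr0 : (0:ℝ) < r := hr
    have hptw : ∀ u : ℝ, F r u = ((4*π*r) ^ (-(1:ℝ)/2) * Real.exp (-(r*m^2)))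
        * (Real.exp (-(t-u)^2/(4*lam)) * Real.exp (-u^2/(4*r))) := by
      intro u
      rw [hF]
      simp only
      rw [show -u^2/(4*r) - r*m^2 = (-u^2/(4*r)) + (-(r*m^2)) by ring, Real.exp_add]
      ring
    simp_rw [hptw]
    rw [integral_const_mul, conv_gauss lam r t hlam hr0]
  -- Step 3 : the scalar identity
  have hscal : ∀ r ∈ Ioi (0:ℝ),
      (4*π*(r+lam)) ^ (-(1:ℝ)/2) * Real.exp (-t^2/(4*(r+lam)) - (r+lam)*m^2)
      = (Real.exp (-lam*m^2) * (4*π*lam) ^ (-(1:ℝ)/2)) * ∫ u : ℝ, F r u := by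
    intro r hr
    have hr0 : (0:ℝ) < r := hr
    have hlr0 : (0:ℝ) < lam + r := hlr r hr
    rw [hFint r hr, add_comm r lam]
    rw [rpow_neg_half _ (by positivity : (0:ℝ) ≤ 4*π*(lam+r)),
      rpow_neg_half _ (by positivity : (0:ℝ) ≤ 4*π*lam),
      rpow_neg_half _ (by positivity : (0:ℝ) ≤ 4*π*r)]
    have e4 : Real.sqrt (4*π*lam*r/(lam+r))
        = Real.sqrt (4*π*lam) * Real.sqrt (4*π*r) / Real.sqrt (4*π*(lam+r)) := by
      rw [← Real.sqrt_mul (by positivity), ← Real.sqrt_div (by positivity)]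
      congr 1
      field_simp
    rw [e4]
    rw [show -t^2/(4*(lam+r)) - (lam+r)*m^2
      = (-lam*m^2) + ((-(r*m^2)) + (-t^2/(4*(lam+r)))) by ring,
      Real.exp_add, Real.exp_add]
    have s1 : (0:ℝ) < Real.sqrt (4*π*(lam+r)) := Real.sqrt_pos.mpr (by positivity)
    have s2 : (0:ℝ) < Real.sqrt (4*π*lam) := Real.sqrt_pos.mpr (by positivity)
    have s3 : (0:ℝ) < Real.sqrt (4*π*r) := Real.sqrt_pos.mpr (by positivity)
    field_simp
  -- Step 4 : integrability on the product space
  have hFmeas : AEStronglyMeasurable (Function.uncurry F)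
      ((volume.restrict (Ioi (0:ℝ))).prod volume) := by
    apply Measurable.aestronglyMeasurable
    rw [hF]
    fun_prop
  have hFnonneg : ∀ r : ℝ, 0 < r → ∀ u : ℝ, 0 ≤ F r u := by
    intro r hr0 u
    rw [hF]
    simp only
    have h := Real.rpow_nonneg (show (0:ℝ) ≤ 4*π*r from by positivity) (-(1:ℝ)/2)
    exact mul_nonneg (Real.exp_pos _).le (mul_nonneg h (Real.exp_pos _).le)
  have hsect : ∀ r ∈ Ioi (0:ℝ), Integrable (fun u => F r u) := by
    intro r hr
    have hr0 : (0:ℝ) < r := hr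
    refine Integrable.mono'
      ((integrable_exp_neg_mul_sq (show (0:ℝ) < 1/(4*r) by positivity)).const_mul
        ((4*π*r) ^ (-(1:ℝ)/2) * Real.exp (-(r*m^2)))) ?_ ?_
    · apply Measurable.aestronglyMeasurable
      rw [hF]
      simp only
      fun_prop
    · refine ae_of_all _ fun u => ?_
      rw [Real.norm_eq_abs, abs_of_nonneg (hFnonneg r hr0 u)]
      have heq : F r u = ((4*π*r) ^ (-(1:ℝ)/2) * Real.exp (-(r*m^2))
            * Real.exp (-(1/(4*r))*u^2)) * Real.exp (-(t-u)^2/(4*lam)) := by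
        rw [hF]
        simp only
        rw [show -u^2/(4*r) - r*m^2 = (-(1/(4*r))*u^2) + (-(r*m^2)) by ring, Real.exp_add]
        ring
      rw [heq]
      have h1 : Real.exp (-(t-u)^2/(4*lam)) ≤ 1 := by
        rw [Real.exp_le_one_iff, neg_div]
        have : (0:ℝ) ≤ (t-u)^2/(4*lam) := by positivity
        linarith
      have h2 : (0:ℝ) ≤ (4*π*r) ^ (-(1:ℝ)/2) * Real.exp (-(r*m^2))
          * Real.exp (-(1/(4*r))*u^2) := by
        have h := Real.rpow_nonneg (show (0:ℝ) ≤ 4*π*r from by positivity) (-(1:ℝ)/2)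
        exact mul_nonneg (mul_nonneg h (Real.exp_pos _).le) (Real.exp_pos _).le
      calc ((4*π*r) ^ (-(1:ℝ)/2) * Real.exp (-(r*m^2)) * Real.exp (-(1/(4*r))*u^2))
            * Real.exp (-(t-u)^2/(4*lam))
          ≤ ((4*π*r) ^ (-(1:ℝ)/2) * Real.exp (-(r*m^2)) * Real.exp (-(1/(4*r))*u^2)) * 1 :=
            mul_le_mul_of_nonneg_left h1 h2
        _ = (4*π*r) ^ (-(1:ℝ)/2) * Real.exp (-(r*m^2)) * Real.exp (-(1/(4*r))*u^2) := by ring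
  have huncF : Integrable (Function.uncurry F)
      ((volume.restrict (Ioi (0:ℝ))).prod volume) := by
    rw [MeasureTheory.integrable_prod_iff hFmeas]
    constructor
    · rw [ae_restrict_iff' measurableSet_Ioi]
      exact ae_of_all _ fun r hr => hsect r hr
    · refine Integrable.mono'
        ((exp_neg_integrableOn_Ioi 0 (show (0:ℝ) < m^2 by positivity)))
        (hFmeas.norm.integral_prod_right') ?_
      rw [ae_restrict_iff' measurableSet_Ioi]
      refine ae_of_all _ fun r hr => ?_
      have hr0 : (0:ℝ) < r := hr
      have hlr0 : (0:ℝ) < lam + r := hlr r hr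
      simp only [Function.uncurry_apply_pair]
      have hval : (∫ u : ℝ, ‖F r u‖) = ∫ u : ℝ, F r u := by
        congr 1; funext u; rw [Real.norm_eq_abs, abs_of_nonneg (hFnonneg r hr0 u)]
      have hnn : (0:ℝ) ≤ ∫ u : ℝ, ‖F r u‖ := integral_nonneg fun u => norm_nonneg _
      rw [Real.norm_eq_abs, abs_of_nonneg hnn, hval, hFint r hr,
        rpow_neg_half _ (by positivity : (0:ℝ) ≤ 4*π*r)]
      have hs3 : (0:ℝ) < Real.sqrt (4*π*r) := Real.sqrt_pos.mpr (by positivity)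
      have hb1 : Real.sqrt (4*π*lam*r/(lam+r)) ≤ Real.sqrt (4*π*r) := by
        apply Real.sqrt_le_sqrt
        rw [div_le_iff₀ hlr0]
        nlinarith [mul_pos (mul_pos (show (0:ℝ)<4 by norm_num) pi_pos) (mul_pos hr0 hr0)]
      have hb2 : (Real.sqrt (4*π*r))⁻¹ * Real.sqrt (4*π*lam*r/(lam+r)) ≤ 1 := by
        rw [← div_eq_inv_mul, div_le_one hs3]
        exact hb1
      have hb3 : Real.exp (-t^2/(4*(lam+r))) ≤ 1 := by
        rw [Real.exp_le_one_iff, neg_div]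
        have : (0:ℝ) ≤ t^2/(4*(lam+r)) := by positivity
        linarith
      have hb4 : Real.exp (-(r*m^2)) = Real.exp (-m^2*r) := by ring_nf
      have hnn2 : (0:ℝ) ≤ Real.sqrt (4*π*lam*r/(lam+r)) := Real.sqrt_nonneg _
      calc (Real.sqrt (4*π*r))⁻¹ * Real.exp (-(r*m^2))
            * (Real.sqrt (4*π*lam*r/(lam+r)) * Real.exp (-t^2/(4*(lam+r))))
          = ((Real.sqrt (4*π*r))⁻¹ * Real.sqrt (4*π*lam*r/(lam+r)))
            * Real.exp (-t^2/(4*(lam+r))) * Real.exp (-(r*m^2)) := by ring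
        _ ≤ 1 * 1 * Real.exp (-(r*m^2)) := by
            apply mul_le_mul_of_nonneg_right _ (Real.exp_pos _).le
            apply mul_le_mul hb2 hb3 (Real.exp_pos _).le
            nlinarith
        _ = Real.exp (-m^2*r) := by rw [hb4]; ring
  -- Step 5 : the inner integral after swapping
  have hinner : ∀ u : ℝ, (∫ r in Ioi (0:ℝ), F r u)
      = Real.exp (-(t-u)^2/(4*lam)) * (Real.exp (-(m*|u|)) / (2*m)) := by
    intro u
    rw [hF]
    simp only
    rw [integral_const_mul, subord m hm u]
  -- assemble everything
  rw [shift, setIntegral_congr_fun measurableSet_Ioi hscal, integral_const_mul,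
    MeasureTheory.integral_integral_swap huncF]
  simp_rw [hinner]
  have hfin : ∀ u : ℝ, Real.exp (-(t-u)^2/(4*lam)) * (Real.exp (-(m*|u|)) / (2*m))
      = (2*m)⁻¹ * Real.exp (-(t-u)^2/(4*lam) - m*|u|) := by
    intro u
    rw [show -(t-u)^2/(4*lam) - m*|u| = (-(t-u)^2/(4*lam)) + (-(m*|u|)) by ring,
      Real.exp_add]
    ring
  simp_rw [hfin]
  rw [integral_const_mul, ← hW t]
  ring
end

section
/- For every $\lambda>0$, $m>0$, and $t\geq 0$, with $D_\lambda(t)=\int_0^\lambda (4\pi s)^{-1/2} e^{-t^2/(4s)-s m^2}\,ds$ and $W_{\lambda,m}(t)=\int_{\mathbb{R}} e^{-(t-u)^2/(4\lambda)-m|u|}\,du$, one has the identity $D_\lambda(0) - 2e^{mt}D_\lambda(t) + e^{2mt}D_\lambda(2t) = -\,e^{-\lambda m^2}(4\pi\lambda)^{-1/2}\,m^{-1}\Big(\tfrac12\big(W_{\lambda,m}(0)+e^{2mt}W_{\lambda,m}(2t)\big) - e^{mt}W_{\lambda,m}(t)\Big)$. (The reflection-positivity form of $D_\lambda$ on the $C$-null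 vector $f=\delta_0-e^{mt}\delta_t$ reduces, up to a negative constant, to the function $F$.) -/
open MeasureTheory Real Set Filter Topology



noncomputable def gaussPhi (x : ℝ) : ℝ := ∫ v in (0:ℝ)..x, Real.exp (-v^2)
noncomputable def gaussPsi (x : ℝ) : ℝ := ∫ v in Set.Ioi x, Real.exp (-v^2)

lemma integrable_gauss : Integrable (fun v : ℝ => Real.exp (-v^2)) := by
  simpa using integrable_exp_neg_mul_sq (one_pos)

lemma continuous_gauss : Continuous (fun v : ℝ => Real.exp (-v^2)) := by
  fun_prop

lemma gaussPhi_hasDerivAt (x : ℝ) : HasDerivAt gaussPhi (Real.exp (-x^2)) x :=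
  (intervalIntegral.integral_hasStrictDerivAt_right
    (integrable_gauss.intervalIntegrable)
    (continuous_gauss.stronglyMeasurable.stronglyMeasurableAtFilter)
    continuous_gauss.continuousAt).hasDerivAt

lemma continuous_gaussPhi : Continuous gaussPhi :=
  continuous_iff_continuousAt.mpr fun x => (gaussPhi_hasDerivAt x).continuousAt

lemma gauss_Ioi_zero : ∫ v in Set.Ioi (0:ℝ), Real.exp (-v^2) = Real.sqrt π / 2 := by
  simpa using integral_gaussian_Ioi 1

lemma gaussPhi_tendsto_atTop : Tendsto gaussPhi atTop (𝓝 (Real.sqrt π / 2)) := by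
  have h := MeasureTheory.intervalIntegral_tendsto_integral_Ioi 0
    integrable_gauss.integrableOn tendsto_id
  rwa [gauss_Ioi_zero] at h

lemma gaussPhi_neg (x : ℝ) : gaussPhi (-x) = -gaussPhi x := by
  have h := intervalIntegral.integral_comp_neg (a := (0:ℝ)) (b := x)
    (fun v => Real.exp (-v^2))
  simp only [neg_sq, neg_zero] at h
  rw [gaussPhi, gaussPhi, h, intervalIntegral.integral_symm]

lemma gaussPhi_tendsto_atBot : Tendsto gaussPhi atBot (𝓝 (-(Real.sqrt π / 2))) := by
  have h := (gaussPhi_tendsto_atTop.comp tendsto_neg_atBot_atTop).neg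
  refine h.congr fun x => ?_
  simp [Function.comp, ← gaussPhi_neg]

lemma gaussPhi_zero : gaussPhi 0 = 0 := by simp [gaussPhi]

lemma gaussPsi_eq (x : ℝ) : gaussPsi x = Real.sqrt π / 2 - gaussPhi x := by
  have key : gaussPhi x + gaussPsi x = Real.sqrt π / 2 := by
    rw [← gauss_Ioi_zero]
    rcases le_total 0 x with hx | hx
    · rw [gaussPhi, intervalIntegral.integral_of_le hx, gaussPsi,
        ← setIntegral_union (Ioc_disjoint_Ioi le_rfl) measurableSet_Ioi
          integrable_gauss.integrableOn integrable_gauss.integrableOn,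
        Ioc_union_Ioi_eq_Ioi hx]
    · rw [gaussPhi, intervalIntegral.integral_of_ge hx, gaussPsi,
        ← Ioc_union_Ioi_eq_Ioi hx,
        setIntegral_union (Ioc_disjoint_Ioi le_rfl) measurableSet_Ioi
          integrable_gauss.integrableOn integrable_gauss.integrableOn]
      ring
  linarith [key]





lemma integral_Ioi_add_right (f : ℝ → ℝ) (a d : ℝ) :
    ∫ x in Ioi a, f (x + d) = ∫ x in Ioi (a + d), f x := by
  have A : MeasurableEmbedding fun x : ℝ => x + d :=
    (Homeomorph.addRight d).isClosedEmbedding.measurableEmbedding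
  have B : ∫ y in Ioi (a + d), f y
      = ∫ y in Ioi (a + d), f y ∂(Measure.map (fun x : ℝ => x + d) volume) := by
    rw [map_add_right_eq_self volume d]
  rw [B, A.setIntegral_map (μ := volume) f (Ioi (a + d)), preimage_add_const_Ioi,
    add_sub_cancel_right]

lemma integrable_gauss_affine {b : ℝ} (hb : b ≠ 0) (c : ℝ) :
    Integrable (fun u : ℝ => Real.exp (-(((u + c)/b)^2))) := by
  have h1 := (integrable_gauss.comp_add_right (c/b)).comp_mul_left' (inv_ne_zero hb)
  refine h1.congr (Eventually.of_forall fun u => ?_)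
  show Real.exp (-((b⁻¹ * u + c/b)^2)) = Real.exp (-(((u + c)/b)^2))
  rw [inv_mul_eq_div, ← add_div]

lemma gauss_Ioi_shift {b : ℝ} (hb : 0 < b) (c : ℝ) :
    ∫ u in Ioi (0:ℝ), Real.exp (-(((u + c)/b)^2)) = b * gaussPsi (c/b) := by
  have h1 : ∫ u in Ioi (0:ℝ), Real.exp (-(((u + c)/b)^2))
      = ∫ v in Ioi c, Real.exp (-((v/b)^2)) := by
    simpa using integral_Ioi_add_right (fun v => Real.exp (-((v/b)^2))) 0 c
  rw [h1]
  have h2 : ∀ v : ℝ, v/b = b⁻¹ * v := fun v => div_eq_inv_mul v b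
  simp_rw [h2]
  rw [integral_comp_mul_left_Ioi (fun v => Real.exp (-v^2)) c (inv_pos.mpr hb)]
  rw [gaussPsi]
  simp [smul_eq_mul, inv_inv]



lemma keyW (lam m : ℝ) (hlam : 0 < lam) (hm : 0 < m) (a : ℝ) (ha : 0 ≤ a) :
    ∫ u : ℝ, Real.exp (-(a - u)^2 / (4*lam) - m * |u|)
      = 2 * Real.sqrt lam * Real.exp (m^2*lam) *
        (Real.exp (-(m*a)) * gaussPsi (m*Real.sqrt lam - a/(2*Real.sqrt lam))
         + Real.exp (m*a) * gaussPsi (m*Real.sqrt lam + a/(2*Real.sqrt lam))) := by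
  have hsl : 0 < Real.sqrt lam := Real.sqrt_pos.mpr hlam
  have hsl2 : (Real.sqrt lam)^2 = lam := Real.sq_sqrt hlam.le
  have hb : (0:ℝ) < 2 * Real.sqrt lam := by positivity
  have hpos : ∀ u ∈ Ioi (0:ℝ), Real.exp (-(a - u)^2 / (4*lam) - m * |u|)
      = Real.exp (m^2*lam - m*a)
        * Real.exp (-(((u + (2*m*lam - a))/(2*Real.sqrt lam))^2)) := by
    intro u hu
    rw [← Real.exp_add, Real.exp_eq_exp, abs_of_pos hu, div_pow,
      show (2*Real.sqrt lam)^2 = 4*lam by rw [mul_pow, hsl2]; ring, ← hsl2]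
    field_simp
    ring
  have hneg : ∀ u ∈ Ioi (0:ℝ), Real.exp (-(a - (-u))^2 / (4*lam) - m * |(-u)|)
      = Real.exp (m^2*lam + m*a)
        * Real.exp (-(((u + (2*m*lam + a))/(2*Real.sqrt lam))^2)) := by
    intro u hu
    rw [← Real.exp_add, Real.exp_eq_exp, abs_neg, abs_of_pos hu, div_pow,
      show (2*Real.sqrt lam)^2 = 4*lam by rw [mul_pow, hsl2]; ring, ← hsl2]
    field_simp
    ring
  have intpos : IntegrableOn (fun u : ℝ => Real.exp (-(a - u)^2 / (4*lam) - m * |u|))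
      (Ioi 0) := by
    refine (IntegrableOn.congr_fun ?_ (fun u hu => (hpos u hu).symm) measurableSet_Ioi)
    exact ((integrable_gauss_affine hb.ne' (2*m*lam - a)).const_mul _).integrableOn
  have intneg : IntegrableOn (fun u : ℝ => Real.exp (-(a - u)^2 / (4*lam) - m * |u|))
      (Iic 0) := by
    rw [IntegrableOn, ← Measure.map_neg_eq_self (volume : Measure ℝ)]
    have A : MeasurableEmbedding (fun x : ℝ => -x) :=
      (Homeomorph.neg ℝ).measurableEmbedding
    rw [Measure.restrict_map A.measurable measurableSet_Iic, A.integrable_map_iff]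
    have hpre : (fun x : ℝ => -x) ⁻¹' Iic 0 = Ici 0 := by ext x; simp
    rw [hpre, ← IntegrableOn, integrableOn_Ici_iff_integrableOn_Ioi]
    refine (IntegrableOn.congr_fun ?_ (fun u hu => (hneg u hu).symm) measurableSet_Ioi)
    exact ((integrable_gauss_affine hb.ne' (2*m*lam + a)).const_mul _).integrableOn
  have split : ∫ u : ℝ, Real.exp (-(a - u)^2 / (4*lam) - m * |u|)
      = (∫ u in Iic (0:ℝ), Real.exp (-(a - u)^2 / (4*lam) - m * |u|))
        + ∫ u in Ioi (0:ℝ), Real.exp (-(a - u)^2 / (4*lam) - m * |u|) := by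
    rw [← setIntegral_univ, ← Iic_union_Ioi (a := (0:ℝ)),
      setIntegral_union (Iic_disjoint_Ioi le_rfl) measurableSet_Ioi intneg intpos]
  have refl : ∫ u in Iic (0:ℝ), Real.exp (-(a - u)^2 / (4*lam) - m * |u|)
      = ∫ u in Ioi (0:ℝ), Real.exp (-(a - (-u))^2 / (4*lam) - m * |(-u)|) := by
    have h := integral_comp_neg_Ioi (0:ℝ)
      (fun u => Real.exp (-(a - u)^2 / (4*lam) - m * |u|))
    rw [neg_zero] at h
    exact h.symm
  have e1 : ∫ u in Ioi (0:ℝ), Real.exp (-(a - u)^2 / (4*lam) - m * |u|)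
      = Real.exp (m^2*lam - m*a)
        * (2*Real.sqrt lam * gaussPsi ((2*m*lam - a)/(2*Real.sqrt lam))) := by
    rw [setIntegral_congr_fun measurableSet_Ioi hpos, integral_const_mul,
      gauss_Ioi_shift hb]
  have e2 : ∫ u in Ioi (0:ℝ), Real.exp (-(a - (-u))^2 / (4*lam) - m * |(-u)|)
      = Real.exp (m^2*lam + m*a)
        * (2*Real.sqrt lam * gaussPsi ((2*m*lam + a)/(2*Real.sqrt lam))) := by
    rw [setIntegral_congr_fun measurableSet_Ioi hneg, integral_const_mul,
      gauss_Ioi_shift hb]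
  have arg1 : (2*m*lam - a)/(2*Real.sqrt lam) = m*Real.sqrt lam - a/(2*Real.sqrt lam) := by
    field_simp; nlinarith [hsl2]
  have arg2 : (2*m*lam + a)/(2*Real.sqrt lam) = m*Real.sqrt lam + a/(2*Real.sqrt lam) := by
    field_simp; nlinarith [hsl2]
  rw [split, refl, e1, e2, arg1, arg2,
    show m^2*lam - m*a = m^2*lam + -(m*a) by ring, Real.exp_add, Real.exp_add]
  ring



noncomputable def auxF (m a : ℝ) (s : ℝ) : ℝ :=
  if 0 < s then
    Real.exp (-(m*a)) * gaussPhi (m*Real.sqrt s - a/(2*Real.sqrt s))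
      + Real.exp (m*a) * gaussPhi (m*Real.sqrt s + a/(2*Real.sqrt s))
  else (Real.exp (m*a) - Real.exp (-(m*a))) * (Real.sqrt π / 2)

noncomputable def auxD (m a : ℝ) (s : ℝ) : ℝ :=
  Real.exp (-a^2/(4*s) - s*m^2) * (m / Real.sqrt s)

lemma auxF_hasDerivAt (m a : ℝ) {s : ℝ} (hs : 0 < s) :
    HasDerivAt (auxF m a) (auxD m a s) s := by
  obtain ⟨r, hr, rfl⟩ : ∃ r : ℝ, 0 < r ∧ s = r^2 :=
    ⟨Real.sqrt s, Real.sqrt_pos.mpr hs, (Real.sq_sqrt hs.le).symm⟩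
  have hsq : Real.sqrt (r^2) = r := Real.sqrt_sq hr.le
  have hsqrt : HasDerivAt Real.sqrt (1/(2*r)) (r^2) := by
    simpa [hsq] using Real.hasDerivAt_sqrt hs.ne'
  have hden : HasDerivAt (fun s : ℝ => 2 * Real.sqrt s) (2 * (1/(2*r))) (r^2) :=
    hsqrt.const_mul 2
  have hne : (2 : ℝ) * Real.sqrt (r^2) ≠ 0 := by rw [hsq]; positivity
  have hinv : HasDerivAt (fun s : ℝ => (2 * Real.sqrt s)⁻¹)
      (-(2 * (1/(2*r))) / (2*r)^2) (r^2) := by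
    have h := hden.inv hne
    rw [hsq] at h
    exact h
  have hfrac : HasDerivAt (fun s : ℝ => a / (2 * Real.sqrt s))
      (a * (-(2 * (1/(2*r))) / (2*r)^2)) (r^2) := by
    simpa [div_eq_mul_inv] using hinv.const_mul a
  have hm1 : HasDerivAt (fun s : ℝ => m * Real.sqrt s) (m * (1/(2*r))) (r^2) :=
    hsqrt.const_mul m
  have hp : HasDerivAt (fun s : ℝ => m * Real.sqrt s - a / (2 * Real.sqrt s))
      (m * (1/(2*r)) - a * (-(2 * (1/(2*r))) / (2*r)^2)) (r^2) := hm1.sub hfrac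
  have hq : HasDerivAt (fun s : ℝ => m * Real.sqrt s + a / (2 * Real.sqrt s))
      (m * (1/(2*r)) + a * (-(2 * (1/(2*r))) / (2*r)^2)) (r^2) := hm1.add hfrac
  have hPhip := (gaussPhi_hasDerivAt (m * Real.sqrt (r^2) - a / (2 * Real.sqrt (r^2)))).comp
    (r^2) hp
  have hPhiq := (gaussPhi_hasDerivAt (m * Real.sqrt (r^2) + a / (2 * Real.sqrt (r^2)))).comp
    (r^2) hq
  rw [hsq] at hPhip hPhiq
  have hG : HasDerivAt (fun s : ℝ =>
      Real.exp (-(m*a)) * gaussPhi (m*Real.sqrt s - a/(2*Real.sqrt s))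
        + Real.exp (m*a) * gaussPhi (m*Real.sqrt s + a/(2*Real.sqrt s)))
      (Real.exp (-(m*a)) * (Real.exp (-(m*r - a/(2*r))^2)
          * (m * (1/(2*r)) - a * (-(2 * (1/(2*r))) / (2*r)^2)))
        + Real.exp (m*a) * (Real.exp (-(m*r + a/(2*r))^2)
          * (m * (1/(2*r)) + a * (-(2 * (1/(2*r))) / (2*r)^2)))) (r^2) :=
    (hPhip.const_mul _).add (hPhiq.const_mul _)
  have hval : Real.exp (-(m*a)) * (Real.exp (-(m*r - a/(2*r))^2)
          * (m * (1/(2*r)) - a * (-(2 * (1/(2*r))) / (2*r)^2)))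
        + Real.exp (m*a) * (Real.exp (-(m*r + a/(2*r))^2)
          * (m * (1/(2*r)) + a * (-(2 * (1/(2*r))) / (2*r)^2)))
      = auxD m a (r^2) := by
    rw [auxD, hsq, ← mul_assoc, ← mul_assoc, ← Real.exp_add, ← Real.exp_add]
    rw [show -(m*a) + (-(m*r - a/(2*r))^2) = -a^2/(4*r^2) - r^2*m^2 by field_simp; ring]
    rw [show m*a + (-(m*r + a/(2*r))^2) = -a^2/(4*r^2) - r^2*m^2 by field_simp; ring]
    rw [← mul_add]
    congr 1
    field_simp
    ring
  rw [hval] at hG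
  refine hG.congr_of_eventuallyEq ?_
  filter_upwards [Ioi_mem_nhds hs] with x hx
  rw [auxF, if_pos (show (0:ℝ) < x from hx)]

lemma auxF_continuousOn (m a lam : ℝ) (hm : 0 < m) (ha : 0 ≤ a) (hlam : 0 < lam) :
    ContinuousOn (auxF m a) (Icc 0 lam) := by
  intro s hs
  rcases eq_or_lt_of_le hs.1 with h0 | hpos0
  · subst h0
    have hsub : Icc (0:ℝ) lam ⊆ insert 0 (Ioi 0) := by
      intro x hx
      rcases eq_or_lt_of_le hx.1 with h | h
      · exact Or.inl h.symm
      · exact Or.inr h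
    refine ContinuousWithinAt.mono ?_ hsub
    rw [continuousWithinAt_insert_self]
    have hF0 : auxF m a 0 = (Real.exp (m*a) - Real.exp (-(m*a))) * (Real.sqrt π / 2) := by
      rw [auxF, if_neg (lt_irrefl 0)]
    unfold ContinuousWithinAt
    rw [hF0]
    have hsqrt_t : Tendsto Real.sqrt (𝓝[>] (0:ℝ)) (𝓝[>] 0) := by
      rw [tendsto_nhdsWithin_iff]
      constructor
      · exact (Real.continuous_sqrt.tendsto' 0 0 Real.sqrt_zero).mono_left nhdsWithin_le_nhds
      · filter_upwards [self_mem_nhdsWithin] with x hx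
        exact Real.sqrt_pos.mpr hx
    have hA : Tendsto (fun s : ℝ => m * Real.sqrt s) (𝓝[>] (0:ℝ)) (𝓝 0) := by
      have := (hsqrt_t.mono_right nhdsWithin_le_nhds).const_mul m
      simpa using this
    have main : Tendsto (fun s : ℝ =>
        Real.exp (-(m*a)) * gaussPhi (m*Real.sqrt s - a/(2*Real.sqrt s))
          + Real.exp (m*a) * gaussPhi (m*Real.sqrt s + a/(2*Real.sqrt s)))
        (𝓝[>] (0:ℝ)) (𝓝 ((Real.exp (m*a) - Real.exp (-(m*a))) * (Real.sqrt π / 2))) := by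
      rcases eq_or_lt_of_le ha with rfl | hapos
      · simp only [zero_div, sub_zero, add_zero, mul_zero, neg_zero, Real.exp_zero, one_mul]
        have : Tendsto (fun s : ℝ => gaussPhi (m*Real.sqrt s) + gaussPhi (m*Real.sqrt s))
            (𝓝[>] (0:ℝ)) (𝓝 (gaussPhi 0 + gaussPhi 0)) := by
          have hcont : Tendsto gaussPhi (𝓝 (0:ℝ)) (𝓝 (gaussPhi 0)) :=
            (gaussPhi_hasDerivAt 0).continuousAt
          exact ((hcont.comp hA).add (hcont.comp hA))
        simpa [gaussPhi_zero] using this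
      · have hinv_t : Tendsto (fun s : ℝ => a/(2*Real.sqrt s)) (𝓝[>] (0:ℝ)) atTop := by
          have h1 : Tendsto (fun s : ℝ => (Real.sqrt s)⁻¹) (𝓝[>] (0:ℝ)) atTop :=
            tendsto_inv_nhdsGT_zero.comp hsqrt_t
          have h2 := h1.const_mul_atTop (by positivity : (0:ℝ) < a/2)
          refine h2.congr fun s => ?_
          rw [div_mul_eq_mul_div, mul_comm, ← div_div]
          ring_nf
        have hp_t : Tendsto (fun s : ℝ => m*Real.sqrt s - a/(2*Real.sqrt s))
            (𝓝[>] (0:ℝ)) atBot := by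
          have := hA.add_atBot (tendsto_neg_atTop_atBot.comp hinv_t)
          refine this.congr fun s => ?_
          simp [sub_eq_add_neg, Function.comp]
        have hq_t : Tendsto (fun s : ℝ => m*Real.sqrt s + a/(2*Real.sqrt s))
            (𝓝[>] (0:ℝ)) atTop := hA.add_atTop hinv_t
        have h3 := ((gaussPhi_tendsto_atBot.comp hp_t).const_mul
            (Real.exp (-(m*a)))).add
          ((gaussPhi_tendsto_atTop.comp hq_t).const_mul (Real.exp (m*a)))
        have hvals : Real.exp (-(m*a)) * (-(Real.sqrt π / 2))
            + Real.exp (m*a) * (Real.sqrt π / 2)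
            = (Real.exp (m*a) - Real.exp (-(m*a))) * (Real.sqrt π / 2) := by ring
        rw [hvals] at h3
        exact h3.congr fun s => by simp [Function.comp]
    refine main.congr' ?_
    filter_upwards [self_mem_nhdsWithin] with x hx
    rw [auxF, if_pos (show (0:ℝ) < x from hx)]
  · exact (auxF_hasDerivAt m a hpos0).continuousAt.continuousWithinAt





lemma auxD_intervalIntegrable (m a lam : ℝ) (hm : 0 < m) (hlam : 0 < lam) :
    IntervalIntegrable (auxD m a) volume 0 lam := by
  have hg : IntervalIntegrable (fun s : ℝ => m * s ^ (-(1/2) : ℝ)) volume 0 lam :=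
    (intervalIntegral.intervalIntegrable_rpow' (by norm_num)).const_mul m
  refine hg.mono_fun ?_ ?_
  · have hmeas : Measurable (auxD m a) := by
      apply Measurable.mul
      · exact Real.measurable_exp.comp
          ((measurable_const.div (measurable_id.const_mul 4)).sub
            (measurable_id.mul_const (m^2)))
      · exact measurable_const.div Real.continuous_sqrt.measurable
    exact hmeas.aestronglyMeasurable
  · rw [uIoc_of_le hlam.le]
    filter_upwards [ae_restrict_mem measurableSet_Ioc] with s hs
    have hs0 : 0 < s := hs.1
    have hsq : 0 < Real.sqrt s := Real.sqrt_pos.mpr hs0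
    have hexp : Real.exp (-a^2/(4*s) - s*m^2) ≤ 1 := by
      rw [Real.exp_le_one_iff]
      have h1 : 0 ≤ a^2/(4*s) := by positivity
      have h2 : 0 ≤ s*m^2 := by positivity
      have : -a^2/(4*s) = -(a^2/(4*s)) := by ring
      rw [this]
      linarith
    have hpow : s ^ (-(1/2) : ℝ) = (Real.sqrt s)⁻¹ := by
      rw [Real.rpow_neg hs0.le, ← Real.sqrt_eq_rpow]
    rw [Real.norm_eq_abs, Real.norm_eq_abs, auxD]
    rw [abs_of_nonneg (by positivity), abs_of_nonneg (by positivity)]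
    rw [hpow]
    calc Real.exp (-a^2/(4*s) - s*m^2) * (m / Real.sqrt s)
        ≤ 1 * (m / Real.sqrt s) := by
          apply mul_le_mul_of_nonneg_right hexp (by positivity)
      _ = m * (Real.sqrt s)⁻¹ := by rw [one_mul, div_eq_mul_inv]

lemma keyD (lam m : ℝ) (hlam : 0 < lam) (hm : 0 < m) (a : ℝ) (ha : 0 ≤ a) :
    ∫ s in (0:ℝ)..lam, (4*π*s) ^ (-(1:ℝ)/2) * Real.exp (-a^2/(4*s) - s*m^2)
      = (Real.sqrt (4*π))⁻¹ * m⁻¹ *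
        (Real.exp (-(m*a)) * (Real.sqrt π
            - gaussPsi (m*Real.sqrt lam - a/(2*Real.sqrt lam)))
          - Real.exp (m*a) * gaussPsi (m*Real.sqrt lam + a/(2*Real.sqrt lam))) := by
  have h4pi : (0:ℝ) < 4*π := by positivity
  have hs4pi : 0 < Real.sqrt (4*π) := Real.sqrt_pos.mpr h4pi
  have ftc : ∫ s in (0:ℝ)..lam, auxD m a s = auxF m a lam - auxF m a 0 :=
    intervalIntegral.integral_eq_sub_of_hasDeriv_right_of_le hlam.le
      (auxF_continuousOn m a lam hm ha hlam)
      (fun s hss => (auxF_hasDerivAt m a hss.1).hasDerivWithinAt)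
      (auxD_intervalIntegrable m a lam hm hlam)
  have hcongr : ∫ s in (0:ℝ)..lam, (4*π*s) ^ (-(1:ℝ)/2) * Real.exp (-a^2/(4*s) - s*m^2)
      = ∫ s in (0:ℝ)..lam, (Real.sqrt (4*π))⁻¹ * m⁻¹ * auxD m a s := by
    apply intervalIntegral.integral_congr
    intro s hsmem
    rw [uIcc_of_le hlam.le] at hsmem
    show (4*π*s) ^ (-(1:ℝ)/2) * Real.exp (-a^2/(4*s) - s*m^2)
      = (Real.sqrt (4*π))⁻¹ * m⁻¹ * auxD m a s
    rcases eq_or_lt_of_le hsmem.1 with h0 | hs0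
    · subst h0
      simp [auxD, Real.zero_rpow (by norm_num : -(1:ℝ)/2 ≠ 0)]
    · have hsq : 0 < Real.sqrt s := Real.sqrt_pos.mpr hs0
      have hrw : (4*π*s) ^ (-(1:ℝ)/2) = (Real.sqrt (4*π) * Real.sqrt s)⁻¹ := by
        rw [show (-(1:ℝ)/2) = -(1/2) by norm_num, Real.rpow_neg (by positivity),
          ← Real.sqrt_eq_rpow, Real.sqrt_mul h4pi.le]
      rw [hrw, auxD]
      field_simp
  rw [hcongr, intervalIntegral.integral_const_mul, ftc]
  have hFlam : auxF m a lam = Real.exp (-(m*a)) * gaussPhi (m*Real.sqrt lam - a/(2*Real.sqrt lam))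
      + Real.exp (m*a) * gaussPhi (m*Real.sqrt lam + a/(2*Real.sqrt lam)) := by
    rw [auxF, if_pos hlam]
  have hF0 : auxF m a 0 = (Real.exp (m*a) - Real.exp (-(m*a))) * (Real.sqrt π / 2) := by
    rw [auxF, if_neg (lt_irrefl 0)]
  rw [hFlam, hF0, gaussPsi_eq, gaussPsi_eq]
  ring

/-- The reflection-positivity form of `D_λ` on the `C`-null vector
`f = δ₀ - e^{mt} δ_t` reduces, up to a negative constant, to the function `F`. -/
theorem stmt_3 (lam m : ℝ) (hlam : 0 < lam) (hm : 0 < m) (t : ℝ) (ht : 0 ≤ t)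
    (D : ℝ → ℝ)
    (hD : ∀ t : ℝ, D t =
      ∫ s in (0:ℝ)..lam, (4 * π * s) ^ (-(1:ℝ)/2) * Real.exp (-t ^ 2 / (4 * s) - s * m ^ 2))
    (W : ℝ → ℝ)
    (hW : ∀ t : ℝ, W t = ∫ u : ℝ, Real.exp (-(t - u) ^ 2 / (4 * lam) - m * |u|)) :
    D 0 - 2 * Real.exp (m * t) * D t + Real.exp (2 * m * t) * D (2 * t)
      = -(Real.exp (-lam * m ^ 2) * (4 * π * lam) ^ (-(1:ℝ)/2) * m⁻¹
          * ((1/2) * (W 0 + Real.exp (2 * m * t) * W (2 * t))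
              - Real.exp (m * t) * W t)) := by
  have hsl : 0 < Real.sqrt lam := Real.sqrt_pos.mpr hlam
  have hspi : 0 < Real.sqrt π := Real.sqrt_pos.mpr Real.pi_pos
  have hs4pi : Real.sqrt (4*π) = 2 * Real.sqrt π := by
    rw [show (4:ℝ)*π = 2^2*π by norm_num, Real.sqrt_mul (by norm_num : (0:ℝ) ≤ 2^2),
      Real.sqrt_sq (by norm_num : (0:ℝ) ≤ 2)]
  have key : ∀ b : ℝ, 0 ≤ b → D b = Real.exp (-(m*b)) / (2*m)
      - (Real.exp (m^2*lam))⁻¹ * (Real.sqrt (4*π) * Real.sqrt lam)⁻¹ * m⁻¹ / 2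
        * W b := by
    intro b hb
    rw [hD b, hW b, keyD lam m hlam hm b hb, keyW lam m hlam hm b hb, hs4pi]
    have hE : Real.exp (m^2*lam) ≠ 0 := Real.exp_ne_zero _
    field_simp
    ring
  have hrpow : (4 * π * lam) ^ (-(1:ℝ)/2) = (Real.sqrt (4*π) * Real.sqrt lam)⁻¹ := by
    rw [show (-(1:ℝ)/2) = -(1/2) by norm_num, Real.rpow_neg (by positivity),
      ← Real.sqrt_eq_rpow, Real.sqrt_mul (by positivity)]
  have hexp1 : Real.exp (-lam * m^2) = (Real.exp (m^2*lam))⁻¹ := by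
    rw [show -lam * m^2 = -(m^2*lam) by ring, Real.exp_neg]
  rw [key 0 le_rfl, key t ht, key (2*t) (by linarith), hrpow, hexp1]
  rw [show m*(2*t) = 2*m*t by ring]
  simp only [mul_zero, neg_zero, Real.exp_zero]
  rw [Real.exp_neg (m*t), Real.exp_neg (2*m*t)]
  have h1 : Real.exp (m*t) ≠ 0 := Real.exp_ne_zero _
  have h2 : Real.exp (2*m*t) ≠ 0 := Real.exp_ne_zero _
  have hE : Real.exp (m^2*lam) ≠ 0 := Real.exp_ne_zero _
  field_simp
  ring
end

section
/- For every $\lambda>0$, the function $F_\lambda(t) = \tfrac12\big(W_\lambda(0) + e^{2t}W_\lambda(2t)\big) - e^{t}W_\lambda(t)$ is twice differentiable at $0$ with $F_\lambda''(0) = W_\lambda(0) + W_\lambda''(0) = c_\lambda + \big(1-\tfrac{1}{2\lambda}\big)W_\lambda(0)$; consequently, if $\lambda\geq\tfrac12$ then $F_\lambda''(0)>0$. -/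
open MeasureTheory Real

noncomputable def g (lam t u : ℝ) : ℝ := Real.exp (-(t - u) ^ 2 / (4 * lam) - |u|)
noncomputable def g1 (lam t u : ℝ) : ℝ := ((u - t) / (2 * lam)) * g lam t u
noncomputable def g2 (lam t u : ℝ) : ℝ :=
  ((u - t) ^ 2 / (4 * lam ^ 2) - 1 / (2 * lam)) * g lam t u

lemma g_pos (lam t u : ℝ) : 0 < g lam t u := Real.exp_pos _

lemma cont_g (lam t : ℝ) : Continuous (fun u => g lam t u) := by unfold g; fun_prop
lemma cont_g1 (lam t : ℝ) : Continuous (fun u => g1 lam t u) := by unfold g1 g; fun_prop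
lemma cont_g2 (lam t : ℝ) : Continuous (fun u => g2 lam t u) := by unfold g2 g; fun_prop

lemma hasDerivAt_g (lam : ℝ) (hlam : 0 < lam) (t u : ℝ) :
    HasDerivAt (fun t => g lam t u) (g1 lam t u) t := by
  have h1 : HasDerivAt (fun t : ℝ => t - u) 1 t := (hasDerivAt_id t).sub_const u
  have h2 := (((h1.fun_pow 2).fun_neg.div_const (4 * lam)).sub_const |u|).exp
  refine h2.congr_deriv ?_
  unfold g1 g
  field_simp
  ring

lemma hasDerivAt_g1 (lam : ℝ) (hlam : 0 < lam) (t u : ℝ) :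
    HasDerivAt (fun t => g1 lam t u) (g2 lam t u) t := by
  have h0 : HasDerivAt (fun t : ℝ => (u - t) / (2 * lam)) (-1 / (2 * lam)) t := by
    have := ((hasDerivAt_id' (x := t)).const_sub u).div_const (2 * lam)
    convert this using 1
  have h := h0.fun_mul (hasDerivAt_g lam hlam t u)
  refine h.congr_deriv ?_
  unfold g2 g1
  field_simp
  ring


lemma g_le (lam : ℝ) (hlam : 0 < lam) (t u : ℝ) : g lam t u ≤ Real.exp (-|u|) := by
  apply Real.exp_le_exp.2
  have h : 0 ≤ (t - u) ^ 2 / (4 * lam) := by positivity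
  have e : -(t - u) ^ 2 / (4 * lam) = -((t - u) ^ 2 / (4 * lam)) := by ring
  linarith [e]

-- integrability of exp(-(|u|/2))
lemma integrable_exp_half : Integrable (fun u : ℝ => Real.exp (-(|u| / 2))) := by
  have hIci : IntegrableOn (fun u : ℝ => Real.exp (-(|u| / 2))) (Set.Ici 0) := by
    rw [integrableOn_Ici_iff_integrableOn_Ioi]
    refine ((exp_neg_integrableOn_Ioi 0 (by norm_num : (0:ℝ) < 1/2))).congr_fun
      (fun x hx => ?_) measurableSet_Ioi
    rw [abs_of_pos hx]
    ring_nf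
  have hIic : IntegrableOn (fun u : ℝ => Real.exp (-(|u| / 2))) (Set.Iic 0) := by
    have := (Measure.measurePreserving_neg (volume : Measure ℝ)).integrableOn_comp_preimage
      (Homeomorph.neg ℝ).measurableEmbedding (s := Set.Ici 0)
      (f := fun u : ℝ => Real.exp (-(|u| / 2)))
    have hs : (Neg.neg ⁻¹' Set.Ici (0:ℝ)) = Set.Iic 0 := by ext x; simp
    have hcomp : ((fun u : ℝ => Real.exp (-(|u| / 2))) ∘ Neg.neg)
        = fun u : ℝ => Real.exp (-(|u| / 2)) := by
      funext x; simp [Function.comp]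
    rw [hcomp, hs] at this
    exact this.mpr hIci
  have : Set.Iic (0:ℝ) ∪ Set.Ici 0 = Set.univ := Set.Iic_union_Ici
  rw [← integrableOn_univ, ← this, integrableOn_union]
  exact ⟨hIic, hIci⟩

lemma integrable_of_le_exp {f : ℝ → ℝ} (hf : Continuous f) (C : ℝ)
    (h : ∀ u, ‖f u‖ ≤ C * Real.exp (-(|u| / 2))) : Integrable f :=
  (integrable_exp_half.const_mul C).mono' hf.aestronglyMeasurable
    (Filter.Eventually.of_forall h)

lemma sq_le_exp {x : ℝ} (hx : 0 ≤ x) : x ^ 2 ≤ 2 * Real.exp x := by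
  nlinarith [Real.quadratic_le_exp_of_nonneg hx, Real.exp_pos x]

lemma lin_le_exp (x : ℝ) : x ≤ Real.exp x := by
  nlinarith [Real.add_one_le_exp x]

lemma g1_bound (lam : ℝ) (hlam : 0 < lam) {R t : ℝ} (hR : 0 ≤ R) (ht : |t| ≤ R) (u : ℝ) :
    ‖g1 lam t u‖ ≤ ((R + |u|) / (2 * lam)) * Real.exp (-|u|) := by
  have h1 : |u - t| ≤ R + |u| := by
    have := abs_sub u t
    linarith
  have h2 := g_le lam hlam t u
  have h3 := (g_pos lam t u).le
  rw [Real.norm_eq_abs]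
  unfold g1
  rw [abs_mul, abs_div, abs_of_nonneg h3, abs_of_pos (by positivity : (0:ℝ) < 2 * lam)]
  have hy : 0 ≤ R + |u| := by
    have := abs_nonneg u
    linarith
  gcongr

lemma g2_bound (lam : ℝ) (hlam : 0 < lam) {R t : ℝ} (hR : 0 ≤ R) (ht : |t| ≤ R) (u : ℝ) :
    ‖g2 lam t u‖ ≤ ((R + |u|) ^ 2 / (4 * lam ^ 2) + 1 / (2 * lam)) * Real.exp (-|u|) := by
  have h1 : |u - t| ≤ R + |u| := by
    have := abs_sub u t
    linarith
  have hsq : (u - t) ^ 2 ≤ (R + |u|) ^ 2 := by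
    rw [← sq_abs (u - t)]
    gcongr
  have h2 := g_le lam hlam t u
  have h3 := (g_pos lam t u).le
  rw [Real.norm_eq_abs]
  unfold g2
  rw [abs_mul, abs_of_nonneg h3]
  have h4 : |(u - t) ^ 2 / (4 * lam ^ 2) - 1 / (2 * lam)|
      ≤ (R + |u|) ^ 2 / (4 * lam ^ 2) + 1 / (2 * lam) := by
    rw [abs_sub_le_iff]
    constructor
    · have : (u - t) ^ 2 / (4 * lam ^ 2) ≤ (R + |u|) ^ 2 / (4 * lam ^ 2) := by gcongr
      have h5 : 0 < 1 / (2 * lam) := by positivity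
      linarith
    · have : 0 ≤ (u - t) ^ 2 / (4 * lam ^ 2) := by positivity
      have h5 : 0 ≤ (R + |u|) ^ 2 / (4 * lam ^ 2) := by positivity
      linarith
  calc |(u - t) ^ 2 / (4 * lam ^ 2) - 1 / (2 * lam)| * g lam t u
      ≤ ((R + |u|) ^ 2 / (4 * lam ^ 2) + 1 / (2 * lam)) * Real.exp (-|u|) := by
        gcongr

lemma exp_neg_le (u : ℝ) : Real.exp (-|u|) ≤ Real.exp (-(|u| / 2)) := by
  apply Real.exp_le_exp.2
  have := abs_nonneg u
  linarith

lemma integrable_g (lam : ℝ) (hlam : 0 < lam) (t : ℝ) : Integrable (fun u => g lam t u) := by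
  refine integrable_of_le_exp (cont_g lam t) 1 (fun u => ?_)
  rw [Real.norm_eq_abs, abs_of_nonneg (g_pos lam t u).le, one_mul]
  exact (g_le lam hlam t u).trans (exp_neg_le u)

lemma bound1_integrable (lam : ℝ) (hlam : 0 < lam) (R : ℝ) (hR : 0 ≤ R) :
    Integrable (fun u : ℝ => ((R + |u|) / (2 * lam)) * Real.exp (-|u|)) := by
  refine integrable_of_le_exp (by fun_prop) (Real.exp (R / 2) / lam) (fun u => ?_)
  have hy : 0 ≤ R + |u| := by positivity
  have h1 : R + |u| ≤ 2 * Real.exp ((R + |u|) / 2) := by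
    have := lin_le_exp ((R + |u|) / 2)
    linarith
  have h2 : Real.exp ((R + |u|) / 2) = Real.exp (R / 2) * Real.exp (|u| / 2) := by
    rw [← Real.exp_add]; ring_nf
  have h3 : Real.exp (-|u|) = Real.exp (-(|u| / 2)) * Real.exp (-(|u| / 2)) := by
    rw [← Real.exp_add]; ring_nf
  rw [Real.norm_eq_abs, abs_of_nonneg (by positivity)]
  have h5 : Real.exp (|u| / 2) * Real.exp (-|u|) = Real.exp (-(|u| / 2)) := by
    rw [← Real.exp_add]; ring_nf
  calc (R + |u|) / (2 * lam) * Real.exp (-|u|)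
      ≤ (2 * (Real.exp (R / 2) * Real.exp (|u| / 2))) / (2 * lam) * Real.exp (-|u|) := by
        have h6 : R + |u| ≤ 2 * (Real.exp (R / 2) * Real.exp (|u| / 2)) := by
          rw [← h2]; exact h1
        gcongr
    _ = (Real.exp (R / 2) / lam) * (Real.exp (|u| / 2) * Real.exp (-|u|)) := by ring
    _ = (Real.exp (R / 2) / lam) * Real.exp (-(|u| / 2)) := by rw [h5]

lemma bound2_integrable (lam : ℝ) (hlam : 0 < lam) (R : ℝ) (hR : 0 ≤ R) :
    Integrable (fun u : ℝ =>
      ((R + |u|) ^ 2 / (4 * lam ^ 2) + 1 / (2 * lam)) * Real.exp (-|u|)) := by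
  refine integrable_of_le_exp (by fun_prop)
    (2 * Real.exp (R / 2) / lam ^ 2 + 1 / (2 * lam)) (fun u => ?_)
  have hy : 0 ≤ R + |u| := by positivity
  have h1 : ((R + |u|) / 2) ^ 2 ≤ 2 * Real.exp ((R + |u|) / 2) := sq_le_exp (by positivity)
  have h2 : Real.exp ((R + |u|) / 2) = Real.exp (R / 2) * Real.exp (|u| / 2) := by
    rw [← Real.exp_add]; ring_nf
  have h1' : (R + |u|) ^ 2 ≤ 8 * (Real.exp (R / 2) * Real.exp (|u| / 2)) := by
    rw [← h2]; nlinarith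
  have h5 : Real.exp (|u| / 2) * Real.exp (-|u|) = Real.exp (-(|u| / 2)) := by
    rw [← Real.exp_add]; ring_nf
  have h6 : Real.exp (-|u|) ≤ Real.exp (-(|u| / 2)) := exp_neg_le u
  rw [Real.norm_eq_abs, abs_of_nonneg (by positivity)]
  have hexp : (0:ℝ) < Real.exp (-|u|) := Real.exp_pos _
  calc ((R + |u|) ^ 2 / (4 * lam ^ 2) + 1 / (2 * lam)) * Real.exp (-|u|)
      = (R + |u|) ^ 2 / (4 * lam ^ 2) * Real.exp (-|u|) + 1 / (2 * lam) * Real.exp (-|u|) := by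
        ring
    _ ≤ (8 * (Real.exp (R / 2) * Real.exp (|u| / 2))) / (4 * lam ^ 2) * Real.exp (-|u|)
        + 1 / (2 * lam) * Real.exp (-(|u| / 2)) := by gcongr
    _ = (2 * Real.exp (R / 2) / lam ^ 2) * (Real.exp (|u| / 2) * Real.exp (-|u|))
        + 1 / (2 * lam) * Real.exp (-(|u| / 2)) := by ring
    _ = (2 * Real.exp (R / 2) / lam ^ 2 + 1 / (2 * lam)) * Real.exp (-(|u| / 2)) := by
        rw [h5]; ring

lemma abs_le_of_ball {x₀ t : ℝ} (ht : t ∈ Metric.ball x₀ 1) : |t| ≤ |x₀| + 1 := by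
  rw [Metric.mem_ball, Real.dist_eq] at ht
  have := abs_sub_abs_le_abs_sub t x₀
  linarith

lemma W_aux (lam : ℝ) (hlam : 0 < lam) (x₀ : ℝ) :
    Integrable (fun u => g1 lam x₀ u) ∧
      HasDerivAt (fun t => ∫ u, g lam t u) (∫ u, g1 lam x₀ u) x₀ := by
  have hR : (0:ℝ) ≤ |x₀| + 1 := by positivity
  refine hasDerivAt_integral_of_dominated_loc_of_deriv_le (Metric.ball_mem_nhds x₀ one_pos)
    (Filter.Eventually.of_forall fun t => (cont_g lam t).aestronglyMeasurable)
    (integrable_g lam hlam x₀)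
    ((cont_g1 lam x₀).aestronglyMeasurable)
    (Filter.Eventually.of_forall fun u t ht => g1_bound lam hlam hR (abs_le_of_ball ht) u)
    (bound1_integrable lam hlam (|x₀| + 1) hR)
    (Filter.Eventually.of_forall fun u t _ => hasDerivAt_g lam hlam t u)

lemma W1_aux (lam : ℝ) (hlam : 0 < lam) (x₀ : ℝ) :
    Integrable (fun u => g2 lam x₀ u) ∧
      HasDerivAt (fun t => ∫ u, g1 lam t u) (∫ u, g2 lam x₀ u) x₀ := by
  have hR : (0:ℝ) ≤ |x₀| + 1 := by positivity
  refine hasDerivAt_integral_of_dominated_loc_of_deriv_le (Metric.ball_mem_nhds x₀ one_pos)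
    (Filter.Eventually.of_forall fun t => (cont_g1 lam t).aestronglyMeasurable)
    ((W_aux lam hlam x₀).1)
    ((cont_g2 lam x₀).aestronglyMeasurable)
    (Filter.Eventually.of_forall fun u t ht => g2_bound lam hlam hR (abs_le_of_ball ht) u)
    (bound2_integrable lam hlam (|x₀| + 1) hR)
    (Filter.Eventually.of_forall fun u t _ => hasDerivAt_g1 lam hlam t u)

lemma hV0 (lam : ℝ) (hlam : 0 < lam) : (∫ u, g1 lam 0 u) = 0 := by
  have h2 : ∀ u : ℝ, g1 lam 0 (-u) = - g1 lam 0 u := by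
    intro u
    unfold g1 g
    rw [abs_neg, show (0 - -u : ℝ) ^ 2 = (0 - u) ^ 2 by ring]
    ring
  have h1 : (∫ u : ℝ, g1 lam 0 (-u)) = ∫ u, g1 lam 0 u := integral_neg_eq_self _ _
  have h3 : (∫ u : ℝ, g1 lam 0 (-u)) = - ∫ u, g1 lam 0 u := by
    simp_rw [h2]
    exact integral_neg _
  linarith [h1.symm.trans h3]

lemma ic_int (lam : ℝ) (hlam : 0 < lam) :
    Integrable (fun u : ℝ => u ^ 2 * Real.exp (-u ^ 2 / (4 * lam) - |u|)) := by
  refine integrable_of_le_exp (by fun_prop) 8 (fun u => ?_)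
  have h1 : u ^ 2 ≤ 8 * Real.exp (|u| / 2) := by
    have := sq_le_exp (x := |u| / 2) (by positivity)
    nlinarith [sq_abs u]
  have h2 : Real.exp (-u ^ 2 / (4 * lam) - |u|) ≤ Real.exp (-|u|) := by
    apply Real.exp_le_exp.2
    have h : 0 ≤ u ^ 2 / (4 * lam) := by positivity
    have e : -u ^ 2 / (4 * lam) = -(u ^ 2 / (4 * lam)) := by ring
    linarith [e]
  have h5 : Real.exp (|u| / 2) * Real.exp (-|u|) = Real.exp (-(|u| / 2)) := by
    rw [← Real.exp_add]; ring_nf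
  rw [Real.norm_eq_abs, abs_of_nonneg (by positivity)]
  calc u ^ 2 * Real.exp (-u ^ 2 / (4 * lam) - |u|)
      ≤ (8 * Real.exp (|u| / 2)) * Real.exp (-|u|) := by
        apply mul_le_mul h1 h2 (Real.exp_pos _).le (by positivity)
    _ = 8 * Real.exp (-(|u| / 2)) := by rw [mul_assoc, h5]

lemma ic_pos (lam : ℝ) (hlam : 0 < lam) :
    0 < ∫ u : ℝ, u ^ 2 * Real.exp (-u ^ 2 / (4 * lam) - |u|) := by
  rw [integral_pos_iff_support_of_nonneg (fun u => by positivity) (ic_int lam hlam)]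
  have hsub : Set.Ioo (0:ℝ) 1 ⊆
      Function.support (fun u : ℝ => u ^ 2 * Real.exp (-u ^ 2 / (4 * lam) - |u|)) := by
    intro x hx
    exact (mul_pos (pow_pos hx.1 2) (Real.exp_pos _)).ne'
  calc (0:ENNReal) < volume (Set.Ioo (0:ℝ) 1) := by rw [Real.volume_Ioo]; norm_num
    _ ≤ _ := measure_mono hsub


/-- `F_λ` is twice differentiable at `0` with
`F_λ''(0) = W_λ(0) + W_λ''(0) = c_λ + (1 - 1/(2λ)) W_λ(0)`; consequently,
if `λ ≥ 1/2` then `F_λ''(0) > 0`. -/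
theorem stmt_8 (lam : ℝ) (hlam : 0 < lam)
    (W : ℝ → ℝ)
    (hW : ∀ t : ℝ, W t = ∫ u : ℝ, Real.exp (-(t - u) ^ 2 / (4 * lam) - |u|))
    (c : ℝ)
    (hc : c = (1 / (4 * lam ^ 2)) * ∫ u : ℝ, u ^ 2 * Real.exp (-u ^ 2 / (4 * lam) - |u|))
    (F : ℝ → ℝ)
    (hF : ∀ t : ℝ, F t
      = (1/2) * (W 0 + Real.exp (2 * t) * W (2 * t)) - Real.exp t * W t) :
    DifferentiableAt ℝ F 0 ∧ DifferentiableAt ℝ (deriv F) 0 ∧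
      deriv (deriv F) 0 = W 0 + deriv (deriv W) 0 ∧
      deriv (deriv F) 0 = c + (1 - 1 / (2 * lam)) * W 0 ∧
      (1/2 ≤ lam → 0 < deriv (deriv F) 0) := by
  have hWfun : W = fun t => ∫ u, g lam t u := funext fun t => hW t
  have hFfun : F = fun t =>
      (1/2) * (W 0 + Real.exp (2 * t) * W (2 * t)) - Real.exp t * W t := funext hF
  set V : ℝ → ℝ := fun t => ∫ u, g1 lam t u with hVdef
  set V2 : ℝ → ℝ := fun t => ∫ u, g2 lam t u with hV2def
  have hWd : ∀ t, HasDerivAt W (V t) t := fun t => by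
    rw [hWfun]; exact (W_aux lam hlam t).2
  have hVd : ∀ t, HasDerivAt V (V2 t) t := fun t => (W1_aux lam hlam t).2
  have hFd : ∀ t : ℝ, HasDerivAt F
      (Real.exp (2*t) * (W (2*t) + V (2*t)) - Real.exp t * (W t + V t)) t := by
    intro t
    rw [hFfun]
    have h2t : HasDerivAt (fun s : ℝ => 2 * s) 2 t := by
      simpa using (hasDerivAt_id t).const_mul 2
    have hW2 : HasDerivAt (fun s : ℝ => W (2*s)) (V (2*t) * 2) t := (hWd (2*t)).comp t h2t
    have hE2 : HasDerivAt (fun s : ℝ => Real.exp (2*s)) (Real.exp (2*t) * 2) t := h2t.exp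
    have hp2 := hE2.fun_mul hW2
    have hp1 := (Real.hasDerivAt_exp t).fun_mul (hWd t)
    have h := (((hasDerivAt_const t (W 0)).fun_add hp2).const_mul (1/2 : ℝ)).fun_sub hp1
    refine h.congr_deriv ?_
    ring
  have hdF : deriv F = fun t =>
      Real.exp (2*t) * (W (2*t) + V (2*t)) - Real.exp t * (W t + V t) :=
    funext fun t => (hFd t).deriv
  have hGd : HasDerivAt (fun t =>
      Real.exp (2*t) * (W (2*t) + V (2*t)) - Real.exp t * (W t + V t))
      (W 0 + 2 * V 0 + V2 0) 0 := by
    have h2t : HasDerivAt (fun s : ℝ => 2 * s) 2 (0:ℝ) := by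
      simpa using (hasDerivAt_id (0:ℝ)).const_mul 2
    have hWV2 : HasDerivAt (fun s : ℝ => W (2*s) + V (2*s)) ((V (2*0) + V2 (2*0)) * 2) 0 :=
      ((hWd (2*0)).add (hVd (2*0))).comp 0 h2t
    have hE2 : HasDerivAt (fun s : ℝ => Real.exp (2*s)) (Real.exp (2*0) * 2) (0:ℝ) := h2t.exp
    have hp2 := hE2.fun_mul hWV2
    have hp1 := (Real.hasDerivAt_exp 0).fun_mul ((hWd 0).fun_add (hVd 0))
    have h := hp2.fun_sub hp1
    refine h.congr_deriv ?_ <;> norm_num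
    ring
  have hD2 : deriv (deriv F) 0 = W 0 + 2 * V 0 + V2 0 := by rw [hdF]; exact hGd.deriv
  have hv0 : V 0 = 0 := hV0 lam hlam
  have hdW : deriv W = V := funext fun t => (hWd t).deriv
  have hddW : deriv (deriv W) 0 = V2 0 := by rw [hdW]; exact (hVd 0).deriv
  -- value of V2 0
  have e1 : ∀ u : ℝ, g2 lam 0 u
      = (1/(4*lam^2)) * (u ^ 2 * Real.exp (-u ^ 2 / (4 * lam) - |u|))
        - (1/(2*lam)) * g lam 0 u := by
    intro u
    unfold g2 g
    rw [show ((0:ℝ) - u) ^ 2 = u ^ 2 by ring]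
    ring
  have hsplit : V2 0 = c - (1/(2*lam)) * W 0 := by
    have i1 : Integrable (fun u : ℝ =>
        (1/(4*lam^2)) * (u ^ 2 * Real.exp (-u ^ 2 / (4 * lam) - |u|))) :=
      (ic_int lam hlam).const_mul _
    have i2 : Integrable (fun u : ℝ => (1/(2*lam)) * g lam 0 u) :=
      (integrable_g lam hlam 0).const_mul _
    have : V2 0 = ∫ u, ((1/(4*lam^2)) * (u ^ 2 * Real.exp (-u ^ 2 / (4 * lam) - |u|))
        - (1/(2*lam)) * g lam 0 u) := by
      simp only [hV2def]
      congr 1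
      funext u
      exact e1 u
    rw [this, integral_sub i1 i2, MeasureTheory.integral_const_mul, MeasureTheory.integral_const_mul, hc, hWfun]
  have hW0 : 0 ≤ W 0 := by
    rw [hWfun]
    exact integral_nonneg fun u => (g_pos lam 0 u).le
  have hcpos : 0 < c := by
    rw [hc]
    exact mul_pos (by positivity) (ic_pos lam hlam)
  refine ⟨(hFd 0).differentiableAt, ?_, ?_, ?_, ?_⟩
  · rw [hdF]; exact hGd.differentiableAt
  · rw [hD2, hddW, hv0]; ring
  · rw [hD2, hv0, hsplit]; ring
  · intro hhalf
    rw [hD2, hv0, hsplit]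
    have h1 : 1/(2*lam) ≤ 1 := by
      rw [div_le_one (by linarith)]
      linarith
    have h2 := mul_le_mul_of_nonneg_right h1 hW0
    rw [one_mul] at h2
    linarith
end

section
/- For every $\lambda\geq \tfrac12$ there exists $t>0$ such that $\tfrac12\big(W_\lambda(0)+e^{2t}W_\lambda(2t)\big) > e^{t}W_\lambda(t)$, where $W_\lambda(t)=\int_{\mathbb{R}} e^{-(t-u)^2/(4\lambda)-|u|}\,du$. -/
open MeasureTheory Real

set_option maxHeartbeats 1000000

namespace Stmt9Aux

lemma int_exp_lin (c d : ℝ) (hc : c ≠ 0) (a b : ℝ) :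
    ∫ x in a..b, Real.exp (c * x + d)
      = (Real.exp (c * b + d) - Real.exp (c * a + d)) / c := by
  have h : ∀ x ∈ Set.uIcc a b,
      HasDerivAt (fun y => Real.exp (c * y + d) / c) (Real.exp (c * x + d)) x := by
    intro x _
    have h1 : HasDerivAt (fun y : ℝ => c * y + d) c x := by
      simpa using ((hasDerivAt_id x).const_mul c).add_const d
    have h2 := h1.exp.div_const c
    have h3 : Real.exp (c * x + d) * c / c = Real.exp (c * x + d) := by
      field_simp
    rwa [h3] at h2
  rw [intervalIntegral.integral_eq_sub_of_hasDerivAt h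
    ((Real.continuous_exp.comp ((continuous_const.mul continuous_id).add
      continuous_const)).intervalIntegrable a b)]
  ring

lemma int_exp_neg (a b : ℝ) :
    ∫ x in a..b, Real.exp (-x) = Real.exp (-a) - Real.exp (-b) := by
  have h := int_exp_lin (-1) 0 (by norm_num) a b
  have e : ∀ x : ℝ, (-1 : ℝ) * x + 0 = -x := fun x => by ring
  simp_rw [e] at h
  rw [h]
  ring

lemma cont_g (lam s : ℝ) :
    Continuous (fun v : ℝ => Real.exp (-v ^ 2 / (4 * lam) + (s - |v + s|))) :=
  Real.continuous_exp.comp ((((continuous_pow 2).neg).div_const _).add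
    (continuous_const.sub ((continuous_id.add continuous_const).abs)))

lemma cont_expneg : Continuous (fun v : ℝ => Real.exp (-v)) :=
  Real.continuous_exp.comp continuous_neg

lemma cont_explin (c d : ℝ) : Continuous (fun v : ℝ => Real.exp (c * v + d)) :=
  Real.continuous_exp.comp ((continuous_const.mul continuous_id).add continuous_const)

lemma integrable_g (lam : ℝ) (hlam0 : 0 < lam) (s : ℝ) :
    Integrable (fun v : ℝ => Real.exp (-v ^ 2 / (4 * lam) + (s - |v + s|))) := by
  have hb : 0 < 1 / (4 * lam) := by positivity
  have hg : Integrable (fun v : ℝ => Real.exp s * Real.exp (-(1 / (4 * lam)) * v ^ 2)) :=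
    (integrable_exp_neg_mul_sq hb).const_mul _
  refine hg.mono' ?_ ?_
  · exact (cont_g lam s).aestronglyMeasurable
  · filter_upwards with v
    rw [Real.norm_eq_abs, Real.abs_exp, ← Real.exp_add]
    apply Real.exp_le_exp.2
    have h1 : 0 ≤ |v + s| := abs_nonneg _
    have h2 : -v ^ 2 / (4 * lam) = -(1 / (4 * lam)) * v ^ 2 := by ring
    rw [h2]
    linarith

lemma shift (lam s : ℝ) :
    Real.exp s * ∫ u : ℝ, Real.exp (-(s - u) ^ 2 / (4 * lam) - |u|)
      = ∫ v : ℝ, Real.exp (-v ^ 2 / (4 * lam) + (s - |v + s|)) := by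
  rw [← integral_const_mul]
  have h1 : ∀ u : ℝ, Real.exp s * Real.exp (-(s - u) ^ 2 / (4 * lam) - |u|)
      = Real.exp (s + (-(s - u) ^ 2 / (4 * lam) - |u|)) := fun u => (Real.exp_add _ _).symm
  simp_rw [h1]
  rw [← integral_add_right_eq_self
    (fun u : ℝ => Real.exp (s + (-(s - u) ^ 2 / (4 * lam) - |u|))) s]
  congr 1
  funext v
  congr 1
  have h2 : s - (v + s) = -v := by ring
  rw [h2]
  ring

lemma exp_pow_bounds (r : ℝ) (n : ℕ) (E lo hi : ℝ)
    (hE : Real.exp r ^ n = E) (hElo : lo ^ n < E) (hEhi : E < hi ^ n)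
    (hhi : 0 ≤ hi) : lo < Real.exp r ∧ Real.exp r < hi := by
  constructor
  · refine lt_of_pow_lt_pow_left₀ n (Real.exp_pos r).le ?_
    rw [hE]; exact hElo
  · refine lt_of_pow_lt_pow_left₀ n hhi ?_
    rw [hE]; exact hEhi

lemma inv_bnd {E lo hi lo' hi' : ℝ} (h1 : lo < E) (h2 : E < hi) (hlo : 0 < lo)
    (hl : lo' * hi < 1) (hh : 1 < hi' * lo) : lo' < E⁻¹ ∧ E⁻¹ < hi' := by
  have hE : 0 < E := hlo.trans h1
  have hEi : 0 < E⁻¹ := inv_pos.2 hE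
  have hprod : E * E⁻¹ = 1 := mul_inv_cancel₀ hE.ne'
  have hhi : 0 < hi := lt_trans hE h2
  constructor
  · nlinarith [mul_pos hEi (sub_pos.2 h2)]
  · nlinarith [mul_pos hEi (sub_pos.2 h1)]

lemma final_num :
    0 < (Real.exp (2/5) - 1) ^ 2
          * ((Real.exp (-(3/2) : ℝ) - Real.exp (-4 : ℝ)) / (5/2))
        + (Real.exp (2/5) - 1) ^ 2
          * ((Real.exp (-(12/25) : ℝ) - Real.exp (-(3/2) : ℝ)) / (17/10))
        + ((1 - (1 + Real.exp (-(2/25) : ℝ)) * Real.exp (2/5))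
            * (Real.exp (-(1/5) : ℝ) - Real.exp (-(2/5) : ℝ))
          + Real.exp (-(2/25) : ℝ) * (Real.exp (2/5) - Real.exp (1/5)))
        + (2 - Real.exp (-(1/5) : ℝ) - Real.exp (1/5)) := by
  have h1lo := Real.exp_one_gt_d9
  have h1hi := Real.exp_one_lt_d9
  have hpos := Real.exp_pos (1 : ℝ)
  -- powers of e
  have he2 : Real.exp 1 ^ (2:ℕ) = Real.exp 2 := by
    rw [← Real.exp_nat_mul]; norm_num
  have he3 : Real.exp 1 ^ (3:ℕ) = Real.exp 3 := by
    rw [← Real.exp_nat_mul]; norm_num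
  have he4 : Real.exp 1 ^ (4:ℕ) = Real.exp 4 := by
    rw [← Real.exp_nat_mul]; norm_num
  have he12 : Real.exp 1 ^ (12:ℕ) = Real.exp 12 := by
    rw [← Real.exp_nat_mul]; norm_num
  have he2lo : (7.3890560978 : ℝ) < Real.exp 2 := by
    rw [← he2]
    calc (7.3890560978 : ℝ) < 2.7182818283 ^ (2:ℕ) := by norm_num
    _ < Real.exp 1 ^ (2:ℕ) := by
        exact pow_lt_pow_left₀ h1lo (by norm_num) (by norm_num)
  have he2hi : Real.exp 2 < (7.3890560998 : ℝ) := by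
    rw [← he2]
    calc Real.exp 1 ^ (2:ℕ) < 2.7182818286 ^ (2:ℕ) :=
          pow_lt_pow_left₀ h1hi hpos.le (by norm_num)
    _ < (7.3890560998 : ℝ) := by norm_num
  have he3lo : (20.0855369 : ℝ) < Real.exp 3 := by
    rw [← he3]
    calc (20.0855369 : ℝ) < 2.7182818283 ^ (3:ℕ) := by norm_num
    _ < Real.exp 1 ^ (3:ℕ) := pow_lt_pow_left₀ h1lo (by norm_num) (by norm_num)
  have he3hi : Real.exp 3 < (20.0855370 : ℝ) := by
    rw [← he3]
    calc Real.exp 1 ^ (3:ℕ) < 2.7182818286 ^ (3:ℕ) :=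
          pow_lt_pow_left₀ h1hi hpos.le (by norm_num)
    _ < (20.0855370 : ℝ) := by norm_num
  have he4lo : (54.598150 : ℝ) < Real.exp 4 := by
    rw [← he4]
    calc (54.598150 : ℝ) < 2.7182818283 ^ (4:ℕ) := by norm_num
    _ < Real.exp 1 ^ (4:ℕ) := pow_lt_pow_left₀ h1lo (by norm_num) (by norm_num)
  have he4hi : Real.exp 4 < (54.5981501 : ℝ) := by
    rw [← he4]
    calc Real.exp 1 ^ (4:ℕ) < 2.7182818286 ^ (4:ℕ) :=
          pow_lt_pow_left₀ h1hi hpos.le (by norm_num)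
    _ < (54.5981501 : ℝ) := by norm_num
  have he12lo : (162754.7912 : ℝ) < Real.exp 12 := by
    rw [← he12]
    calc (162754.7912 : ℝ) < 2.7182818283 ^ (12:ℕ) := by norm_num
    _ < Real.exp 1 ^ (12:ℕ) := pow_lt_pow_left₀ h1lo (by norm_num) (by norm_num)
  have he12hi : Real.exp 12 < (162754.7916 : ℝ) := by
    rw [← he12]
    calc Real.exp 1 ^ (12:ℕ) < 2.7182818286 ^ (12:ℕ) :=
          pow_lt_pow_left₀ h1hi hpos.le (by norm_num)
    _ < (162754.7916 : ℝ) := by norm_num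
  -- fractional exponents
  have hx : (1.2214027 : ℝ) < Real.exp (1/5) ∧ Real.exp (1/5) < 1.2214028 := by
    refine exp_pow_bounds (1/5) 5 (Real.exp 1) _ _ ?_ ?_ ?_ (by norm_num)
    · rw [← Real.exp_nat_mul]; norm_num
    · calc ((1.2214027 : ℝ)) ^ (5:ℕ) < 2.7182818283 := by norm_num
      _ < Real.exp 1 := h1lo
    · calc Real.exp 1 < 2.7182818286 := h1hi
      _ < (1.2214028 : ℝ) ^ (5:ℕ) := by norm_num
  have hx2 : (1.4918246 : ℝ) < Real.exp (2/5) ∧ Real.exp (2/5) < 1.4918248 := by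
    refine exp_pow_bounds (2/5) 5 (Real.exp 2) _ _ ?_ ?_ ?_ (by norm_num)
    · rw [← Real.exp_nat_mul]; norm_num
    · calc ((1.4918246 : ℝ)) ^ (5:ℕ) < 7.3890560978 := by norm_num
      _ < Real.exp 2 := he2lo
    · calc Real.exp 2 < 7.3890560998 := he2hi
      _ < (1.4918248 : ℝ) ^ (5:ℕ) := by norm_num
  have h32 : (4.4816890 : ℝ) < Real.exp (3/2) ∧ Real.exp (3/2) < 4.4816891 := by
    refine exp_pow_bounds (3/2) 2 (Real.exp 3) _ _ ?_ ?_ ?_ (by norm_num)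
    · rw [← Real.exp_nat_mul]; norm_num
    · calc ((4.4816890 : ℝ)) ^ (2:ℕ) < 20.0855369 := by norm_num
      _ < Real.exp 3 := he3lo
    · calc Real.exp 3 < 20.0855370 := he3hi
      _ < (4.4816891 : ℝ) ^ (2:ℕ) := by norm_num
  have h225 : (1.08328706 : ℝ) < Real.exp (2/25) ∧ Real.exp (2/25) < 1.08328707 := by
    refine exp_pow_bounds (2/25) 25 (Real.exp 2) _ _ ?_ ?_ ?_ (by norm_num)
    · rw [← Real.exp_nat_mul]; norm_num
    · calc ((1.08328706 : ℝ)) ^ (25:ℕ) < 7.3890560978 := by norm_num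
      _ < Real.exp 2 := he2lo
    · calc Real.exp 2 < 7.3890560998 := he2hi
      _ < (1.08328707 : ℝ) ^ (25:ℕ) := by norm_num
  have h1225 : (1.6160743 : ℝ) < Real.exp (12/25) ∧ Real.exp (12/25) < 1.6160745 := by
    refine exp_pow_bounds (12/25) 25 (Real.exp 12) _ _ ?_ ?_ ?_ (by norm_num)
    · rw [← Real.exp_nat_mul]; norm_num
    · calc ((1.6160743 : ℝ)) ^ (25:ℕ) < 162754.7912 := by norm_num
      _ < Real.exp 12 := he12lo
    · calc Real.exp 12 < 162754.7916 := he12hi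
      _ < (1.6160745 : ℝ) ^ (25:ℕ) := by norm_num
  -- inverses
  have hm15 : (0.8187306 : ℝ) < Real.exp (-(1/5) : ℝ) ∧ Real.exp (-(1/5) : ℝ) < 0.8187308 := by
    rw [Real.exp_neg]
    exact inv_bnd hx.1 hx.2 (by norm_num) (by norm_num) (by norm_num)
  have hm25 : (0.6703200 : ℝ) < Real.exp (-(2/5) : ℝ) ∧ Real.exp (-(2/5) : ℝ) < 0.6703202 := by
    rw [Real.exp_neg]
    exact inv_bnd hx2.1 hx2.2 (by norm_num) (by norm_num) (by norm_num)
  have hc : (0.9231163 : ℝ) < Real.exp (-(2/25) : ℝ) ∧ Real.exp (-(2/25) : ℝ) < 0.9231164 := by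
    rw [Real.exp_neg]
    exact inv_bnd h225.1 h225.2 (by norm_num) (by norm_num) (by norm_num)
  have hA : (0.2231301 : ℝ) < Real.exp (-(3/2) : ℝ) ∧ Real.exp (-(3/2) : ℝ) < 0.2231302 := by
    rw [Real.exp_neg]
    exact inv_bnd h32.1 h32.2 (by norm_num) (by norm_num) (by norm_num)
  have hB : (0.0183156 : ℝ) < Real.exp (-4 : ℝ) ∧ Real.exp (-4 : ℝ) < 0.0183157 := by
    rw [Real.exp_neg]
    exact inv_bnd he4lo he4hi (by norm_num) (by norm_num) (by norm_num)
  have hC : (0.6187831 : ℝ) < Real.exp (-(12/25) : ℝ) ∧ Real.exp (-(12/25) : ℝ) < 0.6187835 := by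
    rw [Real.exp_neg]
    exact inv_bnd h1225.1 h1225.2 (by norm_num) (by norm_num) (by norm_num)
  -- term bounds
  have hKa : (0.4918246 : ℝ) < Real.exp (2/5) - 1 := by linarith [hx2.1]
  have hK : (0.2418914 : ℝ) < (Real.exp (2/5) - 1) ^ 2 := by
    have h := mul_lt_mul'' hKa hKa (by norm_num) (by norm_num)
    linarith [h]
  have hab : (0.2048144 : ℝ) < Real.exp (-(3/2) : ℝ) - Real.exp (-4 : ℝ) := by
    linarith [hA.1, hB.2]
  have hT1 : (0.0198 : ℝ) < (Real.exp (2/5) - 1) ^ 2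
      * ((Real.exp (-(3/2) : ℝ) - Real.exp (-4 : ℝ)) / (5/2)) := by
    have h := mul_lt_mul'' hK hab (by norm_num) (by norm_num)
    linarith [h]
  have hca : (0.3956529 : ℝ) < Real.exp (-(12/25) : ℝ) - Real.exp (-(3/2) : ℝ) := by
    linarith [hC.1, hA.2]
  have hT2 : (0.0562 : ℝ) < (Real.exp (2/5) - 1) ^ 2
      * ((Real.exp (-(12/25) : ℝ) - Real.exp (-(3/2) : ℝ)) / (17/10)) := by
    have h := mul_lt_mul'' hK hca (by norm_num) (by norm_num)
    linarith [h]
  have hcp : (0 : ℝ) ≤ 1 + Real.exp (-(2/25) : ℝ) := by positivity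
  have hcub : 1 + Real.exp (-(2/25) : ℝ) < (1.9231164 : ℝ) := by linarith [hc.2]
  have hclb : (1.9231163 : ℝ) < 1 + Real.exp (-(2/25) : ℝ) := by linarith [hc.1]
  have hprodhi : (1 + Real.exp (-(2/25) : ℝ)) * Real.exp (2/5) < 2.8689528 := by
    have h := mul_lt_mul'' hcub hx2.2 hcp (Real.exp_pos _).le
    linarith [h]
  have hprodlo : (1 : ℝ) < (1 + Real.exp (-(2/25) : ℝ)) * Real.exp (2/5) := by
    have h := mul_lt_mul'' hclb hx2.1 (by norm_num) (by norm_num)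
    linarith [h]
  have hf1 : (-1.8689528 : ℝ) < 1 - (1 + Real.exp (-(2/25) : ℝ)) * Real.exp (2/5) := by
    linarith [hprodhi]
  have hf1neg : 1 - (1 + Real.exp (-(2/25) : ℝ)) * Real.exp (2/5) < 0 := by
    linarith [hprodlo]
  have hd : (0 : ℝ) < Real.exp (-(1/5) : ℝ) - Real.exp (-(2/5) : ℝ) := by
    linarith [hm15.1, hm25.2]
  have hdhi : Real.exp (-(1/5) : ℝ) - Real.exp (-(2/5) : ℝ) < 0.1484108 := by
    linarith [hm15.2, hm25.1]
  have hT3a : (-0.2773853 : ℝ) < (1 - (1 + Real.exp (-(2/25) : ℝ)) * Real.exp (2/5))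
      * (Real.exp (-(1/5) : ℝ) - Real.exp (-(2/5) : ℝ)) := by
    have hnf : -(1 - (1 + Real.exp (-(2/25) : ℝ)) * Real.exp (2/5)) < (1.8689528 : ℝ) := by
      linarith [hf1]
    have h := mul_lt_mul'' hnf hdhi (by linarith [hf1neg]) hd.le
    linarith [h]
  have hyx : (0.2704218 : ℝ) < Real.exp (2/5) - Real.exp (1/5) := by
    linarith [hx2.1, hx.2]
  have hT3b : (0.2496306 : ℝ) < Real.exp (-(2/25) : ℝ)
      * (Real.exp (2/5) - Real.exp (1/5)) := by
    have h := mul_lt_mul'' hc.1 hyx (by norm_num) (by norm_num)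
    linarith [h]
  have hT4 : (-0.0401336 : ℝ) < 2 - Real.exp (-(1/5) : ℝ) - Real.exp (1/5) := by
    linarith [hm15.2, hx.2]
  linarith [hT1, hT2, hT3a, hT3b, hT4]

lemma main_est (lam : ℝ) (hlam : 1/2 ≤ lam) :
    0 < (∫ v : ℝ, Real.exp (-v ^ 2 / (4 * lam) + (0 - |v + 0|)))
        + (∫ v : ℝ, Real.exp (-v ^ 2 / (4 * lam) + (2/5 - |v + 2/5|)))
        - 2 * ∫ v : ℝ, Real.exp (-v ^ 2 / (4 * lam) + (1/5 - |v + 1/5|)) := by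
  have hlam0 : (0:ℝ) < lam := by linarith
  set ψ : ℝ → ℝ := fun v =>
    Real.exp (-v ^ 2 / (4 * lam) + (0 - |v + 0|))
      + Real.exp (-v ^ 2 / (4 * lam) + (2/5 - |v + 2/5|))
      - 2 * Real.exp (-v ^ 2 / (4 * lam) + (1/5 - |v + 1/5|)) with hψ
  have hi0 := integrable_g lam hlam0 0
  have hi1 := integrable_g lam hlam0 (1/5)
  have hi2 := integrable_g lam hlam0 (2/5)
  have hint : Integrable ψ := (hi0.add hi2).sub (hi1.const_mul 2)
  have hsplit : ∫ v, ψ v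
      = (∫ v : ℝ, Real.exp (-v ^ 2 / (4 * lam) + (0 - |v + 0|)))
        + (∫ v : ℝ, Real.exp (-v ^ 2 / (4 * lam) + (2/5 - |v + 2/5|)))
        - 2 * ∫ v : ℝ, Real.exp (-v ^ 2 / (4 * lam) + (1/5 - |v + 1/5|)) := by
    have hi02 : Integrable (fun v : ℝ =>
        Real.exp (-v ^ 2 / (4 * lam) + (0 - |v + 0|))
          + Real.exp (-v ^ 2 / (4 * lam) + (2/5 - |v + 2/5|))) volume := hi0.add hi2
    rw [hψ]
    rw [integral_sub hi02 (hi1.const_mul 2), integral_add hi0 hi2,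
      integral_const_mul]
  rw [← hsplit]
  -- continuity
  have hcont : Continuous ψ := by
    rw [hψ]
    exact ((cont_g lam 0).add (cont_g lam (2/5))).sub
      (continuous_const.mul (cont_g lam (1/5)))
  have hiv : ∀ a b : ℝ, IntervalIntegrable ψ volume a b := fun a b =>
    hcont.intervalIntegrable a b
  -- abs helper facts, used pointwise
  have habs0 : ∀ v : ℝ, v ≤ 0 → (0:ℝ) - |v + 0| = v := by
    intro v hv
    rw [add_zero, abs_of_nonpos hv]; ring
  have habs0' : ∀ v : ℝ, 0 ≤ v → (0:ℝ) - |v + 0| = -v := by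
    intro v hv
    rw [add_zero, abs_of_nonneg hv]; ring
  have habs1 : ∀ v : ℝ, v ≤ -(1/5) → (1:ℝ)/5 - |v + 1/5| = v + 2/5 := by
    intro v hv
    rw [abs_of_nonpos (by linarith)]; ring
  have habs1' : ∀ v : ℝ, -(1/5) ≤ v → (1:ℝ)/5 - |v + 1/5| = -v := by
    intro v hv
    rw [abs_of_nonneg (by linarith)]; ring
  have habs2 : ∀ v : ℝ, v ≤ -(2/5) → (2:ℝ)/5 - |v + 2/5| = v + 4/5 := by
    intro v hv
    rw [abs_of_nonpos (by linarith)]; ring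
  have habs2' : ∀ v : ℝ, -(2/5) ≤ v → (2:ℝ)/5 - |v + 2/5| = -v := by
    intro v hv
    rw [abs_of_nonneg (by linarith)]; ring
  -- exp product decompositions
  have hm : ∀ v a : ℝ, Real.exp (-v ^ 2 / (4 * lam) + (v + a))
      = Real.exp (-v ^ 2 / (4 * lam) + v) * Real.exp a := by
    intro v a
    rw [← Real.exp_add]; congr 1; ring
  have hm' : ∀ v a : ℝ, Real.exp (-v ^ 2 / (4 * lam) + a)
      = Real.exp (-v ^ 2 / (4 * lam)) * Real.exp a := by
    intro v a
    rw [← Real.exp_add]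
  -- weight bounds
  have hwle1 : ∀ v : ℝ, Real.exp (-v ^ 2 / (4 * lam)) ≤ 1 := by
    intro v
    rw [Real.exp_le_one_iff]
    have h : (0:ℝ) ≤ v ^ 2 / (4 * lam) := by positivity
    have heq : -v ^ 2 / (4 * lam) = -(v ^ 2 / (4 * lam)) := by ring
    linarith
  have hdivle : ∀ v : ℝ, v ^ 2 / (4 * lam) ≤ v ^ 2 / 2 := by
    intro v
    apply div_le_div_of_nonneg_left (sq_nonneg v) two_pos (by linarith)
  -- nonnegativity on the complement of [-2, 0]
  have hcompl : 0 ≤ ∫ v in (Set.Icc (-2:ℝ) 0)ᶜ, ψ v := by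
    apply setIntegral_nonneg measurableSet_Icc.compl
    intro v hv
    rw [Set.mem_compl_iff, Set.mem_Icc, not_and_or, not_le, not_le] at hv
    rw [hψ]
    rcases hv with hv | hv
    · -- v < -2
      simp only
      rw [habs0 v (by linarith), habs1 v (by linarith), habs2 v (by linarith),
        hm v (2/5), hm v (4/5)]
      have h45 : Real.exp (4/5 : ℝ) = Real.exp (2/5) * Real.exp (2/5) := by
        rw [← Real.exp_add]; norm_num
      rw [h45]
      have hE := (Real.exp_pos (-v ^ 2 / (4 * lam) + v)).le
      nlinarith [mul_nonneg hE (sq_nonneg (Real.exp (2/5) - 1))]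
    · -- 0 < v
      simp only
      rw [habs0' v (by linarith), habs1' v (by linarith), habs2' v (by linarith)]
      have : Real.exp (-v ^ 2 / (4 * lam) + -v)
          + Real.exp (-v ^ 2 / (4 * lam) + -v)
          - 2 * Real.exp (-v ^ 2 / (4 * lam) + -v) = 0 := by ring
      linarith
  -- the four interval lower bounds
  have hJ1 : (Real.exp (2/5) - 1) ^ 2
        * ((Real.exp ((5/2) * (-1:ℝ) + 1) - Real.exp ((5/2) * (-2:ℝ) + 1)) / (5/2))
      ≤ ∫ v in (-2:ℝ)..(-1:ℝ), ψ v := by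
    have heval : ∫ v in (-2:ℝ)..(-1:ℝ),
        (Real.exp (2/5) - 1) ^ 2 * Real.exp ((5/2) * v + 1)
        = (Real.exp (2/5) - 1) ^ 2
            * ((Real.exp ((5/2) * (-1:ℝ) + 1) - Real.exp ((5/2) * (-2:ℝ) + 1)) / (5/2)) := by
      rw [intervalIntegral.integral_const_mul, int_exp_lin (5/2) 1 (by norm_num)]
    rw [← heval]
    apply intervalIntegral.integral_mono_on (by norm_num)
      ((continuous_const.fun_mul (cont_explin (5/2) 1)).intervalIntegrable _ _)
      (hiv _ _)
    intro v hv
    obtain ⟨hv1, hv2⟩ := Set.mem_Icc.1 hv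
    rw [hψ]
    simp only
    rw [habs0 v (by linarith), habs1 v (by linarith), habs2 v (by linarith),
      hm v (2/5), hm v (4/5)]
    have h45 : Real.exp (4/5 : ℝ) = Real.exp (2/5) * Real.exp (2/5) := by
      rw [← Real.exp_add]; norm_num
    rw [h45]
    have hle : Real.exp ((5/2) * v + 1) ≤ Real.exp (-v ^ 2 / (4 * lam) + v) := by
      apply Real.exp_le_exp.2
      have hd := hdivle v
      have heq : -v ^ 2 / (4 * lam) = -(v ^ 2 / (4 * lam)) := by ring
      nlinarith [mul_nonneg (by linarith : (0:ℝ) ≤ v + 2) (by linarith : (0:ℝ) ≤ -(v + 1))]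
    nlinarith [mul_le_mul_of_nonneg_left hle (sq_nonneg (Real.exp (2/5) - 1))]
  have hJ2 : (Real.exp (2/5) - 1) ^ 2
        * ((Real.exp ((17/10) * (-(2/5):ℝ) + 1/5) - Real.exp ((17/10) * (-1:ℝ) + 1/5)) / (17/10))
      ≤ ∫ v in (-1:ℝ)..(-(2/5):ℝ), ψ v := by
    have heval : ∫ v in (-1:ℝ)..(-(2/5):ℝ),
        (Real.exp (2/5) - 1) ^ 2 * Real.exp ((17/10) * v + 1/5)
        = (Real.exp (2/5) - 1) ^ 2
            * ((Real.exp ((17/10) * (-(2/5):ℝ) + 1/5) - Real.exp ((17/10) * (-1:ℝ) + 1/5)) / (17/10)) := by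
      rw [intervalIntegral.integral_const_mul, int_exp_lin (17/10) (1/5) (by norm_num)]
    rw [← heval]
    apply intervalIntegral.integral_mono_on (by norm_num)
      ((continuous_const.fun_mul (cont_explin (17/10) (1/5))).intervalIntegrable _ _)
      (hiv _ _)
    intro v hv
    obtain ⟨hv1, hv2⟩ := Set.mem_Icc.1 hv
    rw [hψ]
    simp only
    rw [habs0 v (by linarith), habs1 v (by linarith), habs2 v (by linarith),
      hm v (2/5), hm v (4/5)]
    have h45 : Real.exp (4/5 : ℝ) = Real.exp (2/5) * Real.exp (2/5) := by
      rw [← Real.exp_add]; norm_num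
    rw [h45]
    have hle : Real.exp ((17/10) * v + 1/5) ≤ Real.exp (-v ^ 2 / (4 * lam) + v) := by
      apply Real.exp_le_exp.2
      have hd := hdivle v
      have heq : -v ^ 2 / (4 * lam) = -(v ^ 2 / (4 * lam)) := by ring
      nlinarith [mul_nonneg (by linarith : (0:ℝ) ≤ v + 1) (by linarith : (0:ℝ) ≤ -(v + 2/5))]
    nlinarith [mul_le_mul_of_nonneg_left hle (sq_nonneg (Real.exp (2/5) - 1))]
  have hJ3 : (1 - (1 + Real.exp (-(2/25) : ℝ)) * Real.exp (2/5))
        * (Real.exp (-(1/5) : ℝ) - Real.exp (-(2/5) : ℝ))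
        + Real.exp (-(2/25) : ℝ) * (Real.exp (2/5) - Real.exp (1/5))
      ≤ ∫ v in (-(2/5):ℝ)..(-(1/5):ℝ), ψ v := by
    have heval : ∫ v in (-(2/5):ℝ)..(-(1/5):ℝ),
        ((1 - (1 + Real.exp (-(2/25) : ℝ)) * Real.exp (2/5)) * Real.exp v
          + Real.exp (-(2/25) : ℝ) * Real.exp (-v))
        = (1 - (1 + Real.exp (-(2/25) : ℝ)) * Real.exp (2/5))
            * (Real.exp (-(1/5) : ℝ) - Real.exp (-(2/5) : ℝ))
          + Real.exp (-(2/25) : ℝ) * (Real.exp (2/5) - Real.exp (1/5)) := by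
      rw [intervalIntegral.integral_add
          ((continuous_const.fun_mul Real.continuous_exp).intervalIntegrable _ _)
          ((continuous_const.fun_mul cont_expneg).intervalIntegrable _ _),
        intervalIntegral.integral_const_mul, intervalIntegral.integral_const_mul,
        integral_exp, int_exp_neg]
      norm_num
    rw [← heval]
    apply intervalIntegral.integral_mono_on (by norm_num)
      (((continuous_const.fun_mul Real.continuous_exp).fun_add
        (continuous_const.fun_mul cont_expneg)).intervalIntegrable _ _)
      (hiv _ _)
    intro v hv
    obtain ⟨hv1, hv2⟩ := Set.mem_Icc.1 hv
    rw [hψ]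
    simp only
    rw [habs0 v (by linarith), habs1 v (by linarith), habs2' v (by linarith),
      hm v (2/5), hm' v v, hm' v (-v)]
    have hw1 : Real.exp (-v ^ 2 / (4 * lam)) ≤ 1 := hwle1 v
    have hwc : Real.exp (-(2/25) : ℝ) ≤ Real.exp (-v ^ 2 / (4 * lam)) := by
      apply Real.exp_le_exp.2
      have hd := hdivle v
      have heq : -v ^ 2 / (4 * lam) = -(v ^ 2 / (4 * lam)) := by ring
      nlinarith [mul_nonneg (by linarith : (0:ℝ) ≤ v + 2/5) (by linarith : (0:ℝ) ≤ 2/5 - v)]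
    have hAC : Real.exp v ≤ Real.exp (2/5) * Real.exp v := by
      nlinarith [Real.exp_pos v, Real.one_le_exp (by norm_num : (0:ℝ) ≤ 2/5)]
    have hCB : Real.exp (2/5) * Real.exp v ≤ Real.exp (-v) := by
      rw [← Real.exp_add]
      apply Real.exp_le_exp.2
      linarith
    have hmm : Real.exp (-v ^ 2 / (4 * lam) + v)
        = Real.exp (-v ^ 2 / (4 * lam)) * Real.exp v := hm' v v
    have key1 := mul_nonneg (sub_nonneg.2 hwc) (sub_nonneg.2 hCB)
    have key2 := mul_nonneg (sub_nonneg.2 hw1) (sub_nonneg.2 hAC)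
    nlinarith [key1, key2]
  have hJ4 : 2 - Real.exp (-(1/5) : ℝ) - Real.exp (1/5)
      ≤ ∫ v in (-(1/5):ℝ)..(0:ℝ), ψ v := by
    have heval : ∫ v in (-(1/5):ℝ)..(0:ℝ), (Real.exp v - Real.exp (-v))
        = 2 - Real.exp (-(1/5) : ℝ) - Real.exp (1/5) := by
      rw [intervalIntegral.integral_sub
          (Real.continuous_exp.intervalIntegrable _ _)
          (cont_expneg.intervalIntegrable _ _),
        integral_exp, int_exp_neg]
      norm_num [Real.exp_zero]
      ring
    rw [← heval]
    apply intervalIntegral.integral_mono_on (by norm_num)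
      ((Real.continuous_exp.fun_sub cont_expneg).intervalIntegrable _ _)
      (hiv _ _)
    intro v hv
    obtain ⟨hv1, hv2⟩ := Set.mem_Icc.1 hv
    rw [hψ]
    simp only
    rw [habs0 v (by linarith), habs1' v (by linarith), habs2' v (by linarith),
      hm' v v, hm' v (-v)]
    have hw1 : Real.exp (-v ^ 2 / (4 * lam)) ≤ 1 := hwle1 v
    have hAB : Real.exp v ≤ Real.exp (-v) := Real.exp_le_exp.2 (by linarith)
    nlinarith [mul_nonneg (sub_nonneg.2 hw1) (sub_nonneg.2 hAB)]
  -- combine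
  have hadd1 := intervalIntegral.integral_add_adjacent_intervals
    (hiv (-2) (-1)) (hiv (-1) (-(2/5)))
  have hadd2 := intervalIntegral.integral_add_adjacent_intervals
    (hiv (-2) (-(2/5))) (hiv (-(2/5)) (-(1/5)))
  have hadd3 := intervalIntegral.integral_add_adjacent_intervals
    (hiv (-2) (-(1/5))) (hiv (-(1/5)) 0)
  have hIccIoc : ∫ v in Set.Icc (-2:ℝ) 0, ψ v = ∫ v in (-2:ℝ)..(0:ℝ), ψ v := by
    rw [intervalIntegral.integral_of_le (by norm_num : (-2:ℝ) ≤ 0),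
      integral_Icc_eq_integral_Ioc]
  have hdecomp : ∫ v, ψ v
      = (∫ v in Set.Icc (-2:ℝ) 0, ψ v) + ∫ v in (Set.Icc (-2:ℝ) 0)ᶜ, ψ v :=
    (integral_add_compl measurableSet_Icc hint).symm
  have hfin := final_num
  -- identify the numeric expressions
  have e1 : ((5:ℝ)/2) * (-1) + 1 = -(3/2) := by norm_num
  have e2 : ((5:ℝ)/2) * (-2) + 1 = -4 := by norm_num
  have e3 : ((17:ℝ)/10) * (-(2/5)) + 1/5 = -(12/25) := by norm_num
  have e4 : ((17:ℝ)/10) * (-1) + 1/5 = -(3/2) := by norm_num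
  rw [e1, e2] at hJ1
  rw [e3, e4] at hJ2
  have hsum : (0:ℝ) < ∫ v in (-2:ℝ)..(0:ℝ), ψ v := by
    calc (0:ℝ)
        < (Real.exp (2/5) - 1) ^ 2
            * ((Real.exp (-(3/2) : ℝ) - Real.exp (-4 : ℝ)) / (5/2))
          + (Real.exp (2/5) - 1) ^ 2
            * ((Real.exp (-(12/25) : ℝ) - Real.exp (-(3/2) : ℝ)) / (17/10))
          + ((1 - (1 + Real.exp (-(2/25) : ℝ)) * Real.exp (2/5))
              * (Real.exp (-(1/5) : ℝ) - Real.exp (-(2/5) : ℝ))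
            + Real.exp (-(2/25) : ℝ) * (Real.exp (2/5) - Real.exp (1/5)))
          + (2 - Real.exp (-(1/5) : ℝ) - Real.exp (1/5)) := hfin
      _ ≤ (∫ v in (-2:ℝ)..(-1:ℝ), ψ v) + (∫ v in (-1:ℝ)..(-(2/5):ℝ), ψ v)
          + (∫ v in (-(2/5):ℝ)..(-(1/5):ℝ), ψ v) + ∫ v in (-(1/5):ℝ)..(0:ℝ), ψ v := by
          gcongr
      _ = ∫ v in (-2:ℝ)..(0:ℝ), ψ v := by linarith [hadd1, hadd2, hadd3]
  linarith [hcompl, hsum, hdecomp.le, hdecomp.ge, hIccIoc.le, hIccIoc.ge]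

end Stmt9Aux

open Stmt9Aux in
/-- Concrete form of the violation of reflection positivity of the
stochastic-quantization measure of the free field in one space-time dimension
with unit mass, for `λ ≥ 1/2`. -/
theorem stmt_9 (lam : ℝ) (hlam : 1/2 ≤ lam)
    (W : ℝ → ℝ)
    (hW : ∀ t : ℝ, W t = ∫ u : ℝ, Real.exp (-(t - u) ^ 2 / (4 * lam) - |u|)) :
    ∃ t : ℝ, 0 < t ∧
      Real.exp t * W t < (1/2) * (W 0 + Real.exp (2 * t) * W (2 * t)) := by
  refine ⟨1/5, by norm_num, ?_⟩
  have hlam0 : (0:ℝ) < lam := by linarith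
  have h25 : (2 * (1/5) : ℝ) = 2/5 := by norm_num
  rw [h25, hW 0, hW (1/5), hW (2/5)]
  have h1 := shift lam (1/5)
  have h2 := shift lam (2/5)
  have h0 := shift lam 0
  rw [Real.exp_zero, one_mul] at h0
  rw [h1, h2]
  have h0' : (∫ u : ℝ, Real.exp (-(0 - u) ^ 2 / (4 * lam) - |u|))
      = ∫ v : ℝ, Real.exp (-v ^ 2 / (4 * lam) + (0 - |v + 0|)) := h0
  rw [h0']
  have := main_est lam hlam
  linarith
end

section
/- For every $\lambda>0$ and $m>0$ with $\lambda m^2\geq \tfrac12$, there exists $t>0$ such that $\tfrac12\big(W_{\lambda,m}(0)+e^{2mt}W_{\lambda,m}(2t)\big) > e^{mt}W_{\lambda,m}(t)$, where $W_{\lambda,m}(t)=\int_{\mathbb{R}} e^{-(t-u)^2/(4\lambda)-m|u|}\,du$. -/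
open MeasureTheory Real

lemma aux_exp_le_quadratic {x : ℝ} (hx : x ≤ 0) : Real.exp x ≤ 1 + x + x^2/2 := by
  have hdiff : Differentiable ℝ (fun x : ℝ => 1 + x + x^2/2 - Real.exp x) := by
    fun_prop
  have hanti : Antitone (fun x : ℝ => 1 + x + x^2/2 - Real.exp x) := by
    apply antitone_of_deriv_nonpos hdiff
    intro y
    have h1 : HasDerivAt (fun x : ℝ => 1 + x + x^2/2 - Real.exp x)
        (1 + y - Real.exp y) y := by
      have := (((hasDerivAt_const y (1:ℝ)).add (hasDerivAt_id y)).add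
        ((hasDerivAt_pow 2 y).div_const 2)).sub (Real.hasDerivAt_exp y)
      exact this.congr_deriv (by ring)
    rw [h1.deriv]
    have := Real.add_one_le_exp y
    linarith
  have := hanti hx
  simp at this
  linarith

lemma aux_cubic_le_exp (x : ℝ) : 1 + x + x^2/2 + x^3/6 ≤ Real.exp x := by
  rcases le_or_gt x 0 with hx | hx
  · have hdiff : Differentiable ℝ (fun x : ℝ => Real.exp x - (1 + x + x^2/2 + x^3/6)) := by
      fun_prop
    have hanti : AntitoneOn (fun x : ℝ => Real.exp x - (1 + x + x^2/2 + x^3/6)) (Set.Iic 0) := by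
      apply antitoneOn_of_deriv_nonpos (convex_Iic 0) hdiff.continuous.continuousOn
        hdiff.differentiableOn
      intro y hy
      rw [interior_Iic] at hy
      have h1 : HasDerivAt (fun x : ℝ => Real.exp x - (1 + x + x^2/2 + x^3/6))
          (Real.exp y - (1 + y + y^2/2)) y := by
        have := (Real.hasDerivAt_exp y).sub
          ((((hasDerivAt_const y (1:ℝ)).add (hasDerivAt_id y)).add
            ((hasDerivAt_pow 2 y).div_const 2)).add ((hasDerivAt_pow 3 y).div_const 6))
        exact this.congr_deriv (by push_cast; ring)
      rw [h1.deriv]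
      have := aux_exp_le_quadratic hy.le
      linarith
    have h0 : (fun x : ℝ => Real.exp x - (1 + x + x^2/2 + x^3/6)) 0 = 0 := by norm_num
    have := hanti (Set.mem_Iic.2 hx) (Set.mem_Iic.2 le_rfl) hx
    simp only [h0] at this
    linarith [this]
  · have h := Real.sum_le_exp_of_nonneg hx.le 4
    have he : ∑ i ∈ Finset.range 4, x ^ i / (Nat.factorial i) = 1 + x + x^2/2 + x^3/6 := by
      simp [Finset.sum_range_succ, Nat.factorial]
    rw [he] at h
    exact h

lemma aux_integrable_exp {b c d : ℝ} (hb : 0 < b) {g : ℝ → ℝ} (hg : Continuous g)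
    (hle : ∀ u, g u ≤ d - b * (u - c)^2) :
    Integrable (fun u => Real.exp (g u)) := by
  have h1 : Integrable (fun u : ℝ => Real.exp d * Real.exp (-b * (u - c)^2)) := by
    apply Integrable.const_mul
    exact (integrable_exp_neg_mul_sq hb).comp_sub_right c
  apply h1.mono' (Real.continuous_exp.comp hg).aestronglyMeasurable
  filter_upwards with u
  simp only [Function.comp_apply]
  rw [Real.norm_eq_abs, abs_of_pos (Real.exp_pos _), ← Real.exp_add]
  apply Real.exp_le_exp.2
  have := hle u
  linarith

lemma aux_sinh_bound {y Y : ℝ} (h0 : 0 ≤ y) (h1 : y ≤ Y) :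
    Real.exp y - Real.exp (-y) ≤ 2*y*Real.exp Y := by
  have e1 : Real.exp y * Real.exp (-(2*y)) = Real.exp (-y) := by
    rw [← Real.exp_add]; congr 1; ring
  have e2 : 1 + (-(2*y)) ≤ Real.exp (-(2*y)) := by
    linarith [Real.add_one_le_exp (-(2*y))]
  have e3 : Real.exp y ≤ Real.exp Y := Real.exp_le_exp.2 h1
  have e4 := (Real.exp_pos y).le
  nlinarith [Real.exp_pos y]

lemma aux_expm1_bound {y Y : ℝ} (h0 : 0 ≤ y) (h1 : y ≤ Y) :
    Real.exp y - 1 ≤ y * Real.exp Y := by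
  have e2 : 1 + (-y) ≤ Real.exp (-y) := by linarith [Real.add_one_le_exp (-y)]
  have e1 : Real.exp y * Real.exp (-y) = 1 := by
    rw [← Real.exp_add]; simp
  have e3 : Real.exp y ≤ Real.exp Y := Real.exp_le_exp.2 h1
  nlinarith [Real.exp_pos y]

lemma aux_linear_integral (a b c1 c2 : ℝ) :
    ∫ u in a..b, (c1 + c2*u) = c1*(b-a) + c2*(b^2-a^2)/2 := by
  have h1 : IntervalIntegrable (fun u : ℝ => c2 * u) volume a b :=
    (intervalIntegral.intervalIntegrable_id).const_mul c2
  rw [intervalIntegral.integral_add intervalIntegrable_const h1,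
    intervalIntegral.integral_const, intervalIntegral.integral_const_mul,
    integral_id]
  simp [smul_eq_mul]
  ring

set_option maxHeartbeats 1000000 in
/-- Concrete form of the violation of reflection positivity of the
stochastic-quantization measure of the free field of mass `m` in one
space-time dimension, for `1/2 ≤ λ m² < ∞`. -/
theorem stmt_10 (lam m : ℝ) (hlam : 0 < lam) (hm : 0 < m)
    (hcond : 1/2 ≤ lam * m ^ 2)
    (W : ℝ → ℝ)
    (hW : ∀ t : ℝ, W t = ∫ u : ℝ, Real.exp (-(t - u) ^ 2 / (4 * lam) - m * |u|)) :
    ∃ t : ℝ, 0 < t ∧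
      Real.exp (m * t) * W t
        < (1/2) * (W 0 + Real.exp (2 * m * t) * W (2 * t)) := by
  have h4 : (0:ℝ) < 4*lam := by linarith
  set t : ℝ := 1/(100*m) with ht_def
  have ht : 0 < t := by positivity
  have hmt : m * t = 1/100 := by rw [ht_def]; field_simp
  refine ⟨t, ht, ?_⟩
  -- Step 1: representation after translation u ↦ u + s
  have E : ∀ s : ℝ, Real.exp (m*s) * W s
      = ∫ u : ℝ, Real.exp (m*s - u^2/(4*lam) - m*|u+s|) := by
    intro s
    rw [hW s, ← integral_const_mul]
    rw [← integral_add_right_eq_self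
      (fun u : ℝ => Real.exp (m*s) * Real.exp (-(s-u)^2/(4*lam) - m*|u|)) s]
    congr 1
    funext u
    rw [← Real.exp_add]
    congr 1
    ring
  -- integrability
  have hint : ∀ s : ℝ, Integrable
      (fun u : ℝ => Real.exp (m*s - u^2/(4*lam) - m*|u+s|)) := by
    intro s
    apply aux_integrable_exp (b := 1/(4*lam)) (c := 0) (d := m*s) (by positivity)
    · fun_prop
    · intro u
      have h1 : 0 ≤ m * |u+s| := by positivity
      have h2 : u^2/(4*lam) = 1/(4*lam) * (u-0)^2 := by ring
      linarith [h2.ge]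
  -- the difference function
  set D : ℝ → ℝ := fun u =>
    Real.exp (m*0 - u^2/(4*lam) - m*|u+0|)
    + Real.exp (m*(2*t) - u^2/(4*lam) - m*|u+2*t|)
    - 2 * Real.exp (m*t - u^2/(4*lam) - m*|u+t|) with hD_def
  have hDint : Integrable D := ((hint 0).add (hint (2*t))).sub ((hint t).const_mul 2)
  have hkey : ∫ u, D u
      = (∫ u : ℝ, Real.exp (m*0 - u^2/(4*lam) - m*|u+0|))
        + (∫ u : ℝ, Real.exp (m*(2*t) - u^2/(4*lam) - m*|u+2*t|))
        - 2 * (∫ u : ℝ, Real.exp (m*t - u^2/(4*lam) - m*|u+t|)) := by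
    have hkey' := integral_sub ((hint 0).add (hint (2*t))) ((hint t).const_mul 2)
    simp only [Pi.add_apply] at hkey'
    rw [hD_def]
    rw [hkey', integral_add (hint 0) (hint (2*t)), integral_const_mul]
  -- reduce to positivity of ∫ D
  have hgoal : 0 < ∫ u, D u → Real.exp (m * t) * W t
      < (1/2) * (W 0 + Real.exp (2 * m * t) * W (2 * t)) := by
    intro hpos
    have e0 : W 0 = ∫ u : ℝ, Real.exp (m*0 - u^2/(4*lam) - m*|u+0|) := by
      have := E 0
      simpa using this
    have e1 := E t
    have e2 : Real.exp (2*m*t) * W (2*t)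
        = ∫ u : ℝ, Real.exp (m*(2*t) - u^2/(4*lam) - m*|u+2*t|) := by
      rw [show 2*m*t = m*(2*t) by ring]
      exact E (2*t)
    rw [e1, e2, e0]
    linarith [hkey ▸ hpos]
  apply hgoal
  -- now prove positivity by splitting the integral
  clear hkey hgoal
  have hX1 : ∀ u : ℝ, Real.exp (-u^2/(4*lam)) ≤ 1 := by
    intro u
    rw [← Real.exp_zero]
    apply Real.exp_le_exp.2
    have : 0 ≤ u^2/(4*lam) := by positivity
    rw [neg_div]
    linarith
  -- pointwise: vanishing on the right half line
  have hR0 : ∀ u ∈ Set.Ioi (0:ℝ), D u = (0:ℝ) := by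
    intro u hu
    simp only [Set.mem_Ioi] at hu
    simp only [hD_def]
    rw [abs_of_nonneg (by linarith : (0:ℝ) ≤ u+0),
      abs_of_nonneg (by linarith : (0:ℝ) ≤ u+2*t),
      abs_of_nonneg (by linarith : (0:ℝ) ≤ u+t)]
    rw [show m*(2*t) - u^2/(4*lam) - m*(u+2*t) = m*0 - u^2/(4*lam) - m*(u+0) from by ring,
      show m*t - u^2/(4*lam) - m*(u+t) = m*0 - u^2/(4*lam) - m*(u+0) from by ring]
    ring
  -- pointwise: far left region
  have hR3 : ∀ u ∈ Set.Iic (-(2*t)), D u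
      = (Real.exp (2*(m*t)) - 1)^2 * Real.exp (-u^2/(4*lam) + m*u) := by
    intro u hu
    simp only [Set.mem_Iic] at hu
    simp only [hD_def]
    rw [abs_of_nonpos (by linarith : u+0 ≤ 0),
      abs_of_nonpos (by linarith : u+2*t ≤ 0),
      abs_of_nonpos (by linarith : u+t ≤ 0)]
    rw [show m*0 - u^2/(4*lam) - m*(-(u+0)) = (-u^2/(4*lam) + m*u) + 0 from by ring,
      show m*(2*t) - u^2/(4*lam) - m*(-(u+2*t)) = (-u^2/(4*lam) + m*u) + (2*(m*t) + 2*(m*t)) from by ring,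
      show m*t - u^2/(4*lam) - m*(-(u+t)) = (-u^2/(4*lam) + m*u) + 2*(m*t) from by ring]
    simp only [Real.exp_add, Real.exp_zero]
    ring
  -- pointwise: region (-t, 0]
  have hR1 : ∀ u ∈ Set.Ioc (-t) (0:ℝ), 0 + (2*m*Real.exp (m*t))*u ≤ D u := by
    intro u hu
    rw [Set.mem_Ioc] at hu
    simp only [hD_def]
    rw [abs_of_nonpos (by linarith [hu.2] : u+0 ≤ 0),
      abs_of_nonneg (by linarith [hu.1] : (0:ℝ) ≤ u+2*t),
      abs_of_nonneg (by linarith [hu.1] : (0:ℝ) ≤ u+t)]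
    rw [show m*0 - u^2/(4*lam) - m*(-(u+0)) = (-u^2/(4*lam)) + m*u from by ring,
      show m*(2*t) - u^2/(4*lam) - m*(u+2*t) = (-u^2/(4*lam)) + -(m*u) from by ring,
      show m*t - u^2/(4*lam) - m*(u+t) = (-u^2/(4*lam)) + -(m*u) from by ring]
    simp only [Real.exp_add]
    have hs := aux_sinh_bound (y := -(m*u)) (Y := m*t)
      (by nlinarith [hu.2] : 0 ≤ -(m*u))
      (by nlinarith [hu.1] : -(m*u) ≤ m*t)
    rw [neg_neg] at hs
    have hab : Real.exp (m*u) ≤ Real.exp (-(m*u)) :=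
      Real.exp_le_exp.2 (by nlinarith [hu.2])
    have hXpos := Real.exp_pos (-u^2/(4*lam))
    nlinarith [hX1 u, mul_nonneg (sub_nonneg.2 (hX1 u)) (sub_nonneg.2 hab),
      Real.exp_pos (m*t)]
  -- pointwise: region (-2t, -t]
  have hR2 : ∀ u ∈ Set.Ioc (-(2*t)) (-t),
      (-(2*m*Real.exp (m*t)))*(2*t) + (-(2*m*Real.exp (m*t)))*u ≤ D u := by
    intro u hu
    rw [Set.mem_Ioc] at hu
    simp only [hD_def]
    rw [abs_of_nonpos (by linarith [hu.2, ht] : u+0 ≤ 0),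
      abs_of_nonneg (by linarith [hu.1] : (0:ℝ) ≤ u+2*t),
      abs_of_nonpos (by linarith [hu.2] : u+t ≤ 0)]
    rw [show m*0 - u^2/(4*lam) - m*(-(u+0)) = (-u^2/(4*lam)) + m*u from by ring,
      show m*(2*t) - u^2/(4*lam) - m*(u+2*t) = (-u^2/(4*lam)) + -(m*u) from by ring,
      show m*t - u^2/(4*lam) - m*(-(u+t)) = (-u^2/(4*lam)) + (m*u + 2*(m*t)) from by ring]
    simp only [Real.exp_add]
    have hy0 : 0 ≤ m*u + 2*(m*t) := by nlinarith [hu.1]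
    have hy1 : m*u + 2*(m*t) ≤ m*t := by nlinarith [hu.2]
    have he1 := aux_expm1_bound hy0 hy1
    have hey1 : 1 ≤ Real.exp (m*u + 2*(m*t)) := by
      linarith [Real.add_one_le_exp (m*u + 2*(m*t))]
    have hesplit : Real.exp (m*u + 2*(m*t)) = Real.exp (m*u) * Real.exp (2*(m*t)) := by
      rw [← Real.exp_add]
    rw [hesplit] at he1 hey1
    have haprod : Real.exp (m*u) * Real.exp (-(m*u)) = 1 := by
      rw [← Real.exp_add]; simp
    have hapos := Real.exp_pos (m*u)
    have hbpos := Real.exp_pos (-(m*u))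
    have hab2 : 2 ≤ Real.exp (m*u) + Real.exp (-(m*u)) := by
      nlinarith [sq_nonneg (Real.exp (m*u) - 1)]
    have hXpos := Real.exp_pos (-u^2/(4*lam))
    nlinarith [hX1 u,
      mul_nonneg hXpos.le (by linarith : (0:ℝ) ≤ Real.exp (m*u) + Real.exp (-(m*u)) - 2),
      mul_nonneg (sub_nonneg.2 (hX1 u))
        (by linarith : (0:ℝ) ≤ 2*(Real.exp (m*u) * Real.exp (2*(m*t))) - 2),
      Real.exp_pos (m*t)]
  -- integrability of the gaussian-with-drift
  have hA : Integrable (fun u : ℝ => Real.exp (-u^2/(4*lam) + m*u)) := by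
    apply aux_integrable_exp (b := 1/(4*lam)) (c := 2*lam*m) (d := lam*m^2) (by positivity)
    · fun_prop
    · intro u
      have heq : lam*m^2 - 1/(4*lam) * (u - 2*lam*m)^2 = -u^2/(4*lam) + m*u := by
        field_simp
        ring
      linarith [heq.ge]
  -- splitting the integral
  have hsplit0 : (∫ u in Set.Ioi (0:ℝ), D u) = 0 := by
    rw [setIntegral_congr_fun measurableSet_Ioi hR0]
    simp
  have hsplitA : ∫ u, D u
      = (∫ u in Set.Iic (0:ℝ), D u) + (∫ u in Set.Ioi (0:ℝ), D u) :=
    (intervalIntegral.integral_Iic_add_Ioi hDint.integrableOn hDint.integrableOn).symm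
  have hsplitB : ∫ u in Set.Iic (0:ℝ), D u
      = (∫ u in Set.Iic (-(2*t)), D u) + (∫ u in Set.Ioc (-(2*t)) 0, D u) := by
    rw [← setIntegral_union (Set.Iic_disjoint_Ioc le_rfl) measurableSet_Ioc
      hDint.integrableOn hDint.integrableOn, Set.Iic_union_Ioc_eq_Iic (by linarith)]
  have hsplitC : ∫ u in Set.Ioc (-(2*t)) (0:ℝ), D u
      = (∫ u in Set.Ioc (-(2*t)) (-t), D u) + (∫ u in Set.Ioc (-t) 0, D u) := by
    rw [← setIntegral_union (Set.Ioc_disjoint_Ioc_of_le le_rfl) measurableSet_Ioc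
      hDint.integrableOn hDint.integrableOn,
      Set.Ioc_union_Ioc_eq_Ioc (by linarith) (by linarith)]
  -- value on the far-left region
  have hS1eq : ∫ u in Set.Iic (-(2*t)), D u
      = (Real.exp (2*(m*t)) - 1)^2 * ∫ u in Set.Iic (-(2*t)), Real.exp (-u^2/(4*lam) + m*u) := by
    rw [setIntegral_congr_fun measurableSet_Iic hR3, integral_const_mul]
  -- gaussian-with-drift integral bounds
  have hIsplit : ∫ u in Set.Iic (0:ℝ), Real.exp (-u^2/(4*lam) + m*u)
      = (∫ u in Set.Iic (-(2*t)), Real.exp (-u^2/(4*lam) + m*u))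
        + ∫ u in Set.Ioc (-(2*t)) 0, Real.exp (-u^2/(4*lam) + m*u) := by
    rw [← setIntegral_union (Set.Iic_disjoint_Ioc le_rfl) measurableSet_Ioc
      hA.integrableOn hA.integrableOn, Set.Iic_union_Ioc_eq_Iic (by linarith)]
  have hI2 : ∫ u in Set.Ioc (-(2*t)) (0:ℝ), Real.exp (-u^2/(4*lam) + m*u) ≤ 2*t := by
    have h1 : ∫ u in Set.Ioc (-(2*t)) (0:ℝ), Real.exp (-u^2/(4*lam) + m*u)
        ≤ ∫ _ in Set.Ioc (-(2*t)) (0:ℝ), (1:ℝ) := by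
      apply setIntegral_mono_on hA.integrableOn
        (integrableOn_const measure_Ioc_lt_top.ne) measurableSet_Ioc
      intro u hu
      rw [Set.mem_Ioc] at hu
      rw [← Real.exp_zero]
      apply Real.exp_le_exp.2
      have l1 : 0 ≤ u^2/(4*lam) := by positivity
      rw [neg_div]
      nlinarith [mul_nonneg hm.le (neg_nonneg.2 hu.2)]
    rw [setIntegral_const, Real.volume_real_Ioc_of_le (by linarith), smul_eq_mul, mul_one] at h1
    linarith
  -- lower bound for the full gaussian-with-drift integral
  have hIlow : 449/840 * (1/m) ≤ ∫ u in Set.Iic (0:ℝ), Real.exp (-u^2/(4*lam) + m*u) := by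
    have hab : -(1/m) ≤ (0:ℝ) := neg_nonpos.2 (by positivity)
    have hQder : ∀ x ∈ Set.uIcc (-(1/m)) (0:ℝ), HasDerivAt
        (fun u : ℝ => u + m*u^2/2 - m^3*u^4/12 - m^4*u^5/40 + m^5*u^6/48 - m^6*u^7/336)
        (1 + m*x - (m*x)^3/3 - (m*x)^4/8 + (m*x)^5/8 - (m*x)^6/48) x := by
      intro x _
      have H := (((((hasDerivAt_id x).add (((hasDerivAt_pow 2 x).const_mul m).div_const 2)).sub
        (((hasDerivAt_pow 4 x).const_mul (m^3)).div_const 12)).sub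
        (((hasDerivAt_pow 5 x).const_mul (m^4)).div_const 40)).add
        (((hasDerivAt_pow 6 x).const_mul (m^5)).div_const 48)).sub
        (((hasDerivAt_pow 7 x).const_mul (m^6)).div_const 336)
      exact H.congr_deriv (by push_cast; ring)
    have hcont : Continuous
        (fun u : ℝ => 1 + m*u - (m*u)^3/3 - (m*u)^4/8 + (m*u)^5/8 - (m*u)^6/48) := by fun_prop
    have s4 : ∫ u in (-(1/m))..0,
        (1 + m*u - (m*u)^3/3 - (m*u)^4/8 + (m*u)^5/8 - (m*u)^6/48) = 449/840 * (1/m) := by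
      rw [intervalIntegral.integral_eq_sub_of_hasDerivAt hQder (hcont.intervalIntegrable _ _)]
      field_simp
      ring
    have hexpcont : Continuous (fun u : ℝ => Real.exp (-u^2/(4*lam) + m*u)) := by fun_prop
    have s3 : ∫ u in (-(1/m))..0, (1 + m*u - (m*u)^3/3 - (m*u)^4/8 + (m*u)^5/8 - (m*u)^6/48)
        ≤ ∫ u in (-(1/m))..0, Real.exp (-u^2/(4*lam) + m*u) := by
      apply intervalIntegral.integral_mono_on hab (hcont.intervalIntegrable _ _)
        (hexpcont.intervalIntegrable _ _)
      intro u _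
      have h5 : u^2/(4*lam) ≤ (m*u)^2/2 := by
        rw [div_le_div_iff₀ h4 two_pos]
        nlinarith [mul_nonneg (sq_nonneg u) (by linarith : (0:ℝ) ≤ lam*m^2 - 1/2)]
      have hc := aux_cubic_le_exp (m*u - (m*u)^2/2)
      have hmono : Real.exp (m*u - (m*u)^2/2) ≤ Real.exp (-u^2/(4*lam) + m*u) := by
        apply Real.exp_le_exp.2
        rw [neg_div]
        linarith
      calc 1 + m*u - (m*u)^3/3 - (m*u)^4/8 + (m*u)^5/8 - (m*u)^6/48
          = 1 + (m*u - (m*u)^2/2) + (m*u - (m*u)^2/2)^2/2 + (m*u - (m*u)^2/2)^3/6 := by ring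
        _ ≤ Real.exp (m*u - (m*u)^2/2) := hc
        _ ≤ _ := hmono
    have s2 : ∫ u in (-(1/m))..0, Real.exp (-u^2/(4*lam) + m*u)
        = ∫ u in Set.Ioc (-(1/m)) (0:ℝ), Real.exp (-u^2/(4*lam) + m*u) :=
      intervalIntegral.integral_of_le hab
    have s1 : ∫ u in Set.Ioc (-(1/m)) (0:ℝ), Real.exp (-u^2/(4*lam) + m*u)
        ≤ ∫ u in Set.Iic (0:ℝ), Real.exp (-u^2/(4*lam) + m*u) := by
      apply setIntegral_mono_set hA.integrableOn
      · filter_upwards with u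
        exact (Real.exp_pos _).le
      · exact HasSubset.Subset.eventuallyLE Set.Ioc_subset_Iic_self
    calc 449/840 * (1/m)
        = ∫ u in (-(1/m))..0, (1 + m*u - (m*u)^3/3 - (m*u)^4/8 + (m*u)^5/8 - (m*u)^6/48) := s4.symm
      _ ≤ ∫ u in (-(1/m))..0, Real.exp (-u^2/(4*lam) + m*u) := s3
      _ = ∫ u in Set.Ioc (-(1/m)) (0:ℝ), Real.exp (-u^2/(4*lam) + m*u) := s2
      _ ≤ _ := s1
  -- lower bounds on the middle regions
  have hS2a : -(m*Real.exp (m*t)*t^2) ≤ ∫ u in Set.Ioc (-t) (0:ℝ), D u := by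
    calc -(m*Real.exp (m*t)*t^2)
        = 0*((0:ℝ)-(-t)) + (2*m*Real.exp (m*t))*((0:ℝ)^2-(-t)^2)/2 := by ring
      _ = ∫ u in (-t)..(0:ℝ), (0 + (2*m*Real.exp (m*t))*u) := (aux_linear_integral _ _ _ _).symm
      _ = ∫ u in Set.Ioc (-t) (0:ℝ), (0 + (2*m*Real.exp (m*t))*u) :=
          intervalIntegral.integral_of_le (by linarith)
      _ ≤ ∫ u in Set.Ioc (-t) (0:ℝ), D u := by
          apply setIntegral_mono_on
            ((by fun_prop : Continuous fun u : ℝ => 0 + (2*m*Real.exp (m*t))*u).integrableOn_Ioc)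
            hDint.integrableOn measurableSet_Ioc hR1
  have hS2b : -(m*Real.exp (m*t)*t^2) ≤ ∫ u in Set.Ioc (-(2*t)) (-t), D u := by
    calc -(m*Real.exp (m*t)*t^2)
        = (-(2*m*Real.exp (m*t)))*(2*t)*((-t)-(-(2*t)))
          + (-(2*m*Real.exp (m*t)))*((-t)^2-(-(2*t))^2)/2 := by ring
      _ = ∫ u in (-(2*t))..(-t), ((-(2*m*Real.exp (m*t)))*(2*t) + (-(2*m*Real.exp (m*t)))*u) := by
          rw [aux_linear_integral]
      _ = ∫ u in Set.Ioc (-(2*t)) (-t), ((-(2*m*Real.exp (m*t)))*(2*t) + (-(2*m*Real.exp (m*t)))*u) :=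
          intervalIntegral.integral_of_le (by linarith)
      _ ≤ ∫ u in Set.Ioc (-(2*t)) (-t), D u := by
          apply setIntegral_mono_on
            ((by fun_prop : Continuous fun u : ℝ =>
              (-(2*m*Real.exp (m*t)))*(2*t) + (-(2*m*Real.exp (m*t)))*u).integrableOn_Ioc)
            hDint.integrableOn measurableSet_Ioc hR2
  -- numeric assembly
  have him : (0:ℝ) < 1/m := by positivity
  have h2t' : 2*t = 1/50 * (1/m) := by rw [ht_def]; field_simp; ring
  have hI1low : 2161/4200 * (1/m) ≤ ∫ u in Set.Iic (-(2*t)), Real.exp (-u^2/(4*lam) + m*u) := by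
    linarith only [hIsplit, hI2, hIlow, h2t']
  have hexp1 : Real.exp (m*t) ≤ 100/99 := by
    rw [hmt]
    have h1 := Real.add_one_le_exp (-(1/100):ℝ)
    have h2 : Real.exp (1/100:ℝ) * Real.exp (-(1/100):ℝ) = 1 := by
      rw [← Real.exp_add]; norm_num
    nlinarith [Real.exp_pos ((1:ℝ)/100)]
  have hexplow : (1/50:ℝ) ≤ Real.exp (2*(m*t)) - 1 := by
    have := Real.add_one_le_exp (2*(m*t))
    rw [hmt] at this ⊢
    norm_num at this ⊢
    linarith
  have hsq : ((1/50:ℝ))^2 ≤ (Real.exp (2*(m*t)) - 1)^2 := by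
    apply pow_le_pow_left₀ (by norm_num) hexplow
  have hS1low : (1/2500) * (2161/4200 * (1/m))
      ≤ (Real.exp (2*(m*t)) - 1)^2 * ∫ u in Set.Iic (-(2*t)), Real.exp (-u^2/(4*lam) + m*u) := by
    apply mul_le_mul (by norm_num at hsq ⊢; linarith) hI1low (by positivity) (sq_nonneg _)
  have hmt2 : m*t^2 = (1/10000)*(1/m) := by rw [ht_def]; field_simp; ring
  have hS2bound : m*Real.exp (m*t)*t^2 ≤ (100/99)*((1/10000)*(1/m)) := by
    rw [show m*Real.exp (m*t)*t^2 = Real.exp (m*t) * (m*t^2) from by ring, hmt2]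
    apply mul_le_mul_of_nonneg_right hexp1 (by positivity)
  rw [hsplitA, hsplit0, hsplitB, hsplitC, hS1eq]
  linarith only [hS1low, hS2a, hS2b, hS2bound, him]
end

section
/- Let $d\geq 2$, $\lambda>0$, $m>0$, let $\mu(p)=\sqrt{\|p\|^2+m^2}$ for $p\in\mathbb{R}^{d-1}$, and let $\rho:\mathbb{R}^{d-1}\to[0,\infty)$ be continuous with compact support. Define $G(T) = \int_{\mathbb{R}^{d-1}}\int_{\mathbb{R}} e^{-(T-u)^2/(4\lambda)}\, e^{T\mu(p)}\, e^{-2|u|\mu(p)}\, \rho(p)\, du\, dp$ and $H(T) = G(0)+G(2T)-2G(T)$. Then $H$ is twice differentiable at $0$, $H(0)=0$, $H'(0)=0$, and $H''(0) = \int_{\mathbb{R}^{d-1}}\int_{\mathbb{R}} e^{-u^2/(4\lambda)}\, e^{-2|u|\mu(p)}\, \Big(2\mu(p)^2 - \frac{1}{\lambda} + \frac{u^2}{2\lambda^2}\Big)\, \rho(p)\, du\, dp$. -/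
set_option maxHeartbeats 1000000

open MeasureTheory Real Filter

noncomputable def Kf {α : Type*} (lam : ℝ) (μ ρ : α → ℝ) (t : ℝ) (x : α × ℝ) : ℝ :=
  Real.exp (-(t - x.2) ^ 2 / (4 * lam)) * Real.exp (t * μ x.1)
    * Real.exp (-2 * |x.2| * μ x.1) * ρ x.1

noncomputable def K1f {α : Type*} (lam : ℝ) (μ ρ : α → ℝ) (t : ℝ) (x : α × ℝ) : ℝ :=
  (μ x.1 - (t - x.2) / (2 * lam)) * Kf lam μ ρ t x

noncomputable def K2f {α : Type*} (lam : ℝ) (μ ρ : α → ℝ) (t : ℝ) (x : α × ℝ) : ℝ :=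
  -(1 / (2 * lam)) * Kf lam μ ρ t x + (μ x.1 - (t - x.2) / (2 * lam)) * K1f lam μ ρ t x

noncomputable def Tf {α : Type*} (lam : ℝ) (μ ρ : α → ℝ) (x : α × ℝ) : ℝ :=
  Real.exp (-x.2 ^ 2 / (4 * lam)) * Real.exp (-2 * |x.2| * μ x.1)
    * (2 * μ x.1 ^ 2 - 1 / lam + x.2 ^ 2 / (2 * lam ^ 2)) * ρ x.1

noncomputable def Wf {α : Type*} (lam : ℝ) (μ ρ : α → ℝ) (x : α × ℝ) : ℝ :=
  2 * μ x.1 * x.2 / lam *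
    (Real.exp (-x.2 ^ 2 / (4 * lam)) * Real.exp (-2 * |x.2| * μ x.1) * ρ x.1)

lemma Kf_hasDerivAt {α : Type*} (lam : ℝ) (μ ρ : α → ℝ) (x : α × ℝ) (t : ℝ) :
    HasDerivAt (fun s => Kf lam μ ρ s x) (K1f lam μ ρ t x) t := by
  have h1 : HasDerivAt (fun s : ℝ => -(s - x.2) ^ 2 / (4 * lam))
      (-(2 * (t - x.2)) / (4 * lam)) t := by
    have := (((hasDerivAt_id t).sub_const x.2).pow 2).neg.div_const (4 * lam)
    exact this.congr_deriv (by norm_num)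
  have h3 : HasDerivAt (fun s : ℝ => Real.exp (s * μ x.1))
      (Real.exp (t * μ x.1) * μ x.1) t := (hasDerivAt_mul_const (μ x.1)).exp
  have h4 := ((h1.exp.mul h3).mul_const (Real.exp (-2 * |x.2| * μ x.1))).mul_const (ρ x.1)
  refine h4.congr_deriv ?_
  simp only [K1f, Kf]
  ring

lemma K1f_hasDerivAt {α : Type*} (lam : ℝ) (μ ρ : α → ℝ) (x : α × ℝ) (t : ℝ) :
    HasDerivAt (fun s => K1f lam μ ρ s x) (K2f lam μ ρ t x) t := by
  have hc : HasDerivAt (fun s : ℝ => μ x.1 - (s - x.2) / (2 * lam)) (-(1 / (2 * lam))) t := by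
    have := (((hasDerivAt_id t).sub_const x.2).div_const (2 * lam)).const_sub (μ x.1)
    simpa using this
  exact hc.mul (Kf_hasDerivAt lam μ ρ x t)

lemma Kf_cont {α : Type*} [TopologicalSpace α] (lam : ℝ) {μ ρ : α → ℝ}
    (hμ : Continuous μ) (hρ : Continuous ρ) (t : ℝ) : Continuous (Kf lam μ ρ t) := by
  unfold Kf; fun_prop

lemma K1f_cont {α : Type*} [TopologicalSpace α] (lam : ℝ) {μ ρ : α → ℝ}
    (hμ : Continuous μ) (hρ : Continuous ρ) (t : ℝ) : Continuous (K1f lam μ ρ t) := by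
  unfold K1f Kf; fun_prop

lemma K2f_cont {α : Type*} [TopologicalSpace α] (lam : ℝ) {μ ρ : α → ℝ}
    (hμ : Continuous μ) (hρ : Continuous ρ) (t : ℝ) : Continuous (K2f lam μ ρ t) := by
  unfold K2f K1f Kf; fun_prop

lemma Tf_cont {α : Type*} [TopologicalSpace α] (lam : ℝ) {μ ρ : α → ℝ}
    (hμ : Continuous μ) (hρ : Continuous ρ) : Continuous (Tf lam μ ρ) := by
  unfold Tf; fun_prop

/-- Taylor expansion at `T = 0` of the reflection-positivity defect function
`H(T) = G(0) + G(2T) - 2G(T)` arising from the covariance `D_λ` of the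
stochastic-quantization measure in space-time dimension `d ≥ 2`. -/
theorem stmt_11 (d : ℕ) (hd : 2 ≤ d) (lam m : ℝ) (hlam : 0 < lam) (hm : 0 < m)
    (μ : EuclideanSpace ℝ (Fin (d - 1)) → ℝ)
    (hμ : ∀ p, μ p = Real.sqrt (‖p‖ ^ 2 + m ^ 2))
    (ρ : EuclideanSpace ℝ (Fin (d - 1)) → ℝ)
    (hρcont : Continuous ρ) (hρsupp : HasCompactSupport ρ)
    (hρpos : ∀ p, 0 ≤ ρ p)
    (G : ℝ → ℝ)
    (hG : ∀ T : ℝ, G T = ∫ p : EuclideanSpace ℝ (Fin (d - 1)), ∫ u : ℝ,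
      Real.exp (-(T - u) ^ 2 / (4 * lam)) * Real.exp (T * μ p)
        * Real.exp (-2 * |u| * μ p) * ρ p)
    (H : ℝ → ℝ)
    (hH : ∀ T : ℝ, H T = G 0 + G (2 * T) - 2 * G T) :
    DifferentiableAt ℝ H 0 ∧ DifferentiableAt ℝ (deriv H) 0 ∧
      H 0 = 0 ∧ deriv H 0 = 0 ∧
      deriv (deriv H) 0 = ∫ p : EuclideanSpace ℝ (Fin (d - 1)), ∫ u : ℝ,
        Real.exp (-u ^ 2 / (4 * lam)) * Real.exp (-2 * |u| * μ p)
          * (2 * μ p ^ 2 - 1 / lam + u ^ 2 / (2 * lam ^ 2)) * ρ p := by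
  classical
  have hlne : lam ≠ 0 := ne_of_gt hlam
  have hμc : Continuous μ := by
    have hfun : μ = fun p => Real.sqrt (‖p‖ ^ 2 + m ^ 2) := funext hμ
    rw [hfun]; fun_prop
  have hμ0 : ∀ p, 0 ≤ μ p := fun p => (hμ p) ▸ Real.sqrt_nonneg _
  have hSc : IsCompact (tsupport ρ) := hρsupp
  have hSm : MeasurableSet (tsupport ρ) := (isClosed_tsupport ρ).measurableSet
  obtain ⟨M0, hM0⟩ := hSc.exists_bound_of_continuousOn hμc.continuousOn
  set M := max M0 0 with hMdef
  have hM : ∀ p ∈ tsupport ρ, μ p ≤ M := fun p hp => by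
    have h := hM0 p hp; rw [Real.norm_eq_abs] at h
    exact (le_abs_self _).trans (h.trans (le_max_left _ _))
  have hM0' : (0:ℝ) ≤ M := le_max_right _ _
  obtain ⟨R0, hR0'⟩ := hSc.exists_bound_of_continuousOn hρcont.continuousOn
  set R := max R0 0 with hRdef
  have hR0 : (0:ℝ) ≤ R := le_max_right _ _
  have hR : ∀ p, |ρ p| ≤ R := by
    intro p
    by_cases hp : p ∈ tsupport ρ
    · have h := hR0' p hp; rw [Real.norm_eq_abs] at h; exact h.trans (le_max_left _ _)
    · rw [image_eq_zero_of_notMem_tsupport hp, abs_zero]; exact hR0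
  set pp := (volume : Measure (EuclideanSpace ℝ (Fin (d - 1)))).prod (volume : Measure ℝ)
    with hppdef
  have hind : Integrable ((tsupport ρ).indicator fun _ => (1:ℝ)) volume := by
    rw [integrable_indicator_iff hSm]
    exact (integrableOn_const_iff).mpr (Or.inr hSc.measure_lt_top)
  have hmaster : ∀ c a : ℝ, Integrable
      (fun u : ℝ => c * (Real.exp (a * |u|) * Real.exp (-(u ^ 2 / (8 * lam))))) volume := by
    intro c a
    have hb : (0:ℝ) < 1 / (16 * lam) := by positivity
    have hint : Integrable
        (fun u : ℝ => (|c| * Real.exp (4 * lam * a ^ 2)) * Real.exp (-(1/(16*lam)) * u ^ 2))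
        volume := (integrable_exp_neg_mul_sq hb).const_mul _
    refine hint.mono' (Continuous.aestronglyMeasurable (by fun_prop)) (ae_of_all _ fun u => ?_)
    rw [Real.norm_eq_abs, abs_mul, abs_mul, Real.abs_exp, Real.abs_exp, mul_assoc]
    have h1 : |c| * (Real.exp (a * |u|) * Real.exp (-(u ^ 2 / (8 * lam))))
        ≤ |c| * (Real.exp (4 * lam * a ^ 2) * Real.exp (-(1/(16*lam)) * u ^ 2)) := by
      apply mul_le_mul_of_nonneg_left _ (abs_nonneg c)
      rw [← Real.exp_add, ← Real.exp_add, Real.exp_le_exp]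
      have key : a * |u| ≤ 4 * lam * a ^ 2 + u ^ 2 / (16 * lam) := by
        rw [← sub_nonneg]
        have h : 4 * lam * a ^ 2 + u ^ 2 / (16 * lam) - a * |u|
            = (|u| - 8 * lam * a) ^ 2 / (16 * lam) := by
          field_simp
          nlinarith [sq_abs u, sq_nonneg (|u| - 8 * lam * a)]
        rw [h]; positivity
      have e1 : u ^ 2 / (8 * lam) = u ^ 2 / (16 * lam) + u ^ 2 / (16 * lam) := by ring
      have e2 : (1/(16 * lam)) * u ^ 2 = u ^ 2 / (16 * lam) := by ring
      linarith
    linarith [h1]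
  have hbnd : ∀ c a : ℝ, Integrable (fun x : EuclideanSpace ℝ (Fin (d - 1)) × ℝ =>
      (tsupport ρ).indicator (fun _ => (1:ℝ)) x.1
        * (c * (Real.exp (a * |x.2|) * Real.exp (-(x.2 ^ 2 / (8 * lam)))))) pp :=
    fun c a => hind.mul_prod (hmaster c a)
  -- core pointwise estimates on the support
  have hKmem : ∀ A : ℝ, 0 ≤ A → ∀ t : ℝ, |t| ≤ A → ∀ p ∈ tsupport ρ, ∀ u : ℝ,
      |Kf lam μ ρ t (p, u)| ≤
        (Real.exp (A * M) * Real.exp (A ^ 2 / (2 * lam)) * R)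
          * Real.exp (-(u ^ 2 / (8 * lam))) := by
    intro A hA t ht p hp u
    obtain ⟨ht1, ht2⟩ := abs_le.mp ht
    have hμpM := hM p hp
    have hμp0 := hμ0 p
    have hRp := hR p
    simp only [Kf, abs_mul, Real.abs_exp]
    have h1 : Real.exp (-(t - u) ^ 2 / (4 * lam))
        ≤ Real.exp (A ^ 2 / (2 * lam)) * Real.exp (-(u ^ 2 / (8 * lam))) := by
      rw [← Real.exp_add, Real.exp_le_exp, div_le_iff₀ (by positivity : (0:ℝ) < 4 * lam)]
      have hexp : (A ^ 2 / (2 * lam) + -(u ^ 2 / (8 * lam))) * (4 * lam)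
          = 2 * A ^ 2 - u ^ 2 / 2 := by field_simp; ring
      rw [hexp]
      nlinarith [sq_nonneg (u - 2 * t), mul_nonneg (sub_nonneg.mpr ht2)
        (by linarith : (0:ℝ) ≤ A + t)]
    have h2 : Real.exp (t * μ p) ≤ Real.exp (A * M) := by
      rw [Real.exp_le_exp]
      nlinarith [mul_nonneg (sub_nonneg.mpr ht2) hμp0, mul_nonneg hA (sub_nonneg.mpr hμpM)]
    have h3 : Real.exp (-2 * |u| * μ p) ≤ 1 := by
      rw [show (1:ℝ) = Real.exp 0 by rw [Real.exp_zero], Real.exp_le_exp]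
      nlinarith [mul_nonneg (abs_nonneg u) hμp0]
    calc Real.exp (-(t - u) ^ 2 / (4 * lam)) * Real.exp (t * μ p)
          * Real.exp (-2 * |u| * μ p) * |ρ p|
        ≤ (Real.exp (A ^ 2 / (2 * lam)) * Real.exp (-(u ^ 2 / (8 * lam))))
            * Real.exp (A * M) * 1 * R := by gcongr
      _ = (Real.exp (A * M) * Real.exp (A ^ 2 / (2 * lam)) * R)
            * Real.exp (-(u ^ 2 / (8 * lam))) := by ring
  have hcoef : ∀ A : ℝ, 0 ≤ A → ∀ t : ℝ, |t| ≤ A → ∀ p ∈ tsupport ρ, ∀ u : ℝ,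
      |μ p - (t - u) / (2 * lam)|
        ≤ (M + A / (2 * lam) + 1 / (2 * lam)) * Real.exp |u| := by
    intro A hA t ht p hp u
    have h2l : (0:ℝ) < 2 * lam := by positivity
    have habs : |t - u| ≤ A + |u| := (abs_sub t u).trans (add_le_add ht le_rfl)
    have hq : |(t - u) / (2 * lam)| ≤ (A + |u|) / (2 * lam) := by
      rw [abs_div, abs_of_pos h2l]
      gcongr
    have htri : |μ p - (t - u) / (2 * lam)| ≤ |μ p| + |(t - u) / (2 * lam)| := abs_sub _ _
    have hμabs : |μ p| = μ p := abs_of_nonneg (hμ0 p)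
    have hexp := Real.add_one_le_exp |u|
    have hc : (0:ℝ) ≤ 1 / (2 * lam) := by positivity
    have e : (A + |u|) / (2 * lam) = A * (1 / (2 * lam)) + |u| * (1 / (2 * lam)) := by ring
    have t1 : 0 ≤ (M + A * (1 / (2 * lam))) * (Real.exp |u| - 1) :=
      mul_nonneg (add_nonneg hM0' (mul_nonneg hA hc))
        (by linarith [abs_nonneg u] : (0:ℝ) ≤ Real.exp |u| - 1)
    have t2 : 0 ≤ (1 / (2 * lam)) * (Real.exp |u| - |u|) :=
      mul_nonneg hc (by linarith : (0:ℝ) ≤ Real.exp |u| - |u|)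
    have hrhs : (M + A / (2 * lam) + 1 / (2 * lam)) * Real.exp |u|
        = (M + A * (1 / (2 * lam))) * Real.exp |u| + (1 / (2 * lam)) * Real.exp |u| := by ring
    nlinarith [hM p hp, htri, hq, e, hμabs]
  have hKcont := fun t => Kf_cont lam hμc hρcont t
  have hK1cont := fun t => K1f_cont lam hμc hρcont t
  have hK2cont := fun t => K2f_cont lam hμc hρcont t
  have key : ∀ t₀ : ℝ,
      Integrable (Kf lam μ ρ t₀) pp ∧ Integrable (K1f lam μ ρ t₀) pp ∧
      Integrable (K2f lam μ ρ t₀) pp ∧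
      HasDerivAt (fun t => ∫ x, Kf lam μ ρ t x ∂pp) (∫ x, K1f lam μ ρ t₀ x ∂pp) t₀ ∧
      HasDerivAt (fun t => ∫ x, K1f lam μ ρ t x ∂pp) (∫ x, K2f lam μ ρ t₀ x ∂pp) t₀ := by
    intro t₀
    set A := |t₀| + 1 with hAdef
    have hA : (0:ℝ) ≤ A := by positivity
    set P := M + A / (2 * lam) + 1 / (2 * lam) with hPdef
    set B0 := Real.exp (A * M) * Real.exp (A ^ 2 / (2 * lam)) * R with hB0def
    have hP0 : 0 ≤ P := by
      rw [hPdef]; have := hM0'; positivity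
    have hB0n : 0 ≤ B0 := mul_nonneg (by positivity) hR0
    have hballA : ∀ t ∈ Metric.ball t₀ 1, |t| ≤ A := by
      intro t ht
      rw [Metric.mem_ball, Real.dist_eq] at ht
      have h2 := abs_sub_abs_le_abs_sub t t₀
      rw [hAdef]; linarith
    have ht₀A : |t₀| ≤ A := by rw [hAdef]; linarith
    have estK : ∀ t : ℝ, |t| ≤ A → ∀ x : EuclideanSpace ℝ (Fin (d - 1)) × ℝ,
        ‖Kf lam μ ρ t x‖ ≤ (tsupport ρ).indicator (fun _ => (1:ℝ)) x.1
          * (B0 * (Real.exp (0 * |x.2|) * Real.exp (-(x.2 ^ 2 / (8 * lam))))) := by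
      intro t ht x
      obtain ⟨p, u⟩ := x
      rw [Real.norm_eq_abs]
      by_cases hp : p ∈ tsupport ρ
      · rw [Set.indicator_of_mem hp]
        simp only [zero_mul, Real.exp_zero, one_mul, mul_one]
        exact hKmem A hA t ht p hp u
      · rw [Set.indicator_of_notMem hp, zero_mul]
        have hρ0 : ρ p = 0 := image_eq_zero_of_notMem_tsupport hp
        simp [Kf, hρ0]
    have estK1 : ∀ t : ℝ, |t| ≤ A → ∀ x : EuclideanSpace ℝ (Fin (d - 1)) × ℝ,
        ‖K1f lam μ ρ t x‖ ≤ (tsupport ρ).indicator (fun _ => (1:ℝ)) x.1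
          * ((P * B0) * (Real.exp (1 * |x.2|) * Real.exp (-(x.2 ^ 2 / (8 * lam))))) := by
      intro t ht x
      obtain ⟨p, u⟩ := x
      rw [Real.norm_eq_abs]
      by_cases hp : p ∈ tsupport ρ
      · rw [Set.indicator_of_mem hp]
        simp only [K1f, abs_mul, one_mul]
        calc |μ p - (t - u) / (2 * lam)| * |Kf lam μ ρ t (p, u)|
            ≤ (P * Real.exp |u|) * (B0 * Real.exp (-(u ^ 2 / (8 * lam)))) :=
              mul_le_mul (hcoef A hA t ht p hp u) (hKmem A hA t ht p hp u)
                (abs_nonneg _) (mul_nonneg hP0 (Real.exp_pos _).le)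
          _ = (P * B0) * (Real.exp |u| * Real.exp (-(u ^ 2 / (8 * lam)))) := by ring
      · rw [Set.indicator_of_notMem hp, zero_mul]
        have hρ0 : ρ p = 0 := image_eq_zero_of_notMem_tsupport hp
        simp [K1f, Kf, hρ0]
    have estK2 : ∀ t : ℝ, |t| ≤ A → ∀ x : EuclideanSpace ℝ (Fin (d - 1)) × ℝ,
        ‖K2f lam μ ρ t x‖ ≤ (tsupport ρ).indicator (fun _ => (1:ℝ)) x.1
          * (((1/(2*lam)) * B0 + P ^ 2 * B0)
              * (Real.exp (2 * |x.2|) * Real.exp (-(x.2 ^ 2 / (8 * lam))))) := by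
      intro t ht x
      obtain ⟨p, u⟩ := x
      rw [Real.norm_eq_abs]
      by_cases hp : p ∈ tsupport ρ
      · rw [Set.indicator_of_mem hp]
        simp only [one_mul]
        have hk := hKmem A hA t ht p hp u
        have hcf := hcoef A hA t ht p hp u
        have hc2 : (0:ℝ) ≤ 1/(2*lam) := by positivity
        have hE : Real.exp |u| * Real.exp |u| = Real.exp (2*|u|) := by
          rw [← Real.exp_add]; ring_nf
        have hE1 : (1:ℝ) ≤ Real.exp (2*|u|) := Real.one_le_exp (by positivity)
        calc |K2f lam μ ρ t (p, u)|
            ≤ |(1 / (2 * lam)) * Kf lam μ ρ t (p, u)|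
              + |(μ p - (t - u) / (2 * lam)) * K1f lam μ ρ t (p, u)| := by
              simp only [K2f]
              refine (abs_add_le _ _).trans (le_of_eq ?_)
              rw [neg_mul, abs_neg]
          _ ≤ (1 / (2 * lam)) * (B0 * Real.exp (-(u ^ 2 / (8 * lam))))
              + (P * Real.exp |u|) * ((P * Real.exp |u|)
                  * (B0 * Real.exp (-(u ^ 2 / (8 * lam))))) := by
              apply add_le_add
              · rw [abs_mul, abs_of_pos (show (0:ℝ) < 1/(2*lam) by positivity)]
                exact mul_le_mul_of_nonneg_left hk hc2
              · rw [abs_mul]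
                refine mul_le_mul hcf ?_ (abs_nonneg _) (mul_nonneg hP0 (Real.exp_pos _).le)
                simp only [K1f, abs_mul]
                exact mul_le_mul hcf hk (abs_nonneg _) (mul_nonneg hP0 (Real.exp_pos _).le)
          _ ≤ ((1/(2*lam)) * B0 + P ^ 2 * B0)
                * (Real.exp (2 * |u|) * Real.exp (-(u ^ 2 / (8 * lam)))) := by
              have hre : P * Real.exp |u| * (P * Real.exp |u|
                    * (B0 * Real.exp (-(u ^ 2 / (8 * lam)))))
                  = P ^ 2 * B0 * (Real.exp (2 * |u|) * Real.exp (-(u ^ 2 / (8 * lam)))) := by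
                rw [← hE]; ring
              have h1 : B0 * Real.exp (-(u ^ 2 / (8 * lam)))
                  ≤ B0 * (Real.exp (2 * |u|) * Real.exp (-(u ^ 2 / (8 * lam)))) := by
                nlinarith [mul_nonneg hB0n (Real.exp_pos (-(u ^ 2 / (8 * lam)))).le,
                  sub_nonneg.mpr hE1,
                  mul_nonneg (mul_nonneg hB0n (Real.exp_pos (-(u ^ 2 / (8 * lam)))).le)
                    (sub_nonneg.mpr hE1)]
              have h1' : 1/(2*lam) * (B0 * Real.exp (-(u ^ 2 / (8 * lam))))
                  ≤ 1/(2*lam) * (B0 * (Real.exp (2 * |u|) * Real.exp (-(u ^ 2 / (8 * lam))))) :=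
                mul_le_mul_of_nonneg_left h1 hc2
              have hexpand : ((1/(2*lam)) * B0 + P ^ 2 * B0)
                    * (Real.exp (2 * |u|) * Real.exp (-(u ^ 2 / (8 * lam))))
                  = 1/(2*lam) * (B0 * (Real.exp (2 * |u|) * Real.exp (-(u ^ 2 / (8 * lam)))))
                    + P ^ 2 * B0 * (Real.exp (2 * |u|) * Real.exp (-(u ^ 2 / (8 * lam)))) := by
                ring
              linarith [hre, h1', hexpand]
      · rw [Set.indicator_of_notMem hp, zero_mul]
        have hρ0 : ρ p = 0 := image_eq_zero_of_notMem_tsupport hp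
        simp [K2f, K1f, Kf, hρ0]
    have hKint₀ : Integrable (Kf lam μ ρ t₀) pp :=
      (hbnd B0 0).mono' (hKcont t₀).aestronglyMeasurable
        (ae_of_all _ fun x => estK t₀ ht₀A x)
    have md1 := hasDerivAt_integral_of_dominated_loc_of_deriv_le
      (F := fun t x => Kf lam μ ρ t x) (F' := fun t x => K1f lam μ ρ t x)
      (μ := pp) (x₀ := t₀)
      (bound := fun x => (tsupport ρ).indicator (fun _ => (1:ℝ)) x.1
        * ((P * B0) * (Real.exp (1 * |x.2|) * Real.exp (-(x.2 ^ 2 / (8 * lam))))))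
      (Metric.ball_mem_nhds t₀ one_pos)
      (Eventually.of_forall fun t => (hKcont t).aestronglyMeasurable)
      hKint₀
      (hK1cont t₀).aestronglyMeasurable
      (ae_of_all _ fun x t ht => estK1 t (hballA t ht) x)
      (hbnd (P * B0) 1)
      (ae_of_all _ fun x t _ => Kf_hasDerivAt lam μ ρ x t)
    have md2 := hasDerivAt_integral_of_dominated_loc_of_deriv_le
      (F := fun t x => K1f lam μ ρ t x) (F' := fun t x => K2f lam μ ρ t x)
      (μ := pp) (x₀ := t₀)
      (bound := fun x => (tsupport ρ).indicator (fun _ => (1:ℝ)) x.1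
        * (((1/(2*lam)) * B0 + P ^ 2 * B0)
            * (Real.exp (2 * |x.2|) * Real.exp (-(x.2 ^ 2 / (8 * lam))))))
      (Metric.ball_mem_nhds t₀ one_pos)
      (Eventually.of_forall fun t => (hK1cont t).aestronglyMeasurable)
      md1.1
      (hK2cont t₀).aestronglyMeasurable
      (ae_of_all _ fun x t ht => estK2 t (hballA t ht) x)
      (hbnd ((1/(2*lam)) * B0 + P ^ 2 * B0) 2)
      (ae_of_all _ fun x t _ => K1f_hasDerivAt lam μ ρ x t)
    exact ⟨hKint₀, md1.1, md2.1, md1.2, md2.2⟩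
  have hKint : ∀ t, Integrable (Kf lam μ ρ t) pp := fun t => (key t).1
  set g1 : ℝ → ℝ := fun t => ∫ x, K1f lam μ ρ t x ∂pp with hg1def
  set g2 : ℝ → ℝ := fun t => ∫ x, K2f lam μ ρ t x ∂pp with hg2def
  have hGfun : G = fun t => ∫ x, Kf lam μ ρ t x ∂pp := by
    funext t
    rw [hG t]
    exact integral_integral (f := fun p u => Kf lam μ ρ t (p, u)) (hKint t)
  have hG' : ∀ t, HasDerivAt G (g1 t) t := by
    intro t
    rw [hGfun]
    exact (key t).2.2.2.1
  have hg1' : ∀ t, HasDerivAt g1 (g2 t) t := fun t => (key t).2.2.2.2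
  have hHfun : H = fun s => G 0 + G (2 * s) - 2 * G s := funext hH
  have hd2 : ∀ t : ℝ, HasDerivAt (fun s : ℝ => 2 * s) 2 t := by
    intro t; simpa using (hasDerivAt_id t).const_mul (2:ℝ)
  have hH1 : ∀ t, HasDerivAt H (0 + g1 (2 * t) * 2 - 2 * g1 t) t := by
    intro t
    rw [hHfun]
    exact ((hasDerivAt_const t (G 0)).add ((hG' (2 * t)).comp t (hd2 t))).sub
      ((hG' t).const_mul 2)
  have hderivH : deriv H = fun t => 0 + g1 (2 * t) * 2 - 2 * g1 t :=
    funext fun t => (hH1 t).deriv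
  have hH2 : HasDerivAt (deriv H) (0 + g2 (2 * 0) * 2 * 2 - 2 * g2 0) 0 := by
    rw [hderivH]
    exact ((hasDerivAt_const 0 (0:ℝ)).add
      (((hg1' (2 * 0)).comp 0 (hd2 0)).mul_const 2)).sub ((hg1' 0).const_mul 2)
  -- integrability of Tf
  have hTfint : Integrable (Tf lam μ ρ) pp := by
    refine (hbnd ((2 * M ^ 2 + 1/lam + 1/(2*lam^2)) * R) 2).mono'
      (Tf_cont lam hμc hρcont).aestronglyMeasurable (ae_of_all _ fun x => ?_)
    obtain ⟨p, u⟩ := x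
    rw [Real.norm_eq_abs]
    by_cases hp : p ∈ tsupport ρ
    · rw [Set.indicator_of_mem hp]
      simp only [one_mul]
      have h1l : (0:ℝ) ≤ 1/lam := by positivity
      have h2l : (0:ℝ) ≤ 1/(2*lam^2) := by positivity
      have hE1 : (1:ℝ) ≤ Real.exp (2*|u|) := Real.one_le_exp (by positivity)
      have hu2 : u ^ 2 ≤ Real.exp (2*|u|) := by
        have h1 : |u| ≤ Real.exp |u| := by linarith [Real.add_one_le_exp |u|]
        have h2 : Real.exp |u| * Real.exp |u| = Real.exp (2*|u|) := by
          rw [← Real.exp_add]; ring_nf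
        nlinarith [abs_nonneg u, sq_abs u, Real.exp_pos |u|]
      have he1 : Real.exp (-u ^ 2 / (4 * lam)) ≤ Real.exp (-(u ^ 2 / (8 * lam))) := by
        rw [Real.exp_le_exp]
        have : u ^ 2 / (8 * lam) ≤ u ^ 2 / (4 * lam) := by
          rw [div_le_div_iff₀ (by positivity) (by positivity)]
          nlinarith [mul_nonneg (sq_nonneg u) hlam.le]
        linarith [this, show -u ^ 2 / (4 * lam) = -(u ^ 2 / (4 * lam)) from by ring]
      have he3 : Real.exp (-2 * |u| * μ p) ≤ 1 := by
        rw [show (1:ℝ) = Real.exp 0 by rw [Real.exp_zero], Real.exp_le_exp]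
        nlinarith [mul_nonneg (abs_nonneg u) (hμ0 p)]
      have hpoly : |2 * μ p ^ 2 - 1 / lam + u ^ 2 / (2 * lam ^ 2)|
          ≤ (2 * M ^ 2 + 1/lam + 1/(2*lam^2)) * Real.exp (2*|u|) := by
        have t4 : μ p ^ 2 ≤ M ^ 2 := by nlinarith [hμ0 p, hM p hp]
        have hq : u ^ 2 / (2 * lam ^ 2) = (1/(2*lam^2)) * u ^ 2 := by ring
        have t1 : (1/(2*lam^2)) * u ^ 2 ≤ (1/(2*lam^2)) * Real.exp (2*|u|) :=
          mul_le_mul_of_nonneg_left hu2 h2l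
        have t2 : 2 * M ^ 2 ≤ 2 * M ^ 2 * Real.exp (2*|u|) :=
          le_mul_of_one_le_right (by positivity) hE1
        have t3 : (0:ℝ) ≤ (1/lam) * Real.exp (2*|u|) :=
          mul_nonneg h1l (Real.exp_pos _).le
        have t5 : 1/lam ≤ (1/lam) * Real.exp (2*|u|) := le_mul_of_one_le_right h1l hE1
        have hrhs : (2 * M ^ 2 + 1/lam + 1/(2*lam^2)) * Real.exp (2*|u|)
            = 2 * M ^ 2 * Real.exp (2*|u|) + (1/lam) * Real.exp (2*|u|)
              + (1/(2*lam^2)) * Real.exp (2*|u|) := by ring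
        rw [abs_le]
        constructor
        · nlinarith [sq_nonneg (μ p), mul_nonneg h2l (sq_nonneg u)]
        · nlinarith [mul_nonneg h2l (sq_nonneg u)]
      have hRp := hR p
      calc |Tf lam μ ρ (p, u)|
          = Real.exp (-u ^ 2 / (4 * lam)) * Real.exp (-2 * |u| * μ p)
            * |2 * μ p ^ 2 - 1 / lam + u ^ 2 / (2 * lam ^ 2)| * |ρ p| := by
            simp only [Tf, abs_mul, Real.abs_exp]
        _ ≤ Real.exp (-(u ^ 2 / (8 * lam))) * 1
            * ((2 * M ^ 2 + 1/lam + 1/(2*lam^2)) * Real.exp (2*|u|)) * R := by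
            gcongr
        _ = (2 * M ^ 2 + 1/lam + 1/(2*lam^2)) * R
            * (Real.exp (2 * |u|) * Real.exp (-(u ^ 2 / (8 * lam)))) := by ring
    · rw [Set.indicator_of_notMem hp, zero_mul]
      have hρ0 : ρ p = 0 := image_eq_zero_of_notMem_tsupport hp
      simp [Tf, hρ0]
  have hTfun : (∫ p : EuclideanSpace ℝ (Fin (d - 1)), ∫ u : ℝ,
      Real.exp (-u ^ 2 / (4 * lam)) * Real.exp (-2 * |u| * μ p)
        * (2 * μ p ^ 2 - 1 / lam + u ^ 2 / (2 * lam ^ 2)) * ρ p)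
      = ∫ x, Tf lam μ ρ x ∂pp :=
    integral_integral (f := fun p u => Tf lam μ ρ (p, u)) hTfint
  have hWTf : ∀ x : EuclideanSpace ℝ (Fin (d - 1)) × ℝ,
      Wf lam μ ρ x = 2 * K2f lam μ ρ 0 x - Tf lam μ ρ x := by
    intro x
    simp only [Wf, Tf, K2f, K1f, Kf, zero_sub, zero_mul, Real.exp_zero, mul_one, neg_neg,
      neg_sq]
    field_simp
    ring
  have hWint : Integrable (Wf lam μ ρ) pp := by
    have hfe : Wf lam μ ρ = fun x => 2 * K2f lam μ ρ 0 x - Tf lam μ ρ x := funext hWTf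
    rw [hfe]
    exact (((key 0).2.2.1).const_mul 2).sub hTfint
  have hWzero : (∫ x, Wf lam μ ρ x ∂pp) = 0 := by
    rw [← integral_integral (f := fun p u => Wf lam μ ρ (p, u)) hWint]
    have hzero : ∀ p : EuclideanSpace ℝ (Fin (d - 1)),
        (∫ u : ℝ, Wf lam μ ρ (p, u)) = 0 := by
      intro p
      have hodd : ∀ u : ℝ, Wf lam μ ρ (p, -u) = - Wf lam μ ρ (p, u) := by
        intro u
        simp only [Wf, abs_neg]
        rw [show ((-u : ℝ) ^ 2 : ℝ) = u ^ 2 from by ring]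
        ring
      have h := integral_neg_eq_self (fun u : ℝ => Wf lam μ ρ (p, u)) volume
      simp only [hodd] at h
      rw [integral_neg] at h
      linarith
    calc (∫ p : EuclideanSpace ℝ (Fin (d - 1)), ∫ u : ℝ, Wf lam μ ρ (p, u))
        = ∫ _p : EuclideanSpace ℝ (Fin (d - 1)), (0:ℝ) :=
          integral_congr_ae (ae_of_all _ hzero)
      _ = 0 := integral_zero _ _
  have hfinal : (∫ x, Tf lam μ ρ x ∂pp) = 2 * g2 0 := by
    have h1 : Tf lam μ ρ = fun x => 2 * K2f lam μ ρ 0 x - Wf lam μ ρ x := by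
      funext x
      have := hWTf x
      linarith
    rw [h1, integral_sub (((key 0).2.2.1).const_mul 2) hWint, hWzero, sub_zero,
      integral_const_mul]
  have h20 : (2:ℝ) * 0 = 0 := mul_zero 2
  refine ⟨(hH1 0).differentiableAt, hH2.differentiableAt, ?_, ?_, ?_⟩
  · rw [hH 0, h20]; ring
  · rw [(hH1 0).deriv, h20]; ring
  · rw [hH2.deriv, h20, hTfun, hfinal]; ring
end
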